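/- arXiv:1210.7942 — 11 statements merged into one kernel-verified Lean document; each statement's English description precedes it below -/
import Mathlib

section
/- Let G be a group, S a subset of G, and s a positive integer. Let H be the subgroup of G generated by all products g_s · g_{s-1} · ⋯ · g_1 with each g_i ∈ S. Then H is a normal subgroup of the subgroup of G generated by S. (In the block-cipher setting: the group G_τ^s generated by all compositions of s independently keyed round functions is a normal subgroup of the group G_τ generated by the round functions.) -/
/-- The subgroup generated by all `s`-fold products `g_s * g_{s-1} * ⋯ * g_1` of elements
of `S` is a normal subgroup of the subgroup generated by `S`. -/
theorem stmt_0 (G : Type*) [Group G] (S : Set G) (s : ℕ) (hs : 0 < s) :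
    Subgroup.closure {g : G | ∃ f : Fin s → G, (∀ i, f i ∈ S) ∧ g = (List.ofFn f).prod} ≤
        Subgroup.closure S ∧
      ∀ x ∈ Subgroup.closure S,
        ∀ h ∈ Subgroup.closure
            {g : G | ∃ f : Fin s → G, (∀ i, f i ∈ S) ∧ g = (List.ofFn f).prod},
          x * h * x⁻¹ ∈
            Subgroup.closure
              {g : G | ∃ f : Fin s → G, (∀ i, f i ∈ S) ∧ g = (List.ofFn f).prod} := by
  obtain ⟨n, rfl⟩ : ∃ n, s = n + 1 := ⟨s - 1, (Nat.succ_pred_eq_of_pos hs).symm⟩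
  set T : Set G :=
    {g : G | ∃ f : Fin (n + 1) → G, (∀ i, f i ∈ S) ∧ g = (List.ofFn f).prod} with hT
  -- Part 1: closure T ≤ closure S
  have h1 : Subgroup.closure T ≤ Subgroup.closure S := by
    rw [Subgroup.closure_le]
    rintro g ⟨f, hf, rfl⟩
    exact list_prod_mem (fun y hy => by
      obtain ⟨i, rfl⟩ := List.mem_ofFn.mp hy
      exact Subgroup.subset_closure (hf i))
  -- membership helper
  have memT : ∀ f : Fin (n + 1) → G, (∀ i, f i ∈ S) → (List.ofFn f).prod ∈ T :=
    fun f hf => ⟨f, hf, rfl⟩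
  -- key: conjugation by elements of S preserves closure T
  have key : ∀ x ∈ S, ∀ h ∈ Subgroup.closure T,
      x * h * x⁻¹ ∈ Subgroup.closure T ∧ x⁻¹ * h * x ∈ Subgroup.closure T := by
    intro x hx h hh
    induction hh using Subgroup.closure_induction with
    | mem t ht =>
      obtain ⟨f, hf, rfl⟩ := ht
      constructor
      · -- x * t * x⁻¹ = (x * f0 ⋯ f_{n-1}) * (f_n * x^n) * (x^(n+1))⁻¹
        have hA : (List.ofFn (Fin.cons x (f ∘ Fin.castSucc) : Fin (n + 1) → G)).prod
            ∈ Subgroup.closure T :=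
          Subgroup.subset_closure (memT _ (fun i => by
            refine Fin.cases ?_ ?_ i <;> simp [hx, hf]))
        have hB : (List.ofFn (Fin.cons (f (Fin.last n)) (fun _ => x) : Fin (n + 1) → G)).prod
            ∈ Subgroup.closure T :=
          Subgroup.subset_closure (memT _ (fun i => by
            refine Fin.cases ?_ ?_ i <;> simp [hx, hf]))
        have hC : (List.ofFn (fun _ : Fin (n + 1) => x)).prod ∈ Subgroup.closure T :=
          Subgroup.subset_closure (memT _ (fun _ => hx))
        have hdecomp : x * (List.ofFn f).prod * x⁻¹ =
            (List.ofFn (Fin.cons x (f ∘ Fin.castSucc) : Fin (n + 1) → G)).prod *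
            (List.ofFn (Fin.cons (f (Fin.last n)) (fun _ => x) : Fin (n + 1) → G)).prod *
            ((List.ofFn (fun _ : Fin (n + 1) => x)).prod)⁻¹ := by
          rw [List.ofFn_succ' f, List.ofFn_succ (f := Fin.cons x (f ∘ Fin.castSucc)),
            List.ofFn_succ (f := Fin.cons (f (Fin.last n)) (fun _ => x)),
            List.ofFn_const (n + 1) x]
          simp only [Fin.cons_zero, Fin.cons_succ, Function.comp_apply, List.prod_cons,
            List.concat_eq_append, List.prod_append, List.prod_singleton,
            List.prod_replicate, List.ofFn_const, Function.comp_def, List.prod_nil, mul_one, one_mul]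
          group
        rw [hdecomp]
        exact mul_mem (mul_mem hA hB) (inv_mem hC)
      · -- x⁻¹ * t * x = (x^(n+1))⁻¹ * (x^n * f0) * (f1 ⋯ f_n * x)
        have hA : (List.ofFn (fun _ : Fin (n + 1) => x)).prod ∈ Subgroup.closure T :=
          Subgroup.subset_closure (memT _ (fun _ => hx))
        have hB : (List.ofFn (Fin.snoc (fun _ : Fin n => x) (f 0) : Fin (n + 1) → G)).prod
            ∈ Subgroup.closure T :=
          Subgroup.subset_closure (memT _ (fun i => by
            refine Fin.lastCases ?_ ?_ i <;> simp [hx, hf])) 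
        have hC : (List.ofFn (Fin.snoc (f ∘ Fin.succ) x : Fin (n + 1) → G)).prod
            ∈ Subgroup.closure T :=
          Subgroup.subset_closure (memT _ (fun i => by
            refine Fin.lastCases ?_ ?_ i <;> simp [hx, hf]))
        have hdecomp : x⁻¹ * (List.ofFn f).prod * x =
            ((List.ofFn (fun _ : Fin (n + 1) => x)).prod)⁻¹ *
            (List.ofFn (Fin.snoc (fun _ : Fin n => x) (f 0) : Fin (n + 1) → G)).prod *
            (List.ofFn (Fin.snoc (f ∘ Fin.succ) x : Fin (n + 1) → G)).prod := by
          rw [List.ofFn_succ (f := f), List.ofFn_succ' (Fin.snoc (fun _ : Fin n => x) (f 0)),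
            List.ofFn_succ' (Fin.snoc (f ∘ Fin.succ) x), List.ofFn_const (n + 1) x]
          simp only [Fin.snoc_last, Fin.snoc_castSucc, Function.comp_apply, List.prod_cons,
            List.concat_eq_append, List.prod_append, List.prod_singleton,
            List.prod_replicate, List.ofFn_const, Function.comp_def, List.prod_nil, mul_one, one_mul]
          group
        rw [hdecomp]
        exact mul_mem (mul_mem (inv_mem hA) hB) hC
    | one => simp [Subgroup.one_mem]
    | mul a b ha hb iha ihb =>
      constructor
      · have : x * (a * b) * x⁻¹ = (x * a * x⁻¹) * (x * b * x⁻¹) := by group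
        rw [this]; exact mul_mem iha.1 ihb.1
      · have : x⁻¹ * (a * b) * x = (x⁻¹ * a * x) * (x⁻¹ * b * x) := by group
        rw [this]; exact mul_mem iha.2 ihb.2
    | inv a ha iha =>
      constructor
      · have : x * a⁻¹ * x⁻¹ = (x * a * x⁻¹)⁻¹ := by group
        rw [this]; exact inv_mem iha.1
      · have : x⁻¹ * a⁻¹ * x = (x⁻¹ * a * x)⁻¹ := by group
        rw [this]; exact inv_mem iha.2
  -- S ⊆ normalizer of closure T
  have hnorm : Subgroup.closure S ≤ Subgroup.normalizer (Subgroup.closure T : Set G) := by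
    rw [Subgroup.closure_le]
    intro x hx
    rw [SetLike.mem_coe, Subgroup.mem_normalizer_iff]
    intro h
    constructor
    · intro hh; exact (key x hx h hh).1
    · intro hh
      have := (key x hx _ hh).2
      have e : x⁻¹ * (x * h * x⁻¹) * x = h := by group
      rwa [e] at this
  refine ⟨h1, fun x hx h hh => ?_⟩
  exact (Subgroup.mem_normalizer_iff.mp (hnorm hx) h).mp hh
end

section
/- Let F be a finite field with |F| = p^n (p prime) and let H be an additive subgroup of F with H ≠ {0} which is inverse-closed, meaning that for every nonzero x ∈ H one has x^{-1} ∈ H. Then |H| = p^k for some positive integer k dividing n. -/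
section aux
variable {F : Type*} [Field F]

/-- Hua-type lemma: `x² h ∈ H` for `x, h ∈ H` when `H` is inverse-closed. -/
lemma aux_sq_mul {H : AddSubgroup F} (hinv : ∀ x ∈ H, x ≠ 0 → x⁻¹ ∈ H)
    {x h : F} (hx : x ∈ H) (hh : h ∈ H) : x * x * h ∈ H := by
  rcases eq_or_ne x 0 with rfl | hx0
  · simpa using H.zero_mem
  rcases eq_or_ne h 0 with rfl | hh0
  · simpa using H.zero_mem
  rcases eq_or_ne (x * h) 1 with hxh | hxh
  · rw [mul_assoc, hxh, mul_one]; exact hx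
  · have hc : h⁻¹ - x ≠ 0 := by
      intro hc
      apply hxh
      have h1 : h⁻¹ = x := sub_eq_zero.mp hc
      rw [← h1, inv_mul_cancel₀ hh0]
    have hs : x⁻¹ + (h⁻¹ - x)⁻¹ ≠ 0 := by
      intro hs
      have h1 : (h⁻¹ - x)⁻¹ = -x⁻¹ := by linear_combination hs
      have h2 : h⁻¹ - x = -x := by
        have h3 := congrArg (·⁻¹) h1
        simp only [inv_inv, inv_neg] at h3
        exact h3
      have : h⁻¹ = 0 := by linear_combination h2
      exact inv_ne_zero hh0 this
    have hmem : x - (x⁻¹ + (h⁻¹ - x)⁻¹)⁻¹ ∈ H := by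
      refine H.sub_mem hx (hinv _ ?_ hs)
      exact H.add_mem (hinv _ hx hx0) (hinv _ (H.sub_mem (hinv _ hh hh0) hx) hc)
    have key : x - (x⁻¹ + (h⁻¹ - x)⁻¹)⁻¹ = x * x * h := by
      have hone : 1 - x * h ≠ 0 := sub_ne_zero.mpr (Ne.symm hxh)
      have hone' : 1 - h * x ≠ 0 := by rwa [mul_comm] at hone
      field_simp
      ring
    rwa [key] at hmem

/-- The multiplier subring of an additive subgroup. -/
def mulRing (H : AddSubgroup F) : Subring F where
  carrier := {a | ∀ h ∈ H, a * h ∈ H}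
  zero_mem' := fun h _ => by simpa using H.zero_mem
  one_mem' := fun h hh => by simpa using hh
  add_mem' := fun {a b} ha hb h hh => by
    have := H.add_mem (ha h hh) (hb h hh); rwa [← add_mul] at this
  neg_mem' := fun {a} ha h hh => by
    have := H.neg_mem (ha h hh); rwa [← neg_mul] at this
  mul_mem' := fun {a b} ha hb h hh => by
    have := ha (b * h) (hb h hh); rwa [← mul_assoc] at this

/-- The multiplier subfield of an additive subgroup of a finite field. -/
def mulField (H : AddSubgroup F) [Fintype F] : Subfield F where
  __ := mulRing H
  inv_mem' := by
    intro a ha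
    rcases eq_or_ne a 0 with rfl | ha0
    · simpa using (mulRing H).zero_mem
    · have h2 : 2 ≤ Fintype.card F := Fintype.one_lt_card
      have h1 : a * a ^ (Fintype.card F - 2) = 1 := by
        rw [← pow_succ']
        have : Fintype.card F - 2 + 1 = Fintype.card F - 1 := by omega
        rw [this]
        exact FiniteField.pow_card_sub_one_eq_one a ha0
      have hainv : a⁻¹ = a ^ (Fintype.card F - 2) :=
        inv_eq_of_mul_eq_one_right h1
      rw [hainv]
      exact (mulRing H).pow_mem ha _

variable [Fintype F]

lemma sq_mem_mulField {H : AddSubgroup F} (hinv : ∀ x ∈ H, x ≠ 0 → x⁻¹ ∈ H)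
    {x : F} (hx : x ∈ H) : x * x ∈ mulField H :=
  fun _h hh => aux_sq_mul hinv hx hh

lemma ratio_mem_mulField {H : AddSubgroup F} (hinv : ∀ x ∈ H, x ≠ 0 → x⁻¹ ∈ H)
    {x y : F} (hx : x ∈ H) (hy : y ∈ H) (hx0 : x ≠ 0) : y * x⁻¹ ∈ mulField H := by
  set K := mulField H with hK
  have hxi : x⁻¹ ∈ H := hinv _ hx hx0
  by_cases h2 : (2 : F) = 0
  · -- characteristic 2 : use that squaring is bijective on K
    have hr2 : (y * x⁻¹) * (y * x⁻¹) ∈ K := by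
      have : (y * x⁻¹) * (y * x⁻¹) = (y * y) * (x⁻¹ * x⁻¹) := by ring
      rw [this]
      exact K.mul_mem (sq_mem_mulField hinv hy) (sq_mem_mulField hinv hxi)
    have hsub : ∀ a b : F, a * a = b * b → a = b := by
      intro a b hab
      have : (a - b) * (a - b) = 0 := by linear_combination hab + (b * b - a * b) * h2
      have := mul_self_eq_zero.mp this
      exact sub_eq_zero.mp this
    haveI : Finite K := Subtype.finite
    have hsurj : Function.Surjective (fun z : K => (⟨z.1 * z.1, K.mul_mem z.2 z.2⟩ : K)) := by
      apply Finite.surjective_of_injective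
      intro a b hab
      exact Subtype.ext (hsub a.1 b.1 (congrArg Subtype.val hab))
    obtain ⟨z, hz⟩ := hsurj ⟨y * x⁻¹ * (y * x⁻¹), hr2⟩
    have hz' : z.1 * z.1 = (y * x⁻¹) * (y * x⁻¹) := congrArg Subtype.val hz
    have : y * x⁻¹ = z.1 := (hsub _ _ hz'.symm)
    rw [this]; exact z.2
  · -- characteristic ≠ 2
    have h2K : (2 : F) ∈ K := by
      have := K.add_mem K.one_mem K.one_mem
      rwa [one_add_one_eq_two] at this
    have hxyK : 2 * (x * y) ∈ K := by
      have h1 : 2 * (x * y) = (x + y) * (x + y) - x * x - y * y := by ring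
      rw [h1]
      exact K.sub_mem (K.sub_mem (sq_mem_mulField hinv (H.add_mem hx hy))
        (sq_mem_mulField hinv hx)) (sq_mem_mulField hinv hy)
    have hxy : x * y ∈ K := by
      have := K.mul_mem (K.inv_mem h2K) hxyK
      rwa [inv_mul_cancel_left₀ h2] at this
    have : y * x⁻¹ = (x * y) * (x⁻¹ * x⁻¹) := by
      field_simp
    rw [this]
    exact K.mul_mem hxy (sq_mem_mulField hinv hxi)

end aux

/-- Any non-trivial inverse-closed additive subgroup `H` of a finite field of order `p^n`
has `p^k` elements for some positive `k` dividing `n`. -/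
theorem stmt_2 (p n : ℕ) (hp : p.Prime) (F : Type*) [Field F] [Fintype F]
    (hF : Fintype.card F = p ^ n) (H : AddSubgroup F) (hH : H ≠ ⊥)
    (hinv : ∀ x ∈ H, x ≠ 0 → x⁻¹ ∈ H) :
    ∃ k : ℕ, 0 < k ∧ k ∣ n ∧ Nat.card H = p ^ k := by
  obtain ⟨x₀, hx₀H, hx₀⟩ : ∃ x ∈ H, x ≠ 0 := by
    by_contra hcon
    push_neg at hcon
    exact hH (AddSubgroup.eq_bot_iff_forall H |>.mpr hcon)
  set K := mulField H with hKdef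
  -- bijection H ≃ K
  have hbij : Function.Bijective (fun y : H => (⟨y.1 * x₀⁻¹,
      ratio_mem_mulField hinv hx₀H y.2 hx₀⟩ : K)) := by
    constructor
    · intro a b hab
      have := congrArg Subtype.val hab
      exact Subtype.ext (mul_right_cancel₀ (inv_ne_zero hx₀) this)
    · intro k
      refine ⟨⟨k.1 * x₀, k.2 x₀ hx₀H⟩, ?_⟩
      apply Subtype.ext
      simp only
      field_simp
  have hcardHK : Nat.card H = Nat.card K := Nat.card_eq_of_bijective _ hbij
  haveI : Fintype K := Fintype.ofFinite K
  have hcardF : Fintype.card F = Fintype.card K ^ Module.finrank K F :=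
    Module.card_eq_pow_finrank
  have hK2 : 2 ≤ Fintype.card K := Fintype.one_lt_card
  have hd : Module.finrank K F ≠ 0 := by
    intro h0
    rw [h0, pow_zero] at hcardF
    have : 2 ≤ Fintype.card F := Fintype.one_lt_card
    omega
  have hdvd : Fintype.card K ∣ p ^ n := by
    rw [← hF, hcardF]
    exact dvd_pow_self _ hd
  obtain ⟨k, hkn, hkc⟩ := (Nat.dvd_prime_pow hp).mp hdvd
  refine ⟨k, ?_, ?_, ?_⟩
  · rcases Nat.eq_zero_or_pos k with rfl | hk
    · rw [pow_zero] at hkc; omega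
    · exact hk
  · refine ⟨Module.finrank K F, ?_⟩
    have : p ^ (k * Module.finrank K F) = p ^ n := by
      rw [pow_mul, ← hkc, ← hcardF, hF]
    exact (Nat.pow_right_injective hp.two_le this).symm
  · rw [hcardHK, Nat.card_eq_fintype_card, hkc]
end

section
/- Let F be a finite field and let f : F → F be the map with f(0) = 0 and f(x) = x^{-1} for x ≠ 0. Then f is an odd permutation of F if and only if |F| ≡ 0 (mod 4) or |F| ≡ 1 (mod 4). (Equivalently: for |F| = q odd, f is odd iff q ≡ 1 (mod 4); for q = 2^r, f is odd iff r ≥ 2.) -/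
/-- The inversion map `f` on a finite field `F` (with `f 0 = 0`, `f x = x⁻¹` otherwise)
is an odd permutation iff `|F| ≡ 0 (mod 4)` or `|F| ≡ 1 (mod 4)`. -/
theorem stmt_4 (F : Type*) [Field F] [Fintype F] [DecidableEq F]
    (f : Equiv.Perm F) (hf : ∀ x : F, f x = x⁻¹) :
    Equiv.Perm.sign f = -1 ↔ (Fintype.card F % 4 = 0 ∨ Fintype.card F % 4 = 1) := by
  classical
  set q := Fintype.card F with hq
  -- f is an involution
  have hff : f * f = 1 := by
    ext x
    simp [hf, inv_inv]
  have hord : orderOf f ∣ 2 := orderOf_dvd_of_pow_eq_one (by rw [pow_two]; exact hff)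
  -- all cycle lengths are 2
  have hct : f.cycleType = Multiset.replicate (Multiset.card f.cycleType) 2 := by
    apply Multiset.eq_replicate_card.2
    intro n hn
    have h2 : 2 ≤ n := Equiv.Perm.two_le_of_mem_cycleType hn
    have hd : n ∣ 2 := (Equiv.Perm.lcm_cycleType f ▸ Multiset.dvd_lcm hn).trans hord
    exact Nat.le_antisymm (Nat.le_of_dvd (by norm_num) hd) h2
  set m := Multiset.card f.cycleType with hm
  have hsum : f.cycleType.sum = 2 * m := by
    rw [hct]; simp [Multiset.sum_replicate, mul_comm]
  have hsign : Equiv.Perm.sign f = (-1 : ℤˣ) ^ m := by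
    rw [Equiv.Perm.sign_of_cycleType, hsum, ← hm, pow_add, pow_mul]
    norm_num
  have hsign' : Equiv.Perm.sign f = -1 ↔ m % 2 = 1 := by
    rw [hsign]
    constructor
    · intro h
      by_contra hmo
      have he : Even m := Nat.even_iff.2 (by omega)
      rw [he.neg_one_pow] at h
      exact absurd h (by decide)
    · intro h
      rw [(Nat.odd_iff.2 h).neg_one_pow]
  -- compute the support
  have hfix : f.supportᶜ = ({0, 1, -1} : Finset F) := by
    ext x
    simp only [Finset.mem_compl, Equiv.Perm.mem_support, not_not, hf,
      Finset.mem_insert, Finset.mem_singleton]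
    constructor
    · intro h
      rcases eq_or_ne x 0 with rfl | hx
      · exact Or.inl rfl
      · have hxx : x * x = 1 := by
          nth_rewrite 2 [← h]
          exact mul_inv_cancel₀ hx
        have h1 : (x - 1) * (x + 1) = 0 := by linear_combination hxx
        rcases mul_eq_zero.1 h1 with h2 | h2
        · exact Or.inr (Or.inl (sub_eq_zero.1 h2))
        · exact Or.inr (Or.inr (eq_neg_of_add_eq_zero_left h2))
    · rintro (rfl | rfl | rfl) <;> simp [inv_neg]
  have h2m : 2 * m = q - ({0, 1, -1} : Finset F).card := by
    have h1 : f.supportᶜ.card = q - f.support.card := by rw [Finset.card_compl, hq]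
    have h2 : f.support.card ≤ q := hq ▸ Finset.card_le_card (Finset.subset_univ _)
    rw [← hsum, Equiv.Perm.sum_cycleType, ← hfix, h1]
    omega
  have hcardle : ({0, 1, -1} : Finset F).card ≤ q := by
    rw [hq]; exact Finset.card_le_card (Finset.subset_univ _)
  by_cases hchar : (-1 : F) = 1
  · -- characteristic 2
    have hr2 : ringChar F = 2 := by
      apply CharP.ringChar_of_prime_eq_zero Nat.prime_two
      linear_combination -hchar
    haveI : CharP F 2 := hr2 ▸ ringChar.charP F
    obtain ⟨n, -, hcard⟩ := FiniteField.card F 2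
    have hc : ({0, 1, -1} : Finset F).card = 2 := by
      rw [hchar, Finset.pair_eq_singleton,
        Finset.card_insert_of_notMem (by simp), Finset.card_singleton]
    rw [hc] at h2m hcardle
    have h4 : 4 ∣ q ∨ q = 2 := by
      rcases Nat.lt_or_ge (n : ℕ) 2 with h1 | h2
      · right
        have := n.pos
        have : (n : ℕ) = 1 := by omega
        rw [hq, hcard, this, pow_one]
      · left
        rw [hq, hcard]
        exact (by norm_num : (4:ℕ) = 2 ^ 2) ▸ pow_dvd_pow 2 h2
    have hqpos : 0 < q := Fintype.card_pos
    rw [hsign']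
    omega
  · -- odd characteristic
    have h10 : (1 : F) ≠ 0 := one_ne_zero
    have hn10 : (-1 : F) ≠ 0 := by
      intro h; exact h10 (by linear_combination -h)
    have hc : ({0, 1, -1} : Finset F).card = 3 := by
      rw [Finset.card_insert_of_notMem (by simp [h10.symm, hn10.symm]),
        Finset.card_insert_of_notMem (by simp [Ne.symm hchar]),
        Finset.card_singleton]
    rw [hc] at h2m hcardle
    have hodd : q % 2 = 1 := by
      apply FiniteField.odd_card_of_char_ne_two
      intro h
      haveI : CharP F 2 := h ▸ ringChar.charP F
      have h20 : (2 : F) = 0 := by exact_mod_cast CharP.cast_eq_zero F 2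
      exact hchar (by linear_combination -h20)
    rw [hsign']
    omega
end

section
/- Let F be a finite field and let A be a nonzero element of F. The permutation of F given by x ↦ A·x is an odd permutation if and only if the multiplicative order ord(A) of A is even and (|F| − 1)/ord(A) is odd. In particular, for |F| even this permutation is always even, and for |F| odd it is odd if and only if (|F| − 1)/ord(A) is odd. -/
open Equiv

/-- For `A ≠ 0` in a finite field `F`, the permutation `x ↦ A·x` is odd iff `ord(A)` is even
and `(|F| - 1)/ord(A)` is odd.  In particular it is always even when `|F|` is even, and for
`|F|` odd it is odd iff `(|F| - 1)/ord(A)` is odd. -/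
theorem stmt_5 (F : Type*) [Field F] [Fintype F] [DecidableEq F]
    (A : F) (hA : A ≠ 0) (g : Equiv.Perm F) (hg : ∀ x : F, g x = A * x) :
    (Equiv.Perm.sign g = -1 ↔
      Even (orderOf A) ∧ Odd ((Fintype.card F - 1) / orderOf A)) ∧
    (Even (Fintype.card F) → Equiv.Perm.sign g = 1) ∧
    (Odd (Fintype.card F) →
      (Equiv.Perm.sign g = -1 ↔ Odd ((Fintype.card F - 1) / orderOf A))) := by
  classical
  set u : Fˣ := Units.mk0 A hA with hu
  have huA : (u : F) = A := rfl
  set d := orderOf A with hd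
  set q := Fintype.card F with hq
  have hq1 : 1 ≤ q := Fintype.card_pos
  have hdu : d = orderOf u := by rw [hd, ← huA, orderOf_units]
  have hdpos : 0 < d := hdu ▸ orderOf_pos u
  have hddvd : d ∣ q - 1 := by
    rw [hdu, ← Fintype.card_units (α := F)]
    exact orderOf_dvd_card
  suffices h : Perm.sign g = -1 ↔ Even d ∧ Odd ((q - 1) / d) by
    refine ⟨h, ?_, ?_⟩
    · intro hqe
      rcases Int.units_eq_one_or (Perm.sign g) with h1 | h1
      · exact h1
      exfalso
      obtain ⟨hde, _⟩ := h.mp h1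
      have hodd : Odd (q - 1) := Nat.Even.sub_odd hq1 hqe odd_one
      obtain ⟨e, he⟩ := hddvd
      rw [Nat.even_iff] at hde
      rw [Nat.odd_iff, he, Nat.mul_mod, hde] at hodd
      simp at hodd
    · intro hqo
      rw [h]
      constructor
      · tauto
      · intro hodd
        refine ⟨?_, hodd⟩
        obtain ⟨c, hc⟩ := hddvd
        have hcd : (q - 1) / d = c := by
          rw [hc]; exact Nat.mul_div_cancel_left c hdpos
        rw [hcd] at hodd
        have heven : Even (d * c) := hc ▸ Nat.Odd.sub_odd hqo odd_one
        rcases Nat.even_mul.mp heven with h' | h'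
        · exact h'
        · exact absurd h' (Nat.not_even_iff_odd.mpr hodd)
  -- main part
  by_cases hA1 : A = 1
  · have hg1 : g = 1 := Equiv.ext fun x => by simp [hg, hA1]
    rw [hg1, hd, hA1, orderOf_one]
    simp
  -- A ≠ 1
  obtain ⟨ζ, hζ⟩ := IsCyclic.exists_generator (α := Fˣ)
  obtain ⟨k, hk0⟩ := (mem_powers_iff_mem_zpowers).mpr (hζ u)
  have hk : ζ ^ k = u := hk0
  have hm : orderOf ζ = q - 1 := by
    rw [orderOf_eq_card_of_forall_mem_zpowers hζ, Nat.card_eq_fintype_card,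
      Fintype.card_units, ← hq]
  set m := q - 1 with hmdef
  have hq3 : 2 < q := Fintype.two_lt_card_iff.mpr
    ⟨0, 1, A, zero_ne_one, fun h => hA h.symm, fun h => hA1 h.symm⟩
  have hm2 : 2 ≤ m := by omega
  have hζ1 : (ζ : F) ≠ 1 := by
    intro hh
    have : ζ = 1 := Units.ext hh
    rw [this, orderOf_one] at hm
    omega
  set φ := MulAction.toPermHom Fˣ F with hφ
  have hgφ : g = φ u := Equiv.ext fun x => by
    simp [hg, hφ, Units.smul_def, huA]
  have hcyc : (φ ζ).IsCycle := by
    refine ⟨1, ?_, ?_⟩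
    · simpa [hφ, Units.smul_def] using hζ1
    · intro y hy
      have hy0 : y ≠ 0 := by
        intro hh
        apply hy
        simp [hφ, hh, Units.smul_def]
      obtain ⟨n, hn0⟩ := hζ (Units.mk0 y hy0)
      have hn : ζ ^ n = Units.mk0 y hy0 := hn0
      refine ⟨n, ?_⟩
      have hzp : (φ ζ) ^ n = φ (ζ ^ n) := (map_zpow φ ζ n).symm
      rw [hzp]
      have hval : ((ζ ^ n : Fˣ) : F) = y := by rw [hn]; rfl
      simpa [hφ, Units.smul_def] using hval
  have hsupp : (φ ζ).support = Finset.univ.erase 0 := by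
    ext x
    simp only [Perm.mem_support, Finset.mem_erase, Finset.mem_univ, and_true]
    constructor
    · intro hx hx0
      apply hx
      simp [hφ, hx0, Units.smul_def]
    · intro hx0 hfix
      have h1 : (ζ : F) * x = x := by simpa [hφ, Units.smul_def] using hfix
      have h2 : ((ζ : F) - 1) * x = 0 := by rw [sub_mul, one_mul, h1, sub_self]
      rcases mul_eq_zero.mp h2 with h' | h'
      · exact hζ1 (sub_eq_zero.mp h')
      · exact hx0 h'
  have hcard : (φ ζ).support.card = m := by
    rw [hsupp, Finset.card_erase_of_mem (Finset.mem_univ 0), Finset.card_univ,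
      hmdef, ← hq]
  have hsignζ : Perm.sign (φ ζ) = -(-1) ^ m := by rw [hcyc.sign, hcard]
  have hsigng : Perm.sign g = (-(-1) ^ m : ℤˣ) ^ k := by
    rw [hgφ, ← hk, map_pow, map_pow, hsignζ]
  have hdA : d = m / Nat.gcd m k := by
    rw [hdu, ← hk, orderOf_pow, hm]
  set G := Nat.gcd m k with hG
  have hGdvdm : G ∣ m := Nat.gcd_dvd_left m k
  have hGdvdk : G ∣ k := Nat.gcd_dvd_right m k
  have hGpos : 0 < G := Nat.gcd_pos_of_pos_left k (by omega)
  obtain ⟨c, hc⟩ := hGdvdm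
  have hdc : d = c := by rw [hdA, hc, Nat.mul_div_cancel_left c hGpos]
  have hcpos : 0 < c := hdc ▸ hdpos
  have hmd : m / d = G := by
    rw [hdc, hc, Nat.mul_div_cancel _ hcpos]
  rw [hsigng, hmd, hdc]
  rcases Nat.even_or_odd m with hme | hmo
  · have hbase : (-(-1) ^ m : ℤˣ) = -1 := by rw [hme.neg_one_pow]
    rw [hbase]
    have hlhs : ((-1 : ℤˣ) ^ k = -1) ↔ Odd k := by
      rcases Nat.even_or_odd k with hk2 | hk2
      · rw [hk2.neg_one_pow]
        simp [Nat.not_odd_iff_even.mpr hk2]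
      · rw [hk2.neg_one_pow]
        simp [hk2]
    rw [hlhs]
    constructor
    · intro hko
      have hGo : Odd G := hko.of_dvd_nat hGdvdk
      have hce : Even c := by
        rw [hc, Nat.even_mul] at hme
        rcases hme with h' | h'
        · exact absurd h' (Nat.not_even_iff_odd.mpr hGo)
        · exact h'
      exact ⟨hce, hGo⟩
    · rintro ⟨hce, hGo⟩
      by_contra hke
      rw [← Nat.not_even_iff_odd, not_not] at hke
      have : 2 ∣ G := Nat.dvd_gcd hme.two_dvd hke.two_dvd
      exact (Nat.not_even_iff_odd.mpr hGo) ((even_iff_two_dvd (α := ℕ)).mpr this)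
  · have hbase : (-(-1) ^ m : ℤˣ) = 1 := by rw [hmo.neg_one_pow]; decide
    rw [hbase, one_pow]
    have hcodd : Odd c := hmo.of_dvd_nat ⟨G, by rw [hc]; ring⟩
    simp [← Nat.not_odd_iff_even, hcodd]
end

section
/- Let p > 2 be a prime, r, m, n ≥ 1, F = GF(p^r), and V = M_{m,n}(F). Fix c : {0,…,m−1} → {0,…,n−1} and let π : V → V be the ShiftRows-like map. Then π is an odd permutation if and only if p ≡ 3 (mod 4), n is even, r is odd, and gcd(n, c(i)) is odd for an odd number of indices i ∈ {0,…,m−1}. -/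
open Equiv Finset

section Aux

lemma aux_sign_involution {α : Type*} [DecidableEq α] [Fintype α] (g : Equiv.Perm α)
    (hg : g * g = 1) : Equiv.Perm.sign g = (-1) ^ (g.support.card / 2) := by
  have hall : ∀ k ∈ g.cycleType, k = 2 := by
    intro k hk
    refine le_antisymm ?_ (Equiv.Perm.two_le_of_mem_cycleType hk)
    refine Nat.le_of_dvd two_pos ?_
    refine (Equiv.Perm.dvd_of_mem_cycleType hk).trans (orderOf_dvd_of_pow_eq_one ?_)
    rw [pow_two]; exact hg
  have hrep : g.cycleType = Multiset.replicate (Multiset.card g.cycleType) 2 :=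
    Multiset.eq_replicate_card.mpr hall
  have hsum : g.cycleType.sum = 2 * Multiset.card g.cycleType := by
    calc g.cycleType.sum = (Multiset.replicate (Multiset.card g.cycleType) 2).sum := by
          rw [← hrep]
      _ = 2 * Multiset.card g.cycleType := by
          rw [Multiset.sum_replicate, smul_eq_mul, mul_comm]
  have hsupp : g.support.card = 2 * Multiset.card g.cycleType := by
    rw [← Equiv.Perm.sum_cycleType, hsum]
  rw [Equiv.Perm.sign_of_cycleType, hsum, hsupp]
  have h2 : 2 * Multiset.card g.cycleType / 2 = Multiset.card g.cycleType := by omega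
  rw [h2, pow_add, pow_mul]
  norm_num

variable {X : Type*} [DecidableEq X] [Fintype X]
variable {F : Type*} [DecidableEq F] [Fintype F]

lemma aux_sign_precompose_swap {a b : X} (hab : a ≠ b) (hq : Odd (Fintype.card F)) :
    Equiv.Perm.sign (Equiv.arrowCongr (Equiv.swap a b) (Equiv.refl F) : Equiv.Perm (X → F))
      = (-1) ^ ((Fintype.card F - 1) / 2) := by
  obtain ⟨N', hN⟩ : ∃ N', Fintype.card X = N' + 1 :=
    ⟨Fintype.card X - 1, by have : 0 < Fintype.card X := Fintype.card_pos_iff.mpr ⟨a⟩; omega⟩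
  have hgapp : ∀ (f : X → F) (x : X),
      (Equiv.arrowCongr (Equiv.swap a b) (Equiv.refl F) : Equiv.Perm (X → F)) f x
        = f (Equiv.swap a b x) := by
    intro f x
    simp [Equiv.arrowCongr]
  have hg2 : (Equiv.arrowCongr (Equiv.swap a b) (Equiv.refl F) : Equiv.Perm (X → F))
      * (Equiv.arrowCongr (Equiv.swap a b) (Equiv.refl F)) = 1 := by
    apply Equiv.ext
    intro f
    funext x
    rw [Equiv.Perm.mul_apply, hgapp, hgapp, Equiv.swap_apply_self, Equiv.Perm.one_apply]
  have hset : Equiv.Perm.support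
        (Equiv.arrowCongr (Equiv.swap a b) (Equiv.refl F) : Equiv.Perm (X → F))
      = Finset.univ.filter (fun f : X → F => f a ≠ f b) := by
    ext f
    simp only [Equiv.Perm.mem_support, Finset.mem_filter, Finset.mem_univ, true_and]
    constructor
    · intro h hfab
      apply h
      funext x
      rw [hgapp, Equiv.swap_apply_def]
      split_ifs with h1 h2
      · subst h1; exact hfab.symm
      · subst h2; exact hfab
      · rfl
    · intro hfab h
      have := congrFun h a
      rw [hgapp, Equiv.swap_apply_left] at this
      exact hfab this.symm
  have hcard1 : (Finset.univ.filter (fun f : X → F => f a = f b)).card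
      = Fintype.card F ^ N' := by
    rw [← Fintype.card_subtype]
    have e : {f : X → F // f a = f b} ≃ ({x : X // x ≠ b} → F) :=
      { toFun := fun f x => f.1 x.1
        invFun := fun gg => ⟨fun x => if h : x = b then gg ⟨a, hab⟩ else gg ⟨x, h⟩, by
          simp [hab]⟩
        left_inv := by
          intro f
          apply Subtype.ext
          funext x
          by_cases h : x = b
          · subst h; simpa using f.2
          · simp [h]
        right_inv := by
          intro gg
          funext x
          simp [x.2] }
    rw [Fintype.card_congr e, Fintype.card_fun]
    congr 1
    have h1 : Fintype.card {x : X // ¬ x = b} = Fintype.card X - Fintype.card {x : X // x = b} :=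
      Fintype.card_subtype_compl _
    rw [Fintype.card_subtype_eq, hN] at h1
    exact h1.trans (by omega)
  have hcard2 : (Finset.univ.filter (fun f : X → F => f a ≠ f b)).card
      = Fintype.card F ^ (N' + 1) - Fintype.card F ^ N' := by
    have h := Finset.card_filter_add_card_filter_not
      (s := (Finset.univ : Finset (X → F))) (p := fun f => f a = f b)
    have hu : (Finset.univ : Finset (X → F)).card = Fintype.card F ^ (N' + 1) := by
      rw [Finset.card_univ, Fintype.card_fun, hN]
    rw [hu, hcard1] at h
    simp only [ne_eq]
    exact Nat.eq_sub_of_add_eq' h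
  have hsc : (Equiv.Perm.support
        (Equiv.arrowCongr (Equiv.swap a b) (Equiv.refl F) : Equiv.Perm (X → F))).card
      = Fintype.card F ^ N' * (Fintype.card F - 1) := by
    rw [hset, hcard2, pow_succ, Nat.mul_sub, mul_one]
  rw [aux_sign_involution _ hg2, hsc]
  have h2 : 2 ∣ Fintype.card F - 1 := by
    obtain ⟨t, ht⟩ := hq
    exact ⟨t, by rw [ht]; simp⟩
  rw [Nat.mul_div_assoc _ h2, pow_mul, Odd.neg_one_pow (hq.pow)]

lemma aux_sign_precompose (hq : Odd (Fintype.card F)) (σ : Equiv.Perm X) :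
    Equiv.Perm.sign (Equiv.arrowCongr σ (Equiv.refl F) : Equiv.Perm (X → F))
      = Equiv.Perm.sign σ ^ ((Fintype.card F - 1) / 2) := by
  refine Equiv.Perm.swap_induction_on σ ?_ ?_
  · have h1 : (Equiv.arrowCongr (1 : Equiv.Perm X) (Equiv.refl F) : Equiv.Perm (X → F)) = 1 := by
      apply Equiv.ext; intro f; rfl
    rw [h1]
    simp
  · intro f x y hxy ih
    have hmul : (Equiv.arrowCongr (Equiv.swap x y * f) (Equiv.refl F) : Equiv.Perm (X → F))
        = (Equiv.arrowCongr (Equiv.swap x y) (Equiv.refl F) : Equiv.Perm (X → F))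
          * (Equiv.arrowCongr f (Equiv.refl F) : Equiv.Perm (X → F)) := by
      apply Equiv.ext
      intro g
      funext z
      simp [Equiv.arrowCongr, Equiv.Perm.mul_def, Equiv.symm_trans_apply]
    rw [hmul, map_mul, aux_sign_precompose_swap hxy hq, ih, map_mul,
      Equiv.Perm.sign_swap hxy, mul_pow]

open Fin.NatCast in
lemma aux_addRight_pow (n' : ℕ) (j : ℕ) :
    (finRotate (n' + 1)) ^ j = Equiv.addRight ((j : ℕ) : Fin (n' + 1)) := by
  induction j with
  | zero =>
    apply Equiv.ext
    intro x
    simp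
  | succ k ih =>
    apply Equiv.ext
    intro x
    rw [pow_succ, Equiv.Perm.mul_apply, finRotate_succ_apply, ih]
    simp only [Equiv.coe_addRight]
    push_cast
    abel

open Fin.NatCast in
lemma aux_sign_addRight (n' : ℕ) (k : Fin (n' + 1)) :
    Equiv.Perm.sign (Equiv.addRight k) = (-1) ^ (n' * k.val) := by
  have h := aux_addRight_pow n' k.val
  rw [Fin.cast_val_eq_self] at h
  rw [← h, map_pow, sign_finRotate, ← pow_mul, Nat.add_sub_cancel]

lemma aux_odd_half_iff (p r : ℕ) (hp : p % 2 = 1) :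
    Odd ((p ^ r - 1) / 2) ↔ (p % 4 = 3 ∧ Odd r) := by
  have hq2 : p ^ r % 2 = 1 := by
    rw [Nat.pow_mod, hp, one_pow]
    decide
  have key : p ^ r % 4 = 3 ↔ (p % 4 = 3 ∧ r % 2 = 1) := by
    rw [Nat.pow_mod]
    have h4 : p % 4 = 1 ∨ p % 4 = 3 := by omega
    rcases h4 with h | h
    · rw [h, one_pow]
      omega
    · rw [h]
      have h3 : ∀ s : ℕ, 3 ^ s % 4 = if s % 2 = 0 then 1 else 3 := by
        intro s
        induction s with
        | zero => rfl
        | succ t ih =>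
          rw [pow_succ, Nat.mul_mod, ih]
          split_ifs <;> omega
      rw [h3 r]
      split_ifs <;> omega
  rw [Nat.odd_iff, Nat.odd_iff, ← key]
  omega

lemma aux_odd_gcd_iff (n k : ℕ) : Odd (Nat.gcd n k) ↔ (Odd n ∨ Odd k) := by
  have h : 2 ∣ Nat.gcd n k ↔ (2 ∣ n ∧ 2 ∣ k) :=
    ⟨fun h => ⟨h.trans (Nat.gcd_dvd_left n k), h.trans (Nat.gcd_dvd_right n k)⟩,
     fun h => Nat.dvd_gcd h.1 h.2⟩
  rw [Nat.odd_iff, Nat.odd_iff, Nat.odd_iff]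
  omega

end Aux

set_option maxHeartbeats 1000000 in
/-- Parity of the ShiftRows-like permutation `π` on `M_{m,n}(GF(p^r))` for `p > 2`:
`π` is odd iff `p ≡ 3 (mod 4)`, `n` is even, `r` is odd, and `gcd(n, c(i))` is odd for an
odd number of indices `i`. -/
theorem stmt_7 (p r m n : ℕ) (hp : p.Prime) (hp2 : 2 < p)
    (hr : 1 ≤ r) (hm : 1 ≤ m) (hn : 1 ≤ n)
    (F : Type*) [Field F] [Fintype F] [DecidableEq F] (hF : Fintype.card F = p ^ r)
    (c : Fin m → Fin n)
    (piP : Equiv.Perm (Matrix (Fin m) (Fin n) F))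
    (hpi : ∀ (a : Matrix (Fin m) (Fin n) F) (i : Fin m) (j : Fin n),
      piP a i j = a i (j - c i)) :
    Equiv.Perm.sign piP = -1 ↔
      p % 4 = 3 ∧ Even n ∧ Odd r ∧
        Odd (Finset.univ.filter fun i : Fin m => Odd (Nat.gcd n (c i).val)).card := by
  obtain ⟨n', rfl⟩ : ∃ n', n = n' + 1 := ⟨n - 1, by omega⟩
  have hpodd : p % 2 = 1 := Nat.odd_iff.mp (hp.odd_of_ne_two (by omega))
  have hq : Odd (Fintype.card F) := by
    rw [hF, Nat.odd_iff, Nat.pow_mod, hpodd, one_pow]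
    decide
  set σ0 : Equiv.Perm (Fin m × Fin (n' + 1)) :=
    Equiv.prodCongrRight (fun i => Equiv.addRight (c i)) with hσ0
  have hsymm : ∀ x : Fin m × Fin (n' + 1), σ0.symm x = (x.1, x.2 - c x.1) := by
    intro x
    rw [Equiv.symm_apply_eq]
    show x = σ0 (x.1, x.2 - c x.1)
    have h1 : σ0 (x.1, x.2 - c x.1) = (x.1, x.2 - c x.1 + c x.1) := rfl
    rw [h1, sub_add_cancel]
  have hmain : Equiv.Perm.sign piP
      = Equiv.Perm.sign
          (Equiv.arrowCongr σ0 (Equiv.refl F) : Equiv.Perm ((Fin m × Fin (n' + 1)) → F)) := by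
    apply Equiv.Perm.sign_eq_sign_of_equiv piP _
      { toFun := fun a x => a x.1 x.2
        invFun := fun f i j => f (i, j)
        left_inv := fun a => rfl
        right_inv := fun f => rfl }
    intro a
    funext x
    show piP a x.1 x.2 = (fun y : Fin m × Fin (n' + 1) => a y.1 y.2) (σ0.symm x)
    rw [hpi, hsymm x]
  have hsign1 := aux_sign_precompose (X := Fin m × Fin (n' + 1)) (F := F) hq σ0
  rw [hF] at hsign1
  have hsign0 : Equiv.Perm.sign σ0 = (-1 : ℤˣ) ^ (∑ i : Fin m, n' * (c i).val) := by
    rw [hσ0, Equiv.Perm.sign_prodCongrRight]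
    simp_rw [aux_sign_addRight]
    exact Finset.prod_pow_eq_pow_sum _ _ _
  have hfinal : Equiv.Perm.sign piP
      = (-1 : ℤˣ) ^ ((∑ i : Fin m, n' * (c i).val) * ((p ^ r - 1) / 2)) := by
    rw [hmain, hsign1, hsign0, ← pow_mul]
  rw [hfinal]
  have hneg : ∀ t : ℕ, ((-1 : ℤˣ) ^ t = -1 ↔ Odd t) := by
    intro t
    rcases Nat.even_or_odd t with h | h
    · rw [h.neg_one_pow]
      constructor
      · intro h1
        have h2 := congrArg Units.val h1
        simp at h2
      · intro h1; exact absurd h1 (Nat.not_odd_iff_even.mpr h)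
    · rw [h.neg_one_pow]
      simp [h]
  rw [hneg, Nat.odd_mul]
  have hE : Odd ((p ^ r - 1) / 2) ↔ (p % 4 = 3 ∧ Odd r) := aux_odd_half_iff p r hpodd
  have hS : Odd (∑ i : Fin m, n' * (c i).val) ↔
      (Odd n' ∧ Odd (Finset.univ.filter
        fun i : Fin m => Odd (Nat.gcd (n' + 1) (c i).val)).card) := by
    rw [Finset.odd_sum_iff_odd_card_odd]
    rcases Nat.even_or_odd n' with hev | hod
    · have hempty : (Finset.univ.filter fun i : Fin m => Odd (n' * (c i).val)) = ∅ := by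
        apply Finset.filter_false_of_mem
        intro i _
        rw [Nat.odd_mul]
        rintro ⟨h1, -⟩
        exact (Nat.not_odd_iff_even.mpr hev) h1
      rw [hempty]
      constructor
      · intro h
        rw [Finset.card_empty] at h
        exact absurd h (Nat.not_odd_iff_even.mpr Even.zero)
      · rintro ⟨h1, -⟩; exact absurd h1 (Nat.not_odd_iff_even.mpr hev)
    · have hfe : (Finset.univ.filter fun i : Fin m => Odd (n' * (c i).val))
          = (Finset.univ.filter fun i : Fin m => Odd (Nat.gcd (n' + 1) (c i).val)) := by
        apply Finset.filter_congr
        intro i _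
        rw [Nat.odd_mul, aux_odd_gcd_iff]
        have h1 : ¬ Odd (n' + 1) := by
          rw [Nat.odd_iff] at hod ⊢; omega
        constructor
        · rintro ⟨-, h⟩; exact Or.inr h
        · rintro (h | h)
          · exact absurd h h1
          · exact ⟨hod, h⟩
      rw [hfe]
      simp [hod]
  rw [hS, hE]
  have hB : Even (n' + 1) ↔ Odd n' := Nat.even_add_one.trans Nat.not_even_iff_odd
  rw [hB]
  tauto
end

section
/- Let r, m, n ≥ 1, F = GF(2^r), and V = M_{m,n}(F). Fix c : {0,…,m−1} → {0,…,n−1} and let π : V → V be the ShiftRows-like map. Then π is an odd permutation if and only if m = 1, r = 1, n = 2, and gcd(n, c(0)) = 1 (i.e. c(0) is odd); equivalently, if and only if m·r·gcd(n, c(0)) = 1 and n = 2. -/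
set_option linter.unusedSectionVars false

open Equiv Equiv.Perm

section AuxHelpers

variable {X : Type*} [DecidableEq X] [Fintype X] {F : Type*} [DecidableEq F] [Fintype F]

/-- The permutation of `X → F` induced by a permutation of `X`. -/
def myPsi (σ : Perm X) : Perm (X → F) := Equiv.arrowCongr σ (Equiv.refl F)

lemma myPsi_one : myPsi (F := F) (1 : Perm X) = 1 := by apply Equiv.ext; intro f; rfl

lemma myPsi_mul (σ τ : Perm X) :
    myPsi (F := F) (σ * τ) = myPsi (F := F) σ * myPsi (F := F) τ := by
  apply Equiv.ext; intro f; rfl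

/-- Split functions on `X` according to the values at two fixed distinct points. -/
def splitTwo (a b : X) (hab : a ≠ b) :
    (X → F) ≃ (({x : X // x ≠ a ∧ x ≠ b} → F) × (F × F)) where
  toFun f := (fun x => f x.1, (f a, f b))
  invFun p x := if h1 : x = a then p.2.1 else if h2 : x = b then p.2.2 else p.1 ⟨x, h1, h2⟩
  left_inv f := by
    funext x
    by_cases h1 : x = a
    · subst h1; simp
    · by_cases h2 : x = b
      · subst h2; simp [h1]
      · simp [h1, h2]
  right_inv p := by
    refine Prod.ext ?_ (Prod.ext ?_ ?_)
    · funext x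
      obtain ⟨x, h1, h2⟩ := x
      simp [h1, h2]
    · simp
    · simp [hab.symm]

lemma splitTwo_conj (a b : X) (hab : a ≠ b) :
    (splitTwo (F := F) a b hab).permCongr (myPsi (Equiv.swap a b)) =
      Equiv.prodCongrRight (fun _ : ({x : X // x ≠ a ∧ x ≠ b} → F) => Equiv.prodComm F F) := by
  apply Equiv.ext
  rintro ⟨g, u, v⟩
  simp only [Equiv.permCongr_apply, myPsi, Equiv.arrowCongr_apply, Equiv.symm_swap,
    splitTwo, Equiv.coe_fn_mk, Equiv.coe_fn_symm_mk, Equiv.prodCongrRight_apply,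
    Equiv.prodComm_apply, Prod.swap, Function.comp, Equiv.coe_refl, id_eq]
  refine Prod.ext ?_ (Prod.ext ?_ ?_)
  · funext x
    obtain ⟨x, h1, h2⟩ := x
    simp [Equiv.swap_apply_of_ne_of_ne h1 h2, h1, h2]
  · simp [Equiv.swap_apply_left, hab.symm]
  · simp [Equiv.swap_apply_right, hab]

lemma sign_of_sq_eq_one {α : Type*} [DecidableEq α] [Fintype α] (σ : Perm α) (h : σ ^ 2 = 1) :
    Equiv.Perm.sign σ = (-1 : ℤˣ) ^ (σ.support.card / 2) := by
  rcases eq_or_ne σ 1 with rfl | hσ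
  · simp
  · have ho : orderOf σ = 2 := orderOf_eq_prime h hσ
    obtain ⟨k, hk⟩ := Equiv.Perm.cycleType_prime_order (σ := σ) (by rw [ho]; exact Nat.prime_two)
    rw [ho] at hk
    have hsum : σ.cycleType.sum = σ.support.card := σ.sum_cycleType
    rw [hk, Multiset.sum_replicate, smul_eq_mul] at hsum
    rw [Equiv.Perm.sign_of_cycleType, hk, Multiset.sum_replicate, Multiset.card_replicate,
      smul_eq_mul]
    have h2 : σ.support.card / 2 = k + 1 := by omega
    rw [h2]
    have h3 : (k + 1) * 2 + (k + 1) = 2 * (k + 1) + (k + 1) := by ring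
    rw [h3, pow_add, pow_mul, Int.units_sq, one_pow, one_mul]

lemma sign_prodComm_self :
    Equiv.Perm.sign (Equiv.prodComm F F : Perm (F × F)) =
      (-1 : ℤˣ) ^ ((Fintype.card F * Fintype.card F - Fintype.card F) / 2) := by
  have h2 : (Equiv.prodComm F F : Perm (F × F)) ^ 2 = 1 := by
    apply Equiv.ext; intro p
    simp [sq, Equiv.Perm.mul_apply]
  rw [sign_of_sq_eq_one _ h2]
  congr 2
  have hs : Equiv.Perm.support (Equiv.prodComm F F : Perm (F × F)) = Finset.univ.offDiag := by
    ext ⟨x, y⟩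
    simp only [Equiv.Perm.mem_support, Equiv.prodComm_apply, Prod.swap_prod_mk,
      Finset.mem_offDiag, Finset.mem_univ, true_and, Prod.mk.injEq, not_and]
    constructor
    · intro h h'
      subst h'
      exact h rfl
    · intro h h1
      exact h (congrArg Prod.snd h1)
  rw [hs, Finset.offDiag_card, Finset.card_univ]

lemma sign_myPsi_swap (a b : X) (hab : a ≠ b) :
    Equiv.Perm.sign (myPsi (F := F) (Equiv.swap a b)) =
      ((-1 : ℤˣ) ^ ((Fintype.card F * Fintype.card F - Fintype.card F) / 2)) ^
        (Fintype.card F ^ (Fintype.card X - 2)) := by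
  rw [← Equiv.Perm.sign_permCongr (splitTwo (F := F) a b hab), splitTwo_conj a b hab,
    Equiv.Perm.sign_prodCongrRight, Finset.prod_const, Finset.card_univ, sign_prodComm_self]
  congr 1
  rw [Fintype.card_fun]
  congr 1
  rw [Fintype.card_subtype]
  have h : (Finset.univ.filter fun x : X => x ≠ a ∧ x ≠ b) = Finset.univ \ {a, b} := by
    ext x
    simp [not_or]
  rw [h, Finset.card_sdiff_of_subset (by simp), Finset.card_pair hab, Finset.card_univ]

lemma sign_myPsi_eq_one
    (h : ∀ a b : X, a ≠ b → Equiv.Perm.sign (myPsi (F := F) (Equiv.swap a b)) = 1)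
    (τ : Perm X) : Equiv.Perm.sign (myPsi (F := F) τ) = 1 := by
  refine Equiv.Perm.swap_induction_on τ ?_ ?_
  · rw [myPsi_one, map_one]
  · intro f x y hxy ih
    rw [myPsi_mul, map_mul, h x y hxy, ih, one_mul]

lemma units_pow_even (u : ℤˣ) {e : ℕ} (he : Even e) : u ^ e = 1 := by
  obtain ⟨k, rfl⟩ := he
  rw [pow_add, ← sq, ← pow_mul, mul_comm, pow_mul, Int.units_sq, one_pow]

end AuxHelpers

/-- Parity of the ShiftRows-like permutation `π` on `M_{m,n}(GF(2^r))`: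
`π` is odd iff `m = 1`, `r = 1`, `n = 2` and `gcd(n, c(0)) = 1`; equivalently, iff
`m·r·gcd(n, c(0)) = 1` and `n = 2`. -/
theorem stmt_8 (r m n : ℕ) (hr : 1 ≤ r) (hm : 0 < m) (hn : 1 ≤ n)
    (F : Type*) [Field F] [Fintype F] [DecidableEq F] (hF : Fintype.card F = 2 ^ r)
    (c : Fin m → Fin n)
    (piP : Equiv.Perm (Matrix (Fin m) (Fin n) F))
    (hpi : ∀ (a : Matrix (Fin m) (Fin n) F) (i : Fin m) (j : Fin n),
      piP a i j = a i (j - c i)) :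
    (Equiv.Perm.sign piP = -1 ↔
      m = 1 ∧ r = 1 ∧ n = 2 ∧ Nat.gcd n (c ⟨0, hm⟩).val = 1) ∧
    (Equiv.Perm.sign piP = -1 ↔
      m * r * Nat.gcd n (c ⟨0, hm⟩).val = 1 ∧ n = 2) := by
  -- the glue: `piP` is conjugate (via currying) to the induced permutation of an
  -- uncurried index permutation
  have hglue : ∀ τ₀ : Equiv.Perm (Fin m × Fin n),
      (∀ (a : Matrix (Fin m) (Fin n) F) (i : Fin m) (j : Fin n),
        piP a i j = a (τ₀ (i, j)).1 (τ₀ (i, j)).2) →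
      Equiv.Perm.sign piP = Equiv.Perm.sign (myPsi (F := F) τ₀⁻¹) := by
    intro τ₀ h
    have huc : piP = (Equiv.curry (Fin m) (Fin n) F :
        (Fin m × Fin n → F) ≃ Matrix (Fin m) (Fin n) F).permCongr (myPsi (F := F) τ₀⁻¹) := by
      apply Equiv.ext
      intro a
      funext i j
      exact h a i j
    rw [huc]
    exact Equiv.Perm.sign_permCongr _ _
  -- general evenness result
  have hone : (2 ≤ r ∨ 3 ≤ m * n) → Equiv.Perm.sign piP = 1 := by
    intro hcase
    haveI : NeZero n := ⟨by omega⟩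
    rw [hglue (Equiv.prodCongrRight fun i => Equiv.subRight (c i)) (fun a i j => hpi a i j)]
    apply sign_myPsi_eq_one
    intro a b hab
    rw [sign_myPsi_swap a b hab, hF]
    rcases hcase with h2r | hmn
    · have h4 : (2 : ℕ) ^ r = 4 * 2 ^ (r - 2) := by
        rw [show (4 : ℕ) = 2 ^ 2 by norm_num, ← pow_add]
        congr 1
        omega
      have heven : Even ((2 ^ r * 2 ^ r - 2 ^ r) / 2) := by
        rw [h4]
        have h1 : 1 ≤ (2 : ℕ) ^ (r - 2) := Nat.one_le_two_pow
        have h4s : 4 * 2 ^ (r - 2) * (4 * 2 ^ (r - 2)) = 16 * (2 ^ (r - 2) * 2 ^ (r - 2)) := by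
          ring
        rw [h4s]
        have hts : 2 ^ (r - 2) ≤ 2 ^ (r - 2) * 2 ^ (r - 2) :=
          Nat.le_mul_of_pos_left _ (by omega)
        generalize hsq : (2 : ℕ) ^ (r - 2) * 2 ^ (r - 2) = t at hts ⊢
        exact ⟨4 * t - 2 ^ (r - 2), by omega⟩
      rw [Even.neg_one_pow heven, one_pow]
    · apply units_pow_even
      have hcard : Fintype.card (Fin m × Fin n) = m * n := by simp
      rw [hcard]
      obtain ⟨t, ht⟩ : ∃ t, m * n - 2 = t + 1 := ⟨m * n - 3, by omega⟩
      rw [ht, pow_succ]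
      exact Even.mul_left ⟨2 ^ (r - 1), by rw [← two_mul, ← pow_succ']; congr 1; omega⟩ _
  have hneone : (1 : ℤˣ) ≠ -1 := by decide
  -- the central characterization
  have main : Equiv.Perm.sign piP = -1 ↔
      (m = 1 ∧ r = 1 ∧ n = 2 ∧ Nat.gcd n (c ⟨0, hm⟩).val = 1) := by
    by_cases hr2 : 2 ≤ r
    · rw [hone (Or.inl hr2)]
      simp only [iff_iff_implies_and_implies]
      constructor
      · intro h; exact absurd h hneone
      · rintro ⟨-, hr1, -⟩; omega
    · have hr1 : r = 1 := by omega
      subst hr1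
      by_cases hn1 : n = 1
      · subst hn1
        have hpid : piP = 1 := by
          apply Equiv.ext
          intro a
          funext i j
          rw [hpi]
          congr 1
          exact Subsingleton.elim _ _
        rw [hpid, map_one]
        constructor
        · intro h; exact absurd h hneone
        · rintro ⟨-, -, h2, -⟩; omega
      · by_cases hmn : 3 ≤ m * n
        · rw [hone (Or.inr hmn)]
          constructor
          · intro h; exact absurd h hneone
          · rintro ⟨h1, -, h3, -⟩
            rw [h1, h3] at hmn
            omega
        · -- here n = 2 and m = 1
          have hn2 : n = 2 := by
            have h1 : n ≤ m * n := Nat.le_mul_of_pos_left n hm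
            omega
          subst hn2
          have hm1 : m = 1 := by
            have h1 : m * 2 ≤ 2 := by omega
            omega
          subst hm1
          by_cases hc : c ⟨0, hm⟩ = 0
          · have hpid : piP = 1 := by
              apply Equiv.ext
              intro a
              funext i j
              rw [hpi]
              have hci : c i = 0 := by rw [Subsingleton.elim i ⟨0, hm⟩, hc]
              rw [hci, sub_zero]
              rfl
            rw [hpid, map_one]
            constructor
            · intro h; exact absurd h hneone
            · rintro ⟨-, -, -, h4⟩
              rw [hc] at h4
              simp at h4
          · have hc1 : c ⟨0, hm⟩ = 1 := by
              have h1 := (c ⟨0, hm⟩).isLt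
              have h2 : (c ⟨0, hm⟩).val ≠ 0 := fun h => hc (Fin.ext h)
              exact Fin.ext (by omega)
            have hτ : ∀ p : Fin 1 × Fin 2,
                Equiv.swap ((0 : Fin 1), (0 : Fin 2)) ((0 : Fin 1), (1 : Fin 2)) p =
                  (p.1, p.2 - 1) := by decide
            have hsign : Equiv.Perm.sign piP = -1 := by
              rw [hglue (Equiv.swap ((0 : Fin 1), (0 : Fin 2)) ((0 : Fin 1), (1 : Fin 2))) ?_]
              · rw [show (Equiv.swap ((0 : Fin 1), (0 : Fin 2)) ((0 : Fin 1), (1 : Fin 2)))⁻¹ =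
                    Equiv.swap ((0 : Fin 1), (0 : Fin 2)) ((0 : Fin 1), (1 : Fin 2)) from
                      Equiv.swap_inv _ _]
                rw [sign_myPsi_swap _ _
                  (show ((0 : Fin 1), (0 : Fin 2)) ≠ ((0 : Fin 1), (1 : Fin 2)) by decide), hF]
                simp only [Fintype.card_prod, Fintype.card_fin]
                norm_num
              · intro a i j
                rw [hpi, hτ (i, j)]
                have hci : c i = 1 := by rw [Subsingleton.elim i ⟨0, hm⟩, hc1]
                rw [hci]
            rw [hsign]
            constructor
            · intro _
              refine ⟨rfl, rfl, rfl, ?_⟩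
              rw [hc1]
              decide
            · intro _
              rfl
  refine ⟨main, main.trans ?_⟩
  constructor
  · rintro ⟨h1, h2, h3, h4⟩
    subst h1
    subst h2
    subst h3
    exact ⟨by simp only [one_mul]; exact h4, rfl⟩
  · rintro ⟨h1, h2⟩
    have hg : Nat.gcd n (c ⟨0, hm⟩).val = 1 := Nat.eq_one_of_mul_eq_one_left h1
    have hmr : m * r = 1 := by
      rw [hg, mul_one] at h1
      exact h1
    exact ⟨Nat.eq_one_of_mul_eq_one_right hmr, Nat.eq_one_of_mul_eq_one_left hmr, h2, hg⟩
end

section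
/- Let r, m ≥ 1 and n > 2, F = GF(2^r), and V = M_{m,n}(F). For every s > 1 and every choice of subkeys k_1, …, k_{s+1} ∈ V, the s-round Rijndael-like function T_s = σ[k_{s+1}] ∘ π ∘ λ ∘ (σ[k_s] ∘ ρ ∘ π ∘ λ) ∘ ⋯ ∘ (σ[k_2] ∘ ρ ∘ π ∘ λ) ∘ σ[k_1] is an even permutation of V. -/
/-- The `s`-round function
`T_s = σ[k_{s+1}] ∘ π ∘ λ ∘ (σ[k_s] ∘ ρ ∘ π ∘ λ) ∘ ⋯ ∘ (σ[k_2] ∘ ρ ∘ π ∘ λ) ∘ σ[k_1]`,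
as a permutation (permutation multiplication is function composition). -/
def sRound {V : Type*} [AddGroup V] (rho piP lam : Equiv.Perm V)
    (s : ℕ) (k : ℕ → V) : Equiv.Perm V :=
  Equiv.addRight (k (s + 1)) * piP * lam *
    (List.ofFn fun i : Fin (s - 1) =>
      Equiv.addRight (k (s - i.val)) * rho * piP * lam).prod *
    Equiv.addRight (k 1)

open Equiv Finset

section AuxLemmas

lemma four_dvd_of_dvd_two_pow {d N : ℕ} (hd : d ∣ 2 ^ N) (h3 : 3 ≤ d) : 4 ∣ d := by
  obtain ⟨t, ht, rfl⟩ := (Nat.dvd_prime_pow Nat.prime_two).mp hd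
  match t with
  | 0 => omega
  | 1 => omega
  | (k+2) => exact Dvd.dvd.trans (by norm_num) (pow_dvd_pow 2 (by omega : 2 ≤ k + 2))

lemma sign_one_of_invol {α : Type*} [Fintype α] [DecidableEq α] (f : Equiv.Perm α)
    (h2 : f * f = 1) (h4 : 4 ∣ f.support.card) : Equiv.Perm.sign f = 1 := by
  have hord : orderOf f ∣ 2 := orderOf_dvd_of_pow_eq_one (by rw [pow_two]; exact h2)
  have hct : ∀ x ∈ f.cycleType, x = 2 := by
    intro x hx
    have h1 := Equiv.Perm.two_le_of_mem_cycleType hx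
    have hdvd := (Equiv.Perm.dvd_of_mem_cycleType hx).trans hord
    have := Nat.le_of_dvd (by norm_num) hdvd
    omega
  have hrep := Multiset.eq_replicate_card.mpr hct
  have hsum : f.cycleType.sum = Multiset.card f.cycleType * 2 := by
    conv_lhs => rw [hrep]
    rw [Multiset.sum_replicate, smul_eq_mul]
  have h4' : 4 ∣ f.cycleType.sum := by rw [Equiv.Perm.sum_cycleType]; exact h4
  rw [Equiv.Perm.sign_of_cycleType]
  apply Even.neg_one_pow
  obtain ⟨u, hu⟩ : 2 ∣ Multiset.card f.cycleType := by omega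
  exact ⟨3 * u, by omega⟩

lemma sign_one_of_invol_fix {α : Type*} [Fintype α] [DecidableEq α] (f : Equiv.Perm α)
    (h2 : f * f = 1) (h4V : 4 ∣ Fintype.card α)
    (h4F : 4 ∣ (univ.filter fun x => f x = x).card) : Equiv.Perm.sign f = 1 := by
  apply sign_one_of_invol f h2
  have key : (univ.filter fun x => f x = x).card + (univ.filter fun x => ¬ f x = x).card
      = Fintype.card α := by
    rw [Finset.card_filter_add_card_filter_not, Finset.card_univ]
  have hsupp : f.support = univ.filter fun x => ¬ f x = x := by
    ext x; simp [Equiv.Perm.mem_support]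
  rw [hsupp]
  omega

lemma sign_invol_subgroup {V : Type*} [AddCommGroup V] [Fintype V] [DecidableEq V]
    (f : Equiv.Perm V) (h2 : f * f = 1) {N : ℕ} (hN : 2 ≤ N)
    (hcard : Fintype.card V = 2 ^ N)
    (S : AddSubgroup V) (hS : ∀ x, f x = x ↔ x ∈ S)
    (a b : V) (haS : a ∈ S) (hbS : b ∈ S) (ha : a ≠ 0) (hb : b ≠ 0) (hab : a ≠ b) :
    Equiv.Perm.sign f = 1 := by
  classical
  apply sign_one_of_invol_fix f h2
  · rw [hcard]
    exact Dvd.dvd.trans (by norm_num) (pow_dvd_pow 2 hN)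
  · have hfix : (univ.filter fun x => f x = x) = univ.filter (fun x => x ∈ S) := by
      apply Finset.filter_congr; intro x _; simpa using hS x
    have hcS : (univ.filter fun x => x ∈ S).card = Nat.card S := by
      rw [Nat.card_eq_fintype_card, Fintype.card_subtype]
    have hdvd : Nat.card S ∣ 2 ^ N := by
      rw [← hcard, ← Nat.card_eq_fintype_card]
      exact AddSubgroup.card_addSubgroup_dvd_card S
    have h3 : 3 ≤ Nat.card S := by
      rw [Nat.card_eq_fintype_card]
      have hc3 : ({⟨0, S.zero_mem⟩, ⟨a, haS⟩, ⟨b, hbS⟩} : Finset S).card = 3 := by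
        rw [Finset.card_insert_of_notMem (by simp [Subtype.ext_iff, Ne.symm ha, Ne.symm hb]),
          Finset.card_insert_of_notMem (by simp [Subtype.ext_iff, hab]),
          Finset.card_singleton]
      calc 3 = _ := hc3.symm
        _ ≤ Fintype.card S := Finset.card_le_univ _
    rw [hfix, hcS]
    exact four_dvd_of_dvd_two_pow hdvd h3

lemma sign_one_of_odd_pow {α : Type*} [Fintype α] [DecidableEq α] (f : Equiv.Perm α)
    {d : ℕ} (hd : Odd d) (h : f ^ d = 1) : Equiv.Perm.sign f = 1 := by
  have h1 : (Equiv.Perm.sign f) ^ d = 1 := by rw [← map_pow, h, map_one]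
  obtain ⟨t, rfl⟩ := hd
  rw [pow_add, pow_mul, Int.units_sq, one_pow, one_mul, pow_one] at h1
  exact h1

/-- The permutation of `I → F'` induced by a permutation of `I`. -/
def funPerm {I : Type*} (F' : Type*) (e : Equiv.Perm I) : Equiv.Perm (I → F') :=
  Equiv.arrowCongr e (Equiv.refl F')

lemma funPerm_apply {I F' : Type*} (e : Equiv.Perm I) (g : I → F') :
    funPerm F' e g = g ∘ e.symm := rfl

lemma funPerm_mul {I F' : Type*} (e₁ e₂ : Equiv.Perm I) :
    funPerm F' (e₁ * e₂) = funPerm F' e₁ * funPerm F' e₂ :=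
  Equiv.ext fun _ => rfl

lemma funPerm_one {I F' : Type*} : funPerm F' (1 : Equiv.Perm I) = 1 :=
  Equiv.ext fun _ => rfl

lemma sign_funPerm {I : Type*} [Fintype I] [DecidableEq I] {F : Type*} [Field F]
    [Fintype F] [DecidableEq F] {r : ℕ} (hr : 1 ≤ r) (hF : Fintype.card F = 2 ^ r)
    (hI : 3 ≤ Fintype.card I) (e : Equiv.Perm I) :
    Equiv.Perm.sign (funPerm F e) = 1 := by
  refine Equiv.Perm.swap_induction_on e ?_ ?_
  · rw [funPerm_one, map_one]
  · intro x y z hyz ih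
    rw [funPerm_mul, map_mul, ih, mul_one]
    obtain ⟨z0, hz0y, hz0z⟩ : ∃ z0, z0 ≠ y ∧ z0 ≠ z := by
      by_contra h
      push_neg at h
      have hsub : (univ : Finset I) ⊆ {y, z} := by
        intro w _
        rcases eq_or_ne w y with rfl | hw
        · simp
        · simp [h w hw]
      have hle := Finset.card_le_card hsub
      have h2 := Finset.card_insert_le y ({z} : Finset I)
      simp only [Finset.card_univ, Finset.card_singleton] at hle h2
      omega
    apply sign_invol_subgroup (N := r * Fintype.card I)
      (S := { carrier := {g : I → F | g y = g z}
              zero_mem' := rfl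
              add_mem' := fun hx hy => by simp_all [Set.mem_setOf_eq]
              neg_mem' := fun hx => by simp_all [Set.mem_setOf_eq] })
      (a := fun _ => (1 : F)) (b := fun w => if w = z0 then 1 else 0)
    case h2 => rw [← funPerm_mul, Equiv.swap_mul_self, funPerm_one]
    case hN =>
      calc 2 ≤ Fintype.card I := by omega
        _ ≤ r * Fintype.card I := Nat.le_mul_of_pos_left _ (by omega)
    case hcard => rw [Fintype.card_fun, hF, ← pow_mul]
    case hS =>
      intro g
      constructor
      · intro h
        have := congrFun h z
        simpa [funPerm_apply, Equiv.swap_apply_right] using this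
      · intro h
        funext w
        show g ((Equiv.swap y z).symm w) = g w
        rw [Equiv.symm_swap]
        rcases eq_or_ne w y with rfl | hwy
        · rw [Equiv.swap_apply_left]; exact h.symm
        rcases eq_or_ne w z with rfl | hwz
        · rw [Equiv.swap_apply_right]; exact h
        · rw [Equiv.swap_apply_of_ne_of_ne hwy hwz]
    case haS => rfl
    case hbS =>
      show (if y = z0 then (1:F) else 0) = (if z = z0 then (1:F) else 0)
      rw [if_neg (Ne.symm hz0y), if_neg (Ne.symm hz0z)]
    case ha =>
      intro h
      exact one_ne_zero (congrFun h y)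
    case hb =>
      intro h
      have := congrFun h z0
      simp at this
    case hab =>
      intro h
      have := congrFun h y
      simp [if_neg (Ne.symm hz0y)] at this

/-- Left multiplication by an invertible `m × m` matrix, as a permutation of `m × n` matrices. -/
def lmulHom (m n : ℕ) (F : Type*) [CommRing F] :
    (Matrix (Fin m) (Fin m) F)ˣ →* Equiv.Perm (Matrix (Fin m) (Fin n) F) where
  toFun u :=
    { toFun := fun a => (↑u : Matrix (Fin m) (Fin m) F) * a
      invFun := fun a => (↑u⁻¹ : Matrix (Fin m) (Fin m) F) * a
      left_inv := fun a => by
        show (↑u⁻¹ : Matrix (Fin m) (Fin m) F) * ((↑u : Matrix (Fin m) (Fin m) F) * a) = a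
        rw [← Matrix.mul_assoc, Units.inv_mul, Matrix.one_mul]
      right_inv := fun a => by
        show (↑u : Matrix (Fin m) (Fin m) F) * ((↑u⁻¹ : Matrix (Fin m) (Fin m) F) * a) = a
        rw [← Matrix.mul_assoc, Units.mul_inv, Matrix.one_mul] }
  map_one' := Equiv.ext fun a => by simp
  map_mul' u v := Equiv.ext fun a => by
    simp [Units.val_mul, Matrix.mul_assoc]

lemma lmulHom_apply {m n : ℕ} {F : Type*} [CommRing F]
    (u : (Matrix (Fin m) (Fin m) F)ˣ) (a : Matrix (Fin m) (Fin n) F) :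
    lmulHom m n F u a = (u : Matrix (Fin m) (Fin m) F) * a := rfl

def tUnit {m : ℕ} {F : Type*} [CommRing F] (t : Matrix.TransvectionStruct (Fin m) F) :
    (Matrix (Fin m) (Fin m) F)ˣ :=
  ⟨t.toMatrix, t.inv.toMatrix, t.mul_inv, t.inv_mul⟩

lemma tUnit_val {m : ℕ} {F : Type*} [CommRing F] (t : Matrix.TransvectionStruct (Fin m) F) :
    (tUnit t : Matrix (Fin m) (Fin m) F) = t.toMatrix := rfl

lemma prod_tUnit_val {m : ℕ} {F : Type*} [CommRing F]
    (L : List (Matrix.TransvectionStruct (Fin m) F)) :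
    ((L.map tUnit).prod : Matrix (Fin m) (Fin m) F)
      = (L.map Matrix.TransvectionStruct.toMatrix).prod := by
  rw [show (((L.map tUnit).prod : (Matrix (Fin m) (Fin m) F)ˣ) : Matrix (Fin m) (Fin m) F)
      = Units.coeHom _ (L.map tUnit).prod from rfl, map_list_prod, List.map_map]
  rfl

end AuxLemmas

/-- For `n > 2`, every `s`-round Rijndael-like function on `M_{m,n}(GF(2^r))` is an even
permutation. -/
theorem stmt_11 (r m n : ℕ) (hr : 1 ≤ r) (hm : 1 ≤ m) (hn : 2 < n)
    (F : Type*) [Field F] [Fintype F] [DecidableEq F] (hF : Fintype.card F = 2 ^ r)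
    (A B : F) (hA : A ≠ 0) (c : Fin m → Fin n)
    (C : Matrix (Fin m) (Fin m) F) (hC : IsUnit C)
    (lam piP rho : Equiv.Perm (Matrix (Fin m) (Fin n) F))
    (hlam : ∀ (a : Matrix (Fin m) (Fin n) F) (i : Fin m) (j : Fin n),
      lam a i j = A * (a i j)⁻¹ + B)
    (hpi : ∀ (a : Matrix (Fin m) (Fin n) F) (i : Fin m) (j : Fin n),
      piP a i j = a i (j - c i))
    (hrho : ∀ a : Matrix (Fin m) (Fin n) F, rho a = C * a)
    (s : ℕ) (hs : 1 < s) (k : ℕ → Matrix (Fin m) (Fin n) F) :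
    Equiv.Perm.sign (sRound rho piP lam s k) = 1 := by
  haveI : NeZero n := ⟨by omega⟩
  -- characteristic 2
  haveI hchar : CharP F 2 := by
    haveI := ringChar.charP F
    obtain ⟨kk, hp, hcardk⟩ := FiniteField.card F (ringChar F)
    have hpdvd : ringChar F ∣ 2 ^ r := by
      rw [← hF, hcardk]
      exact dvd_pow_self _ (by positivity)
    have h2 : ringChar F ∣ 2 := hp.dvd_of_dvd_pow hpdvd
    have hpeq : ringChar F = 2 := (Nat.prime_dvd_prime_iff_eq hp Nat.prime_two).mp h2
    rw [← hpeq]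
    exact ringChar.charP F
  set N := r * (m * n) with hNdef
  have hmn : 3 ≤ m * n := by
    calc 3 ≤ n := by omega
      _ ≤ m * n := Nat.le_mul_of_pos_left _ (by omega)
  have hN : 2 ≤ N := by
    calc 2 ≤ m * n := by omega
      _ ≤ r * (m * n) := Nat.le_mul_of_pos_left _ (by omega)
  have hVcard : Fintype.card (Matrix (Fin m) (Fin n) F) = 2 ^ N := by
    have h1 : Fintype.card (Matrix (Fin m) (Fin n) F) = Fintype.card (Fin m → Fin n → F) := rfl
    rw [h1, Fintype.card_fun, Fintype.card_fun, hF, Fintype.card_fin, Fintype.card_fin,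
      ← pow_mul, ← pow_mul, hNdef]
    congr 1
    ring
  have h4V : (4 : ℕ) ∣ Fintype.card (Matrix (Fin m) (Fin n) F) := by
    rw [hVcard]
    exact Dvd.dvd.trans (by norm_num) (pow_dvd_pow 2 hN)
  -- sign of translations
  have signAdd : ∀ v : Matrix (Fin m) (Fin n) F, Equiv.Perm.sign (Equiv.addRight v) = 1 := by
    intro v
    rcases eq_or_ne v 0 with rfl | hv
    · have h1 : Equiv.addRight (0 : Matrix (Fin m) (Fin n) F) = 1 := Equiv.ext fun a => add_zero a
      rw [h1, map_one]
    · have hvv : v + v = 0 := by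
        ext i j
        exact CharTwo.add_self_eq_zero _
      apply sign_one_of_invol
      · exact Equiv.ext fun a => by
          show a + v + v = a
          rw [add_assoc, hvv, add_zero]
      · have hsupp : (Equiv.addRight v).support = univ := by
          ext a
          simp only [Equiv.Perm.mem_support, Finset.mem_univ, iff_true]
          show ¬ a + v = a
          simp [hv]
        rw [hsupp, Finset.card_univ]
        exact h4V
  -- sign of the SubBytes-like map
  have signLam : Equiv.Perm.sign lam = 1 := by
    set w : F := A ^ (2 ^ (r - 1)) with hw
    have hw2 : w * w = A := by
      rw [hw, ← pow_add]
      have hexp : 2 ^ (r - 1) + 2 ^ (r - 1) = 2 ^ r := by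
        rw [← two_mul, ← pow_succ']
        congr 1
        omega
      rw [hexp, ← hF, FiniteField.pow_card]
    have hw0 : w ≠ 0 := pow_ne_zero _ hA
    have hinv : Function.Involutive
        (fun a : Matrix (Fin m) (Fin n) F => Matrix.of fun i j => A * (a i j)⁻¹) := by
      intro a
      ext i j
      show A * (A * (a i j)⁻¹)⁻¹ = a i j
      rcases eq_or_ne (a i j) 0 with h0 | h0
      · simp [h0]
      · rw [mul_inv_rev, inv_inv]
        field_simp
    set iota : Equiv.Perm (Matrix (Fin m) (Fin n) F) := hinv.toPerm _ with hiota
    have lam_eq : lam = Equiv.addRight (Matrix.of fun _ _ => B) * iota := by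
      apply Equiv.ext
      intro a
      show lam a = iota a + Matrix.of fun _ _ => B
      ext i j
      rw [hlam]
      rfl
    rw [lam_eq, map_mul, signAdd, one_mul]
    apply sign_invol_subgroup (N := N) iota (Equiv.ext fun a => hinv a) hN hVcard
      (S := { carrier := {a : Matrix (Fin m) (Fin n) F | ∀ i j, a i j = 0 ∨ a i j = w}
              zero_mem' := fun i j => Or.inl rfl
              add_mem' := by
                intro x y hx hy i j
                rcases hx i j with h | h <;> rcases hy i j with h' | h' <;>
                  simp [Matrix.add_apply, h, h', CharTwo.add_self_eq_zero]
              neg_mem' := by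
                intro x hx i j
                rw [Matrix.neg_apply, CharTwo.neg_eq]
                exact hx i j })
      (a := Matrix.of fun _ _ => w)
      (b := Matrix.of fun i j => if i = ⟨0, by omega⟩ ∧ j = ⟨0, by omega⟩ then w else 0)
    case hS =>
      intro a
      constructor
      · intro h i j
        have hij : A * (a i j)⁻¹ = a i j := by
          conv_rhs => rw [← h]
          rfl
        rcases eq_or_ne (a i j) 0 with h0 | h0
        · exact Or.inl h0
        · right
          set x := a i j with hx
          have hx2 : x * x = A := by
            calc x * x = A * x⁻¹ * x := by rw [hij]
              _ = A * (x⁻¹ * x) := by rw [mul_assoc]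
              _ = A := by rw [inv_mul_cancel₀ h0, mul_one]
          have hsq : (x + w) * (x + w) = 0 := by
            have hexp : (x + w) * (x + w) = x * x + w * w + (x * w + x * w) := by ring
            rw [hexp, hx2, hw2, CharTwo.add_self_eq_zero, CharTwo.add_self_eq_zero,
              add_zero]
          have := mul_self_eq_zero.mp hsq
          have hxw : x = -w := eq_neg_of_add_eq_zero_left this
          rw [hxw, CharTwo.neg_eq]
      · intro h
        ext i j
        show A * (a i j)⁻¹ = a i j
        rcases h i j with h0 | h0
        · rw [h0]; simp
        · rw [h0, ← hw2, mul_assoc, mul_inv_cancel₀ hw0, mul_one]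
    case haS =>
      intro i j
      exact Or.inr rfl
    case hbS =>
      intro i j
      show (if i = ⟨0, by omega⟩ ∧ j = ⟨0, by omega⟩ then w else 0) = 0 ∨
        (if i = ⟨0, by omega⟩ ∧ j = ⟨0, by omega⟩ then w else 0) = w
      split
      · exact Or.inr rfl
      · exact Or.inl rfl
    case ha =>
      intro h
      exact hw0 ((Matrix.ext_iff.mpr h) ⟨0, by omega⟩ ⟨0, by omega⟩)
    case hb =>
      intro h
      have := (Matrix.ext_iff.mpr h) ⟨0, by omega⟩ ⟨0, by omega⟩
      simp at this
      exact hw0 this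
    case hab =>
      intro h
      have := (Matrix.ext_iff.mpr h) ⟨0, by omega⟩ ⟨1, by omega⟩
      simp only [Matrix.of_apply] at this
      rw [if_neg (by simp [Fin.ext_iff])] at this
      exact hw0 this
  -- sign of the ShiftRows-like map
  have signPi : Equiv.Perm.sign piP = 1 := by
    have hcI : 3 ≤ Fintype.card (Fin m × Fin n) := by
      rw [Fintype.card_prod, Fintype.card_fin, Fintype.card_fin]
      omega
    set ec : Equiv.Perm (Fin m × Fin n) :=
      { toFun := fun p => (p.1, p.2 + c p.1)
        invFun := fun p => (p.1, p.2 - c p.1)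
        left_inv := fun p => by simp
        right_inv := fun p => by simp } with hec
    set eps : Matrix (Fin m) (Fin n) F ≃ (Fin m × Fin n → F) :=
      { toFun := fun a p => a p.1 p.2
        invFun := fun g => Matrix.of fun i j => g (i, j)
        left_inv := fun _ => rfl
        right_inv := fun _ => rfl } with heps
    have key : Equiv.Perm.sign piP = Equiv.Perm.sign (funPerm F ec) := by
      apply Equiv.Perm.sign_eq_sign_of_equiv piP (funPerm F ec) eps
      intro a
      funext p
      show piP a p.1 p.2 = (eps a) (ec.symm p)
      rw [hpi]
      rfl
    rw [key]
    exact sign_funPerm hr hF hcI ec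
  -- sign of the MixColumns-like map
  have signRho : Equiv.Perm.sign rho = 1 := by
    obtain ⟨L, L', D, hdec⟩ := Matrix.Pivot.exists_list_transvec_mul_diagonal_mul_list_transvec C
    set P : (Matrix (Fin m) (Fin m) F)ˣ := (L.map tUnit).prod with hP
    set Q : (Matrix (Fin m) (Fin m) F)ˣ := (L'.map tUnit).prod with hQ
    have hPval : (P : Matrix (Fin m) (Fin m) F)
        = (L.map Matrix.TransvectionStruct.toMatrix).prod := prod_tUnit_val L
    have hQval : (Q : Matrix (Fin m) (Fin m) F)
        = (L'.map Matrix.TransvectionStruct.toMatrix).prod := prod_tUnit_val L'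
    have hCdec : C = (P : Matrix (Fin m) (Fin m) F) * Matrix.diagonal D * (Q : Matrix (Fin m) (Fin m) F) := by rw [hPval, hQval]; exact hdec
    have hDunit : IsUnit (Matrix.diagonal D) := by
      have h0 : IsUnit ((P : Matrix (Fin m) (Fin m) F) * Matrix.diagonal D
          * (Q : Matrix (Fin m) (Fin m) F)) := hCdec ▸ hC
      exact (Units.isUnit_units_mul P _).mp ((Units.isUnit_mul_units _ Q).mp h0)
    have hD : ∀ i, D i ≠ 0 := by
      have hdet := (Matrix.isUnit_iff_isUnit_det _).mp hDunit
      rw [Matrix.det_diagonal, isUnit_iff_ne_zero] at hdet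
      intro i hi
      exact hdet (Finset.prod_eq_zero (Finset.mem_univ i) hi)
    set dU : (Matrix (Fin m) (Fin m) F)ˣ :=
      ⟨Matrix.diagonal D, Matrix.diagonal fun i => (D i)⁻¹,
        by
          rw [Matrix.diagonal_mul_diagonal,
            show (fun i => D i * (D i)⁻¹) = fun _ => (1 : F) from
              funext fun i => mul_inv_cancel₀ (hD i)]
          exact Matrix.diagonal_one,
        by
          rw [Matrix.diagonal_mul_diagonal,
            show (fun i => (D i)⁻¹ * D i) = fun _ => (1 : F) from
              funext fun i => inv_mul_cancel₀ (hD i)]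
          exact Matrix.diagonal_one⟩ with hdU
    have hrho_eq : rho = lmulHom m n F (P * dU * Q) := by
      apply Equiv.ext
      intro a
      rw [hrho, lmulHom_apply, hCdec]
      simp [Units.val_mul, hdU]
    -- sign of a single transvection action
    have signT : ∀ t : Matrix.TransvectionStruct (Fin m) F,
        Equiv.Perm.sign (lmulHom m n F (tUnit t)) = 1 := by
      rintro ⟨ti, tj, hij, tc⟩
      set t : Matrix.TransvectionStruct (Fin m) F := ⟨ti, tj, hij, tc⟩ with ht
      have hTT : t.toMatrix * t.toMatrix = 1 := by
        rw [ht, Matrix.TransvectionStruct.toMatrix_mk,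
          Matrix.transvection_mul_transvection_same _ _ hij, CharTwo.add_self_eq_zero,
          Matrix.transvection_zero]
      have hEb : ∀ b : Matrix (Fin m) (Fin n) F, (∀ j', b tj j' = 0) →
          Matrix.single ti tj tc * b = 0 := by
        intro b hb
        ext x z
        rw [Matrix.mul_apply, Matrix.zero_apply]
        apply Finset.sum_eq_zero
        intro w _
        rcases eq_or_ne w tj with rfl | hw
        · rw [hb z, mul_zero]
        · rw [Matrix.single_apply_of_ne (h := fun h => hw h.2.symm), zero_mul]
      have hfix : ∀ y : Fin n, t.toMatrix * Matrix.single ti y (1 : F)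
          = Matrix.single ti y (1 : F) := by
        intro y
        rw [ht, Matrix.TransvectionStruct.toMatrix_mk, Matrix.transvection, Matrix.add_mul,
          Matrix.one_mul, hEb _ (fun j' =>
            Matrix.single_apply_of_ne (c := (1 : F)) (h := fun h => hij h.1)), add_zero]
      apply sign_invol_subgroup (N := N) _ ?inv hN hVcard
        (S := { carrier := {a : Matrix (Fin m) (Fin n) F | t.toMatrix * a = a}
                zero_mem' := Matrix.mul_zero _
                add_mem' := by
                  intro x y hx hy
                  show t.toMatrix * (x + y) = x + y
                  rw [Matrix.mul_add, hx, hy]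
                neg_mem' := by
                  intro x hx
                  show t.toMatrix * (-x) = -x
                  rw [Matrix.mul_neg, hx] })
        (a := Matrix.single ti ⟨0, by omega⟩ (1 : F))
        (b := Matrix.single ti ⟨1, by omega⟩ (1 : F))
      case hS =>
        intro x
        exact Iff.rfl
      case haS => exact hfix _
      case hbS => exact hfix _
      case ha =>
        intro h
        have := (Matrix.ext_iff.mpr h) ti ⟨0, by omega⟩
        rw [Matrix.single_apply_same] at this
        exact one_ne_zero this
      case hb =>
        intro h
        have := (Matrix.ext_iff.mpr h) ti ⟨1, by omega⟩
        rw [Matrix.single_apply_same] at this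
        exact one_ne_zero this
      case hab =>
        intro h
        have := (Matrix.ext_iff.mpr h) ti ⟨0, by omega⟩
        rw [Matrix.single_apply_same,
          Matrix.single_apply_of_ne (h := by simp [Fin.ext_iff])] at this
        exact one_ne_zero this
      case inv =>
        rw [← map_mul, show tUnit t * tUnit t = 1 from Units.ext (by
            simp only [Units.val_mul, tUnit_val, Units.val_one]
            exact hTT), map_one]
    -- sign of products of transvection actions
    have signList : ∀ L0 : List (Matrix.TransvectionStruct (Fin m) F),
        Equiv.Perm.sign (lmulHom m n F (L0.map tUnit).prod) = 1 := by
      intro L0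
      rw [show Equiv.Perm.sign (lmulHom m n F (L0.map tUnit).prod)
          = (Equiv.Perm.sign.comp (lmulHom m n F)) (L0.map tUnit).prod from rfl,
        map_list_prod, List.map_map]
      apply List.prod_eq_one
      intro x hx
      obtain ⟨t, _, rfl⟩ := List.mem_map.mp hx
      exact signT t
    -- sign of the diagonal action
    have signD : Equiv.Perm.sign (lmulHom m n F dU) = 1 := by
      have hodd : Odd (2 ^ r - 1) := by
        have h2 : 2 ≤ 2 ^ r := by
          calc 2 = 2 ^ 1 := (pow_one 2).symm
            _ ≤ 2 ^ r := pow_le_pow_right₀ (by omega) hr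
        have heven : Even (2 ^ r) := by
          refine ⟨2 ^ (r - 1), ?_⟩
          rw [← two_mul, ← pow_succ']
          congr 1
          omega
        exact Nat.Even.sub_odd (by omega) heven odd_one
      apply sign_one_of_odd_pow _ hodd
      rw [← map_pow]
      have hdpow : dU ^ (2 ^ r - 1) = 1 := by
        apply Units.ext
        rw [Units.val_pow_eq_pow_val]
        show (Matrix.diagonal D) ^ (2 ^ r - 1) = 1
        rw [Matrix.diagonal_pow]
        have : (D ^ (2 ^ r - 1)) = fun _ => (1 : F) := by
          funext i
          show D i ^ (2 ^ r - 1) = 1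
          rw [← hF]
          exact FiniteField.pow_card_sub_one_eq_one (D i) (hD i)
        rw [this]
        exact Matrix.diagonal_one
      rw [hdpow, map_one]
    rw [hrho_eq, map_mul, map_mul, map_mul, map_mul, signList L, signList L', signD]
    norm_num
  -- assemble
  have hprod : Equiv.Perm.sign
      (List.ofFn fun i : Fin (s - 1) =>
        Equiv.addRight (k (s - i.val)) * rho * piP * lam).prod = 1 := by
    rw [map_list_prod]
    apply List.prod_eq_one
    intro x hx
    obtain ⟨g, hg, rfl⟩ := List.mem_map.mp hx
    obtain ⟨i, rfl⟩ := List.mem_ofFn.mp hg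
    rw [map_mul, map_mul, map_mul, signAdd, signRho, signPi, signLam]
    norm_num
  rw [sRound, map_mul, map_mul, map_mul, map_mul, signAdd, signAdd, signPi, signLam, hprod]
  norm_num
end

section
/- Let p > 2 be a prime, r, m, n ≥ 1, F = GF(p^r), and V = M_{m,n}(F). Suppose either (i) s is even and ρ is an odd permutation, or (ii) s is odd and at least one of π, λ is an odd permutation. Then the set 𝒯_s = { T_s[k_1,…,k_{s+1}] : k_1, …, k_{s+1} ∈ V } of all s-round generalized Rijndael-like functions is not closed under functional composition; in particular there exist f, g ∈ 𝒯_s with f ∘ g ∉ 𝒯_s, so 𝒯_s is not a group. -/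
open Equiv

-- helpers on ℤˣ
lemma upow_even (u : ℤˣ) {k : ℕ} (hk : Even k) : u ^ k = 1 := by
  obtain ⟨t, rfl⟩ := hk
  rw [← two_mul, pow_mul, Int.units_sq, one_pow]

lemma upow_odd (u : ℤˣ) {k : ℕ} (hk : Odd k) : u ^ k = u := by
  obtain ⟨t, rfl⟩ := hk
  rw [pow_add, pow_mul, Int.units_sq, one_pow, pow_one, one_mul]

lemma addRight_pow {V : Type*} [AddCommGroup V] (k : V) (t : ℕ) :
    Equiv.addRight k ^ t = Equiv.addRight (t • k) := by
  induction t with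
  | zero => ext x; simp
  | succ t ih =>
    rw [pow_succ, ih]
    ext x
    simp [succ_nsmul, add_assoc, add_comm]

lemma sign_addRight {V : Type*} [AddCommGroup V] [Fintype V] [DecidableEq V]
    (hodd : Odd (Fintype.card V)) (k : V) : Equiv.Perm.sign (Equiv.addRight k) = 1 := by
  have h1 : Equiv.addRight k ^ Fintype.card V = 1 := by
    rw [addRight_pow, card_nsmul_eq_zero]
    ext x; simp
  have h2 : Equiv.Perm.sign (Equiv.addRight k) ^ Fintype.card V = 1 := by
    rw [← map_pow, h1, map_one]
  rw [upow_odd _ hodd] at h2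
  exact h2

lemma sign_sRound {V : Type*} [AddCommGroup V] [Fintype V] [DecidableEq V]
    (hodd : Odd (Fintype.card V)) (rho piP lam : Equiv.Perm V) (s : ℕ) (k : ℕ → V) :
    Equiv.Perm.sign (sRound rho piP lam s k) =
      Equiv.Perm.sign piP * Equiv.Perm.sign lam *
        (Equiv.Perm.sign rho * Equiv.Perm.sign piP * Equiv.Perm.sign lam) ^ (s - 1) := by
  have hl : Equiv.Perm.sign
      (List.ofFn fun i : Fin (s - 1) =>
        Equiv.addRight (k (s - i.val)) * rho * piP * lam).prod =
      (Equiv.Perm.sign rho * Equiv.Perm.sign piP * Equiv.Perm.sign lam) ^ (s - 1) := by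
    rw [map_list_prod, List.map_ofFn]
    have heq : (Equiv.Perm.sign ∘ fun i : Fin (s - 1) =>
        Equiv.addRight (k (s - i.val)) * rho * piP * lam) =
        fun _ : Fin (s-1) =>
          Equiv.Perm.sign rho * Equiv.Perm.sign piP * Equiv.Perm.sign lam := by
      funext i
      simp [map_mul, sign_addRight hodd]
    rw [heq, List.ofFn_const, List.prod_replicate]
  unfold sRound
  rw [map_mul, map_mul, map_mul, map_mul, hl, sign_addRight hodd, sign_addRight hodd]
  simp only [one_mul, mul_one]

lemma even_n_of_sign_pi {F : Type*} [Field F] [Fintype F] [DecidableEq F]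
    {m n : ℕ} [NeZero n] (c : Fin m → Fin n)
    (piP : Equiv.Perm (Matrix (Fin m) (Fin n) F))
    (hpi : ∀ (a : Matrix (Fin m) (Fin n) F) (i : Fin m) (j : Fin n),
      piP a i j = a i (j - c i))
    (hsign : Equiv.Perm.sign piP = -1) : Even n := by
  have hpow : ∀ (t : ℕ) (a : Matrix (Fin m) (Fin n) F) (i : Fin m) (j : Fin n),
      (piP ^ t) a i j = a i (j - t • c i) := by
    intro t
    induction t with
    | zero => intro a i j; simp
    | succ t ih =>
      intro a i j
      rw [pow_succ, Equiv.Perm.mul_apply, ih, hpi, sub_sub, ← succ_nsmul]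
  have hn1 : piP ^ n = 1 := by
    apply Equiv.ext
    intro a
    funext i j
    have h := hpow n a i j
    have hz : n • c i = 0 := by simpa using (card_nsmul_eq_zero (x := c i))
    rwa [hz, sub_zero] at h
  have h2 : Equiv.Perm.sign piP ^ n = 1 := by rw [← map_pow, hn1, map_one]
  rcases Nat.even_or_odd n with h | h
  · exact h
  · rw [hsign, upow_odd _ h] at h2
    exact absurd h2 (by decide)

lemma sign_lam_of_even {F : Type*} [Field F] [Fintype F] [DecidableEq F]
    {m n : ℕ} [NeZero n] (A B : F) (hA : A ≠ 0)
    (lam : Equiv.Perm (Matrix (Fin m) (Fin n) F))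
    (hlam : ∀ (a : Matrix (Fin m) (Fin n) F) (i : Fin m) (j : Fin n),
      lam a i j = A * (a i j)⁻¹ + B)
    (hn : Even n) : Equiv.Perm.sign lam = 1 := by
  classical
  -- the S-box as a permutation of F
  set g : Equiv.Perm F :=
    { toFun := fun x => A * x⁻¹ + B
      invFun := fun y => A * (y - B)⁻¹
      left_inv := by
        intro x
        simp only [add_sub_cancel_right, mul_inv_rev, inv_inv]
        rw [mul_comm x, mul_inv_cancel_left₀ hA]
      right_inv := by
        intro y
        simp only [mul_inv_rev, inv_inv]
        rw [mul_comm (y - B), mul_inv_cancel_left₀ hA, sub_add_cancel] } with hg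
  -- applying g to all entries of column j
  set K : Fin n → Equiv.Perm (Matrix (Fin m) (Fin n) F) := fun j =>
    { toFun := fun a => fun i j' => if j' = j then g (a i j') else a i j'
      invFun := fun a => fun i j' => if j' = j then g.symm (a i j') else a i j'
      left_inv := by
        intro a; funext i j'; by_cases h : j' = j <;> simp [h]
      right_inv := by
        intro a; funext i j'; by_cases h : j' = j <;> simp [h] } with hK
  have hKapp : ∀ (j : Fin n) (a : Matrix (Fin m) (Fin n) F) (i : Fin m) (j' : Fin n),
      K j a i j' = if j' = j then g (a i j') else a i j' := fun _ _ _ _ => rfl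
  have hcomm : ∀ j j' : Fin n, Commute (K j) (K j') := by
    intro j j'
    apply Equiv.ext
    intro a
    funext i j''
    simp only [Equiv.Perm.mul_apply, hKapp]
    by_cases h1 : j'' = j <;> by_cases h2 : j'' = j' <;> simp [h1, h2, apply_ite g]
  -- evaluation of partial products
  have hprod : ∀ S : Finset (Fin n),
      ∀ (a : Matrix (Fin m) (Fin n) F) (i : Fin m) (j : Fin n),
      (S.noncommProd K (show Set.Pairwise _ (Function.onFun Commute K) from fun x _ y _ _ => hcomm x y)) a i j
        = if j ∈ S then g (a i j) else a i j := by
    intro S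
    induction S using Finset.induction_on with
    | empty => intro a i j; simp
    | @insert j₀ S hj₀ ih =>
      intro a i j
      rw [Finset.noncommProd_insert_of_notMem _ _ _ _ hj₀, Equiv.Perm.mul_apply, hKapp, ih]
      by_cases h1 : j = j₀
      · subst h1; simp [hj₀]
      · simp [h1, Finset.mem_insert]
  have hlamprod : lam = Finset.univ.noncommProd K (show Set.Pairwise _ (Function.onFun Commute K) from fun x _ y _ _ => hcomm x y) := by
    apply Equiv.ext
    intro a
    funext i j
    rw [hlam, hprod]
    simp [hg]
  -- column swap permutations
  have hswap : ∀ j : Fin n, ∃ w : Equiv.Perm (Matrix (Fin m) (Fin n) F),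
      K j = w * K 0 * w := by
    intro j
    refine ⟨Function.Involutive.toPerm
      (fun a => fun i j'' => a i (Equiv.swap 0 j j'')) ?_, ?_⟩
    · intro a; funext i j''; simp
    · apply Equiv.ext
      intro a
      funext i j''
      simp only [Equiv.Perm.mul_apply, Function.Involutive.coe_toPerm, hKapp]
      change (if j'' = j then g (a i j'') else a i j'') = if Equiv.swap 0 j j'' = 0 then
        g (a i (Equiv.swap 0 j (Equiv.swap 0 j j''))) else a i (Equiv.swap 0 j (Equiv.swap 0 j j''))
      have hiff : Equiv.swap (0 : Fin n) j j'' = 0 ↔ j'' = j :=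
        ⟨fun hc => (Equiv.swap (0 : Fin n) j).injective
            (hc.trans (Equiv.swap_apply_right 0 j).symm),
          fun hc => by rw [hc, Equiv.swap_apply_right]⟩
      by_cases h : j'' = j
      · simp [h, hiff.mpr h, Equiv.swap_apply_self]
      · rw [if_neg (fun hc => h (hiff.mp hc)), if_neg h, Equiv.swap_apply_self]
  have hKsign : ∀ j : Fin n, Equiv.Perm.sign (K j) = Equiv.Perm.sign (K 0) := by
    intro j
    obtain ⟨w, hw⟩ := hswap j
    rw [hw, map_mul, map_mul]
    have : Equiv.Perm.sign w * Equiv.Perm.sign (K 0) * Equiv.Perm.sign w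
        = Equiv.Perm.sign (K 0) * (Equiv.Perm.sign w * Equiv.Perm.sign w) := by
      rw [mul_comm (Equiv.Perm.sign w) (Equiv.Perm.sign (K 0)), mul_assoc]
    rw [this, Int.units_mul_self, mul_one]
  rw [hlamprod, Finset.map_noncommProd, Finset.noncommProd_eq_prod]
  calc (∏ j : Fin n, Equiv.Perm.sign (K j))
      = ∏ _j : Fin n, Equiv.Perm.sign (K 0) := by
        exact Finset.prod_congr rfl (fun j _ => hKsign j)
    _ = Equiv.Perm.sign (K 0) ^ n := by simp
    _ = 1 := upow_even _ hn

/-- For `p > 2`, if either (`s` is even and `ρ` is odd) or (`s` is odd and `π` or `λ` is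
odd), then the set of all `s`-round generalized Rijndael-like functions on
`M_{m,n}(GF(p^r))` is not closed under composition: there are `f, g` in the set whose
composite `f ∘ g` is not in the set; in particular the set is not a group. -/
theorem stmt_13 (p r m n : ℕ) (hp : p.Prime) (hp2 : 2 < p)
    (hr : 1 ≤ r) (hm : 1 ≤ m) (hn : 1 ≤ n)
    (F : Type*) [Field F] [Fintype F] [DecidableEq F] (hF : Fintype.card F = p ^ r)
    (A B : F) (hA : A ≠ 0) (c : Fin m → Fin n)
    (C : Matrix (Fin m) (Fin m) F) (hC : IsUnit C)
    (lam piP rho : Equiv.Perm (Matrix (Fin m) (Fin n) F))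
    (hlam : ∀ (a : Matrix (Fin m) (Fin n) F) (i : Fin m) (j : Fin n),
      lam a i j = A * (a i j)⁻¹ + B)
    (hpi : ∀ (a : Matrix (Fin m) (Fin n) F) (i : Fin m) (j : Fin n),
      piP a i j = a i (j - c i))
    (hrho : ∀ a : Matrix (Fin m) (Fin n) F, rho a = C * a)
    (s : ℕ) (hs : 1 < s)
    (hcond : (Even s ∧ Equiv.Perm.sign rho = -1) ∨
      (Odd s ∧ (Equiv.Perm.sign piP = -1 ∨ Equiv.Perm.sign lam = -1))) :
    ∃ f ∈ {f : Equiv.Perm (Matrix (Fin m) (Fin n) F) |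
        ∃ k : ℕ → Matrix (Fin m) (Fin n) F, f = sRound rho piP lam s k},
      ∃ g ∈ {f : Equiv.Perm (Matrix (Fin m) (Fin n) F) |
        ∃ k : ℕ → Matrix (Fin m) (Fin n) F, f = sRound rho piP lam s k},
      f * g ∉ {f : Equiv.Perm (Matrix (Fin m) (Fin n) F) |
        ∃ k : ℕ → Matrix (Fin m) (Fin n) F, f = sRound rho piP lam s k} := by
  classical
  haveI : NeZero n := ⟨by omega⟩
  have hcardF : Odd (Fintype.card F) := by
    rw [hF]; exact (hp.odd_of_ne_two (by omega)).pow
  have hoddV : Odd (Fintype.card (Matrix (Fin m) (Fin n) F)) := by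
    show Odd (Fintype.card (Fin m → Fin n → F))
    rw [Fintype.card_fun, Fintype.card_fun]
    exact hcardF.pow.pow
  set x := Equiv.Perm.sign rho with hx
  set y := Equiv.Perm.sign piP with hy
  set z := Equiv.Perm.sign lam with hz
  have hval : y * z * (x * y * z) ^ (s - 1) = -1 := by
    have halg : y * z * (x * y * z) ^ (s - 1) = x ^ (s - 1) * (y * z) ^ s := by
      rw [mul_assoc x y z, mul_pow, mul_comm (y * z), mul_assoc, ← pow_succ,
        (by omega : s - 1 + 1 = s)]
    rw [halg]
    rcases hcond with ⟨hse, hxval⟩ | ⟨hso, hyz⟩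
    · have h1 : Odd (s - 1) := Nat.Even.sub_odd (by omega) hse odd_one
      rw [upow_even _ hse, hxval, upow_odd _ h1, mul_one]
    · have h1 : Even (s - 1) := Nat.Odd.sub_odd hso odd_one
      rw [upow_even _ h1, one_mul, upow_odd _ hso]
      rcases hyz with hyval | hzval
      · rcases Int.units_eq_one_or z with hz1 | hz1
        · rw [hyval, hz1, mul_one]
        · exfalso
          have hevn : Even n := even_n_of_sign_pi c piP hpi hyval
          have := sign_lam_of_even A B hA lam hlam hevn
          rw [← hz, hz1] at this
          exact absurd this (by decide)
      · rcases Int.units_eq_one_or y with hy1 | hy1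
        · rw [hzval, hy1, one_mul]
        · exfalso
          have hevn : Even n := even_n_of_sign_pi c piP hpi hy1
          have := sign_lam_of_even A B hA lam hlam hevn
          rw [← hz, hzval] at this
          exact absurd this (by decide)
  have hS : ∀ k : ℕ → Matrix (Fin m) (Fin n) F,
      Equiv.Perm.sign (sRound rho piP lam s k) = -1 :=
    fun k => (sign_sRound hoddV rho piP lam s k).trans hval
  refine ⟨_, ⟨fun _ => 0, rfl⟩, _, ⟨fun _ => 0, rfl⟩, ?_⟩
  rintro ⟨k, hk⟩
  have h1 := congrArg Equiv.Perm.sign hk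
  simp only [map_mul, hS] at h1
  exact absurd h1 (by decide)
end

section
/- Let p be a prime, r > 4, and F = GF(p^r). Let γ : F → F be the map with γ(0) = 0 and γ(x) = x^{-1} for x ≠ 0. Then for every nonzero v ∈ F, the image of the map F → F, x ↦ γ(x + v) − γ(x), has cardinality greater than p^{r−2}. -/
/-- For `F = GF(p^r)` with `r > 4` and `γ` the inversion-with-zero map, for every nonzero
`v ∈ F` the image of `x ↦ γ(x + v) - γ(x)` has more than `p^{r-2}` elements. -/
theorem stmt_14 (p r : ℕ) (hp : p.Prime) (hr : 4 < r)
    (F : Type*) [Field F] [Fintype F] (hF : Fintype.card F = p ^ r)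
    (v : F) (hv : v ≠ 0) :
    p ^ (r - 2) < Set.ncard (Set.range fun x : F => (x + v)⁻¹ - x⁻¹) := by
  classical
  set f : F → F := fun x => (x + v)⁻¹ - x⁻¹ with hf
  set T : Finset F := Finset.univ.filter (fun x => x ≠ 0 ∧ x + v ≠ 0) with hT
  -- key algebra fact
  have key : ∀ x y : F, x ≠ 0 → x + v ≠ 0 → y ≠ 0 → y + v ≠ 0 →
      f x = f y → y = x ∨ y = -v - x := by
    intro x y hx hxv hy hyv h
    simp only [hf] at h
    have h2 : (x - y) * (x + y + v) = 0 := by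
      field_simp at h
      have h' : v * ((x - y) * (x + y + v)) = 0 := by linear_combination h
      exact (mul_eq_zero.1 h').resolve_left hv
    rcases mul_eq_zero.1 h2 with h3 | h3
    · left; linear_combination -h3
    · right; linear_combination h3
  -- fiber bound
  have fiber : T.card ≤ 2 * (T.image f).card := by
    apply Finset.card_le_mul_card_image
    intro c hc
    obtain ⟨x₀, hx₀T, hx₀⟩ := Finset.mem_image.1 hc
    have hx₀' := (Finset.mem_filter.1 hx₀T).2
    have : T.filter (fun x => f x = c) ⊆ {x₀, -v - x₀} := by
      intro y hy
      rw [Finset.mem_filter, Finset.mem_filter] at hy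
      obtain ⟨⟨_, hy1, hy2⟩, hyc⟩ := hy
      rcases key x₀ y hx₀'.1 hx₀'.2 hy1 hy2 (by rw [hx₀, hyc]) with h | h <;>
        simp [h]
    calc (T.filter (fun x => f x = c)).card ≤ ({x₀, -v - x₀} : Finset F).card :=
          Finset.card_le_card this
      _ ≤ 2 := Finset.card_insert_le _ _ |>.trans (by simp)
  -- T.card ≥ q - 2
  have hTcard : Fintype.card F ≤ T.card + 2 := by
    have := Finset.card_filter_add_card_filter_not
      (s := (Finset.univ : Finset F)) (p := fun x => x ≠ 0 ∧ x + v ≠ 0)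
    have hsub : Finset.univ.filter (fun x => ¬(x ≠ 0 ∧ x + v ≠ 0)) ⊆ ({0, -v} : Finset F) := by
      intro x hx
      simp only [Finset.mem_filter, not_and_or, not_not] at hx
      rcases hx.2 with h | h
      · simp [h]
      · have : x = -v := by linear_combination h
        simp [this]
    have h2 : (Finset.univ.filter (fun x => ¬(x ≠ 0 ∧ x + v ≠ 0))).card ≤ 2 :=
      (Finset.card_le_card hsub).trans (Finset.card_insert_le _ _ |>.trans (by simp))
    rw [Finset.card_univ] at this
    rw [hT]
    omega
  -- image card ≤ range ncard
  have hrange : (Set.range f).ncard = (Finset.univ.image f).card := by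
    rw [← Set.ncard_coe_finset]
    congr 1
    ext y
    simp
  have himg : (T.image f).card ≤ (Finset.univ.image f).card :=
    Finset.card_le_card (Finset.image_subset_image (Finset.subset_univ _))
  -- arithmetic
  rw [hrange]
  have hq : p ^ r = p ^ (r - 2) * p ^ 2 := by
    rw [← pow_add]; congr 1; omega
  have hp2 : 2 ≤ p := hp.two_le
  have hpsq : 4 ≤ p ^ 2 := by nlinarith
  have ha : 8 ≤ p ^ (r - 2) := by
    calc (8 : ℕ) = 2 ^ 3 := by norm_num
      _ ≤ p ^ 3 := Nat.pow_le_pow_left hp2 3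
      _ ≤ p ^ (r - 2) := Nat.pow_le_pow_right (by omega) (by omega)
  have hmul : p ^ (r - 2) * 4 ≤ p ^ (r - 2) * p ^ 2 := Nat.mul_le_mul_left _ hpsq
  rw [hF, hq] at hTcard
  omega
end

section
/- Let p be a prime, r > 4, m, n ≥ 1, F = GF(p^r), and V = M_{m,n}(F). Let γ : V → V be the piecewise inversion map and α = ρ ∘ π, where π is the ShiftRows-like map and ρ(a) = C·a with C an invertible m×m matrix over F. Suppose U is a GF(p)-linear subspace of V with U ≠ {0} such that for all u ∈ U and all v ∈ V, (α ∘ γ)(v + u) − (α ∘ γ)(v) ∈ U. Then α(U) = U and U is a direct sum of some of the entry subspaces: there is a set S of positions (i,j) such that U = { a ∈ V : a_{i,j} = 0 for all (i,j) ∉ S }. -/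
open Finset

/-- The ShiftRows-like map: row `i` is cyclically shifted by `c i`. -/
def shiftRowsMap {F : Type*} {m n : ℕ} (c : Fin m → Fin n)
    (a : Matrix (Fin m) (Fin n) F) : Matrix (Fin m) (Fin n) F :=
  Matrix.of fun i j => a i (j - c i)

/-- The piecewise (entrywise) Galois-field inversion map `γ`. -/
def piecewiseInv {F : Type*} [Field F] {m n : ℕ}
    (a : Matrix (Fin m) (Fin n) F) : Matrix (Fin m) (Fin n) F :=
  Matrix.of fun i j => (a i j)⁻¹



open Finset

lemma card_quad_le_two {F : Type*} [Field F] [Fintype F] [DecidableEq F] (b c : F) :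
    (Finset.univ.filter (fun x : F => x*x + b*x + c = 0)).card ≤ 2 := by
  rcases (Finset.univ.filter (fun x : F => x*x + b*x + c = 0)).eq_empty_or_nonempty with h | ⟨x₀, hx₀⟩
  · simp [h]
  · have hx₀' : x₀*x₀ + b*x₀ + c = 0 := (Finset.mem_filter.mp hx₀).2
    have hsub : (Finset.univ.filter (fun x : F => x*x + b*x + c = 0)) ⊆ {x₀, -b - x₀} := by
      intro x hx
      have hx' : x*x + b*x + c = 0 := (Finset.mem_filter.mp hx).2
      have key : (x - x₀) * (x + x₀ + b) = 0 := by linear_combination hx' - hx₀'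
      rcases mul_eq_zero.mp key with h | h
      · simp [sub_eq_zero.mp h]
      · have hx2 : x = -b - x₀ := by linear_combination h
        simp [hx2]
    calc (Finset.univ.filter (fun x : F => x*x + b*x + c = 0)).card
        ≤ ({x₀, -b - x₀} : Finset F).card := Finset.card_le_card hsub
      _ ≤ 2 := Finset.card_insert_le _ _ |>.trans (by simp)

lemma index_two_helper {G : Type*} [AddCommGroup G] [Fintype G] [DecidableEq G]
    (S : Finset G) (hsub : ∀ a ∈ S, ∀ b ∈ S, a - b ∈ S)
    (hcard : Fintype.card G = 2 * S.card) {x y : G} (hx : x ∉ S) (hy : y ∉ S) :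
    x - y ∈ S := by
  have hS0 : S.Nonempty := by
    rcases S.eq_empty_or_nonempty with h | h
    · exfalso; have hpos := Fintype.card_pos (α := G); rw [h] at hcard; simp at hcard
    · exact h
  obtain ⟨a, ha⟩ := hS0
  have h0S : (0:G) ∈ S := by simpa using hsub a ha a ha
  set T := S.image (fun b => x + b) with hT
  have hTcard : T.card = S.card := Finset.card_image_of_injective _ (add_right_injective x)
  have hTsub : T ⊆ Sᶜ := by
    intro z hz
    obtain ⟨b, hb, rfl⟩ := Finset.mem_image.mp hz
    simp only [Finset.mem_compl]
    intro hzin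
    exact hx (by simpa using hsub _ hzin _ hb)
  have hTeq : T = Sᶜ := Finset.eq_of_subset_of_card_le hTsub (by
    rw [Finset.card_compl, hTcard]; omega)
  have hyT : y ∈ T := by rw [hTeq]; simpa using hy
  obtain ⟨b, hb, hbe⟩ := Finset.mem_image.mp hyT
  have : x - y = 0 - b := by rw [← hbe]; abel
  rw [this]; exact hsub 0 h0S b hb

lemma chi_hom {G : Type*} [AddCommGroup G] [Fintype G] [DecidableEq G] (S : Finset G)
    (hsub : ∀ a ∈ S, ∀ b ∈ S, a - b ∈ S) (hcard : Fintype.card G = 2 * S.card)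
    (hchar : ∀ g : G, g + g = 0) :
    ∃ χ : G →+ ZMod 2, ∀ z, (χ z = 0 ↔ z ∈ S) := by
  have hS0 : (0:G) ∈ S := by
    have hne : S.Nonempty := by
      rcases S.eq_empty_or_nonempty with h | h
      · exfalso; have hpos := Fintype.card_pos (α := G); rw [h] at hcard; simp at hcard
      · exact h
    obtain ⟨a, ha⟩ := hne
    simpa using hsub a ha a ha
  have hneg : ∀ g : G, -g = g := by
    intro g; have h := hchar g; rw [neg_eq_iff_add_eq_zero]; exact h
  have hadd : ∀ a ∈ S, ∀ b ∈ S, a + b ∈ S := by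
    intro a ha b hb
    have := hsub a ha (0 - b) (hsub 0 hS0 b hb)
    simpa [sub_eq_add_neg, hneg] using this
  refine ⟨AddMonoidHom.mk' (fun z => if z ∈ S then (0 : ZMod 2) else 1) ?_, ?_⟩
  · intro a b
    by_cases ha : a ∈ S <;> by_cases hb : b ∈ S
    · have : a + b ∈ S := hadd a ha b hb
      simp [ha, hb, this]
    · have : a + b ∉ S := by
        intro hin
        have h2 := hsub _ hin _ ha
        have he : a + b - a = b := by abel
        rw [he] at h2; exact hb h2
      simp [ha, hb, this]
    · have : a + b ∉ S := by
        intro hin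
        have h2 := hsub _ hin _ hb
        have he : a + b - b = a := by abel
        rw [he] at h2; exact ha h2
      simp [ha, hb, this]
    · have : a + b ∈ S := by
        have := index_two_helper S hsub hcard ha hb
        have heq : a + b = a - b := by rw [sub_eq_add_neg, hneg]
        rwa [heq]
      simp [ha, hb, this]
      decide
  · intro z
    by_cases h : z ∈ S <;> simp [AddMonoidHom.mk', h]


lemma charP_of_card {F : Type*} [Field F] [Fintype F] {p r : ℕ} (hp : p.Prime) (hr : 0 < r)
    (hF : Fintype.card F = p ^ r) : CharP F p := by
  set p' := ringChar F with hp'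
  haveI : CharP F p' := ringChar.charP F
  have hp'prime : p'.Prime := CharP.char_is_prime F p'
  obtain ⟨n, _, hcard⟩ := FiniteField.card F p'
  have heq : p ^ r = p' ^ (n : ℕ) := by rw [← hF, hcard]
  have hdvd : p ∣ p' ^ (n : ℕ) := heq ▸ dvd_pow_self p hr.ne'
  have : p ∣ p' := hp.dvd_of_dvd_pow hdvd
  have : p = p' := ((Nat.prime_dvd_prime_iff_eq hp hp'prime).mp this)
  rw [this]; exact ringChar.charP F


open Finset



lemma inv_span {F : Type*} [Field F] [Fintype F] [DecidableEq F]
    (p r : ℕ) (hp : p.Prime) (hr : 4 < r)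
    (hF : Fintype.card F = p ^ r) (t : F) (ht : t ≠ 0)
    (B : AddSubgroup F) (hB : ∀ x : F, (x + t)⁻¹ - x⁻¹ - t⁻¹ ∈ B) : ∀ y : F, y ∈ B := by
  classical
  by_contra hcon
  push_neg at hcon
  obtain ⟨y₀, hy₀⟩ := hcon
  haveI hchar : CharP F p := charP_of_card hp (by omega) hF
  set g : F → F := fun x => (x + t)⁻¹ - x⁻¹ - t⁻¹ with hg
  set I : Finset F := Finset.univ.image g with hI
  have hg0 : g 0 = 0 := by simp [hg]
  have hgt : g (-t) = 0 := by
    simp only [hg, neg_add_cancel, inv_zero, zero_sub, inv_neg]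
    ring
  -- fibers of nonzero values have at most 2 elements
  have hfibsub : ∀ x x₀ : F, x ≠ 0 → x + t ≠ 0 → x₀ ≠ 0 → x₀ + t ≠ 0 → g x = g x₀ →
      x = x₀ ∨ x = -t - x₀ := by
    intro x x₀ hx hxt hx0 hx0t hgx
    have h1 : (x + t)⁻¹ - x⁻¹ = (x₀ + t)⁻¹ - x₀⁻¹ := by
      have hthis : g x = g x₀ := hgx
      simp only [hg] at hthis
      linear_combination hthis
    field_simp at h1
    have key0 : t * ((x - x₀) * (x + x₀ + t)) = 0 := by linear_combination h1
    rcases mul_eq_zero.mp key0 with h1 | h1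
    · exact absurd h1 ht
    · have key : (x - x₀) * (x + x₀ + t) = 0 := h1
      rcases mul_eq_zero.mp key with h | h
      · left; exact sub_eq_zero.mp h
      · right; linear_combination h
  have hfib2 : ∀ b : F, b ≠ 0 → (univ.filter (fun x => g x = b)).card ≤ 2 := by
    intro b hb
    rcases (univ.filter (fun x => g x = b)).eq_empty_or_nonempty with h | ⟨x₀, hx₀⟩
    · simp [h]
    · have hx₀' : g x₀ = b := (mem_filter.mp hx₀).2
      have hne : ∀ x : F, g x = b → (x ≠ 0 ∧ x + t ≠ 0) := by
        intro x hx
        constructor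
        · rintro rfl; rw [hg0] at hx; exact hb hx.symm
        · intro h; have : x = -t := by linear_combination h
          rw [this, hgt] at hx; exact hb hx.symm
      obtain ⟨h0, h0t⟩ := hne x₀ hx₀'
      have hsub : (univ.filter (fun x => g x = b)) ⊆ {x₀, -t - x₀} := by
        intro x hx
        have hx' : g x = b := (mem_filter.mp hx).2
        obtain ⟨h1, h2⟩ := hne x hx'
        rcases hfibsub x x₀ h1 h2 h0 h0t (hx'.trans hx₀'.symm) with h | h <;> simp [h]
      calc (univ.filter (fun x => g x = b)).card ≤ ({x₀, -t - x₀} : Finset F).card :=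
            Finset.card_le_card hsub
        _ ≤ 2 := Finset.card_insert_le _ _ |>.trans (by simp)
  have hfib0 : (univ.filter (fun x => g x = 0)).card ≤ 4 := by
    have hsub : (univ.filter (fun x => g x = 0)) ⊆
        ({0, -t} : Finset F) ∪ (univ.filter (fun x : F => x*x + t*x + t*t = 0)) := by
      intro x hx
      have hx' : g x = 0 := (mem_filter.mp hx).2
      by_cases h0 : x = 0
      · simp [h0]
      by_cases h0t : x = -t
      · simp [h0t]
      · have hxt : x + t ≠ 0 := by
          intro h; exact h0t (by linear_combination h)
        have h1 : (x + t)⁻¹ - x⁻¹ - t⁻¹ = 0 := hx'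
        rw [Finset.mem_union]
        right
        rw [mem_filter]
        refine ⟨mem_univ _, ?_⟩
        field_simp at h1
        linear_combination -h1
    calc (univ.filter (fun x => g x = 0)).card
        ≤ _ := Finset.card_le_card hsub
      _ ≤ ({0, -t} : Finset F).card + (univ.filter (fun x : F => x*x + t*x + t*t = 0)).card :=
          Finset.card_union_le _ _
      _ ≤ 2 + 2 := by
          gcongr
          · exact Finset.card_insert_le _ _ |>.trans (by simp)
          · exact card_quad_le_two t (t*t)
      _ = 4 := rfl
  -- counting: card F ≤ 2*I.card + 2
  have hcount : Fintype.card F ≤ 2 * I.card + 2 := by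
    have h1 : Fintype.card F = ∑ b ∈ I, (univ.filter (fun x => g x = b)).card := by
      rw [← Finset.card_univ]
      exact Finset.card_eq_sum_card_fiberwise (fun x _ => Finset.mem_image_of_mem g (mem_univ x))
    have h2 : ∀ b ∈ I, (univ.filter (fun x => g x = b)).card ≤ 2 + (if b = 0 then 2 else 0) := by
      intro b _
      by_cases hb : b = 0
      · subst hb; simpa using hfib0
      · simpa [hb] using hfib2 b hb
    calc Fintype.card F = ∑ b ∈ I, (univ.filter (fun x => g x = b)).card := h1
      _ ≤ ∑ b ∈ I, (2 + if b = 0 then 2 else 0) := Finset.sum_le_sum h2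
      _ = 2 * I.card + ∑ b ∈ I, (if b = 0 then 2 else 0) := by
          rw [Finset.sum_add_distrib, Finset.sum_const, smul_eq_mul, mul_comm]
      _ ≤ 2 * I.card + 2 := by
          gcongr
          rw [Finset.sum_ite_eq' I (0:F) (fun _ => 2)]
          split <;> omega
  -- B as finset
  set Bf : Finset F := (B : Set F).toFinset with hBf
  have hmemBf : ∀ z : F, z ∈ Bf ↔ z ∈ B := by intro z; rw [hBf, Set.mem_toFinset]; rfl
  have hIB : I ⊆ Bf := by
    intro b hb
    obtain ⟨x, _, rfl⟩ := Finset.mem_image.mp hb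
    exact (hmemBf _).mpr (hB x)
  have hBcard_le : I.card ≤ Bf.card := Finset.card_le_card hIB
  have hcount2 : Fintype.card F ≤ 2 * Bf.card + 2 := by omega
  -- Bf.card divides card F
  have hBdvd : Bf.card ∣ Fintype.card F := by
    have h1 : Bf.card = Nat.card B := by
      rw [hBf, ← Set.ncard_eq_toFinset_card', ← Nat.card_coe_set_eq]
      rfl
    have h2 : Nat.card F = Fintype.card F := Nat.card_eq_fintype_card
    rw [h1, ← h2]
    exact AddSubgroup.card_addSubgroup_dvd_card B
  have hBproper : Bf.card ≠ Fintype.card F := by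
    intro h
    have : Bf = univ := Finset.eq_univ_of_card _ h
    exact hy₀ ((hmemBf y₀).mp (this ▸ mem_univ y₀))
  obtain ⟨k, hk, hBk⟩ := (Nat.dvd_prime_pow hp).mp (hF ▸ hBdvd)
  have hklt : k < r := by
    rcases Nat.lt_or_ge k r with h | h
    · exact h
    · exfalso; apply hBproper
      have : k = r := le_antisymm hk h
      rw [hBk, this, hF]
  by_cases hp2 : p = 2
  · -- char 2 case
    subst hp2
    have hcard2 : Fintype.card F = 2 * Bf.card := by
      have hkr : k = r - 1 := by
        by_contra hne
        have hk2 : k ≤ r - 2 := by omega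
        have h1 : Bf.card ≤ 2 ^ (r-2) := by
          rw [hBk]; exact Nat.pow_le_pow_right (by norm_num) hk2
        have h2 : 2 * 2 ^ (r - 2) + 2 < 2 ^ r := by
          have : 2 ^ r = 4 * 2 ^ (r-2) := by
            calc (2:ℕ)^r = 2^(2+(r-2)) := by congr 1; omega
              _ = 4 * 2^(r-2) := by rw [pow_add]; norm_num
          have h3 : (4:ℕ) ≤ 2 ^ (r-2) := by
            calc (4:ℕ) = 2^2 := rfl
              _ ≤ 2 ^ (r-2) := Nat.pow_le_pow_right (by norm_num) (by omega)
          omega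
        rw [hF] at hcount2
        omega
      rw [hF, hBk, hkr, ← pow_succ']
      congr 1
      omega
    -- ===== char 2 main argument =====
    have h2F : (2:F) = 0 := by exact_mod_cast CharP.cast_eq_zero F 2
    have hchadd : ∀ z : F, z + z = 0 := by intro z; linear_combination z * h2F
    -- chi for B
    obtain ⟨χ, hχ⟩ := chi_hom Bf
      (fun a ha b hb => (hmemBf _).mpr (sub_mem ((hmemBf a).mp ha) ((hmemBf b).mp hb)))
      hcard2 hchadd
    set ψ : F →+ ZMod 2 := χ.comp (AddMonoidHom.mulLeft t⁻¹) with hψdef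
    have hψ : ∀ w : F, ψ w = χ (t⁻¹ * w) := fun w => rfl
    set ε : ZMod 2 := χ t⁻¹ with hε
    have hψ1 : ψ 1 = ε := by rw [hψ, mul_one]
    -- key1
    have key1 : ∀ u : F, u ≠ 0 → u ≠ 1 → ψ (u*u + u)⁻¹ = ε := by
      intro u hu0 hu1
      have hu1' : u + 1 ≠ 0 := by
        intro h; exact hu1 (by linear_combination h - h2F)
      have huu : u*u + u ≠ 0 := by
        have he : u*u + u = u*(u+1) := by ring
        rw [he]; exact mul_ne_zero hu0 hu1'
      have htu : t*u ≠ 0 := mul_ne_zero ht hu0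
      have htu1 : t*u + t ≠ 0 := by
        have he : t*u + t = t*(u+1) := by ring
        rw [he]; exact mul_ne_zero ht hu1'
      have hident : g (t*u) = t⁻¹ * ((u*u+u)⁻¹ + 1) := by
        simp only [hg]
        field_simp
        ring_nf
        linear_combination (-1 - u - u^2) * h2F
      have hmem : χ (g (t*u)) = 0 := (hχ _).mpr ((hmemBf _).mpr (hB (t*u)))
      rw [hident] at hmem
      have : ψ ((u*u+u)⁻¹ + 1) = 0 := hmem
      rw [map_add, hψ1] at this
      have hzz : ∀ a b : ZMod 2, a + b = 0 → a = b := by decide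
      exact hzz _ _ this
    -- T
    set σ : F → F := fun u => u*u + u with hσ
    set Tf : Finset F := univ.image σ with hTf
    have h0T : (0:F) ∈ Tf := by
      rw [hTf]; exact Finset.mem_image.mpr ⟨0, mem_univ 0, by simp [hσ]⟩
    have hTsubcl : ∀ a ∈ Tf, ∀ b ∈ Tf, a - b ∈ Tf := by
      intro a ha b hb
      obtain ⟨u, _, hu⟩ := Finset.mem_image.mp ha
      obtain ⟨v, _, hv⟩ := Finset.mem_image.mp hb
      refine Finset.mem_image.mpr ⟨u + v, mem_univ _, ?_⟩
      simp only [hσ] at hu hv ⊢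
      linear_combination hu - hv + (v*v + u*v + v) * h2F
    have hTcard : Fintype.card F = 2 * Tf.card := by
      have h1 : Fintype.card F = ∑ b ∈ Tf, (univ.filter (fun u => σ u = b)).card := by
        rw [← Finset.card_univ]
        exact Finset.card_eq_sum_card_fiberwise (fun x _ => Finset.mem_image_of_mem σ (mem_univ x))
      have h2 : ∀ b ∈ Tf, (univ.filter (fun u => σ u = b)).card = 2 := by
        intro b hb
        obtain ⟨u₀, _, hu₀⟩ := Finset.mem_image.mp hb
        have hfe : univ.filter (fun u => σ u = b) = {u₀, u₀ + 1} := by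
          ext u
          simp only [mem_filter, mem_univ, true_and, Finset.mem_insert, Finset.mem_singleton]
          constructor
          · intro h
            have key : (u - u₀) * (u + u₀ + 1) = 0 := by
              simp only [hσ] at h hu₀
              linear_combination h - hu₀
            rcases mul_eq_zero.mp key with h' | h'
            · left; exact sub_eq_zero.mp h'
            · right; linear_combination h' - (u₀ + 1) * h2F
          · rintro (rfl | rfl)
            · exact hu₀
            · simp only [hσ] at hu₀ ⊢
              linear_combination hu₀ + (u₀ + 1) * h2F
        rw [hfe]
        rw [Finset.card_insert_of_notMem (by
          simp only [Finset.mem_singleton]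
          intro h
          have : (1:F) = 0 := by linear_combination -h
          exact one_ne_zero this), Finset.card_singleton]
      calc Fintype.card F = ∑ b ∈ Tf, (univ.filter (fun u => σ u = b)).card := h1
        _ = ∑ _b ∈ Tf, 2 := Finset.sum_congr rfl h2
        _ = 2 * Tf.card := by rw [Finset.sum_const, smul_eq_mul, mul_comm]
    obtain ⟨χT, hχT⟩ := chi_hom Tf hTsubcl hTcard hchadd
    -- (diamond)
    have hT1 : ∀ s : F, s ∈ Tf → s ≠ 0 → ψ s⁻¹ = ε := by
      intro s hs hs0
      obtain ⟨u, _, hu⟩ := Finset.mem_image.mp hs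
      have hu0 : u ≠ 0 := by
        rintro rfl; apply hs0; rw [← hu]; simp [hσ]
      have hu1 : u ≠ 1 := by
        rintro rfl; apply hs0; rw [← hu]; simp only [hσ]
        linear_combination h2F
      rw [← hu]
      exact key1 u hu0 hu1
    -- filter(psi = eps) cardinality
    have hψ0card : (univ.filter (fun w : F => ψ w = 0)).card = Tf.card := by
      have hBfTf : Bf.card = Tf.card := by omega
      have hfe : univ.filter (fun w : F => ψ w = 0) = Bf.image (fun b => t * b) := by
        ext w
        simp only [mem_filter, mem_univ, true_and, Finset.mem_image]
        constructor
        · intro h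
          refine ⟨t⁻¹ * w, (hχ _).mp (by rw [← hψ w]; exact h), mul_inv_cancel_left₀ ht w⟩
        · rintro ⟨b, hb, rfl⟩
          rw [hψ, inv_mul_cancel_left₀ ht]
          exact (hχ b).mpr hb
      rw [hfe, Finset.card_image_of_injective _ (mul_right_injective₀ ht), hBfTf]
    have hψεcard : (univ.filter (fun w : F => ψ w = ε)).card ≤ Tf.card := by
      have hzz : ∀ a : ZMod 2, a = 0 ∨ a = 1 := by decide
      rcases hzz ε with h | h
      · rw [h] at *; exact le_of_eq hψ0card
      · rw [h]
        have hfe : univ.filter (fun w : F => ψ w = 1) = univ \ univ.filter (fun w : F => ψ w = 0) := by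
          ext w
          simp only [mem_filter, mem_univ, true_and, Finset.mem_sdiff]
          have : ∀ a : ZMod 2, a = 1 ↔ ¬ (a = 0) := by decide
          rw [this]
        rw [hfe, Finset.card_sdiff_of_subset (Finset.filter_subset _ _), Finset.card_univ, hψ0card]
        omega
    -- (P) : exceptional point
    set Bad : Finset F := univ.filter (fun z : F => z ≠ 0 ∧ ψ z⁻¹ ≠ ε + χT z) with hBad
    have hBadprop : ∀ z ∈ Bad, z ∉ Tf ∧ ψ z⁻¹ = ε := by
      intro z hz
      obtain ⟨-, hz0, hzne⟩ := mem_filter.mp hz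
      have hzT : z ∉ Tf := by
        intro h
        apply hzne
        rw [hT1 z h hz0, (hχT z).mpr h, add_zero]
      have hχT1 : χT z = 1 := by
        have h1 : ∀ a : ZMod 2, a ≠ 0 → a = 1 := by decide
        exact h1 _ (fun h0 => hzT ((hχT z).mp h0))
      have hψε : ψ z⁻¹ = ε := by
        have h1 : ∀ a b : ZMod 2, a ≠ b + 1 → a = b := by decide
        exact h1 _ _ (by rw [← hχT1]; exact hzne)
      exact ⟨hzT, hψε⟩
    have hBadcard : Bad.card ≤ 1 := by
      rw [Finset.card_le_one]
      intro z₁ h₁ z₂ h₂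
      by_contra hne
      obtain ⟨hz₁T, hz₁ψ⟩ := hBadprop z₁ h₁
      obtain ⟨hz₂T, hz₂ψ⟩ := hBadprop z₂ h₂
      have hz₁0 : z₁ ≠ 0 := (mem_filter.mp h₁).2.1
      have hz₂0 : z₂ ≠ 0 := (mem_filter.mp h₂).2.1
      set Zf : Finset F := univ.filter (fun w : F => w ≠ 0 ∧ ψ w = ε) with hZf
      set I₀ : Finset F := (Tf.erase 0).image (fun s => s⁻¹) with hI₀
      have hI₀sub : I₀ ⊆ Zf := by
        intro w hw
        obtain ⟨v, hv, rfl⟩ := Finset.mem_image.mp hw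
        obtain ⟨hv0, hvT⟩ := Finset.mem_erase.mp hv
        exact mem_filter.mpr ⟨mem_univ _, inv_ne_zero hv0, hT1 v hvT hv0⟩
      have hI₀card : I₀.card = Tf.card - 1 := by
        rw [hI₀, Finset.card_image_of_injective _ inv_injective,
          Finset.card_erase_of_mem h0T]
      have hz₁I : z₁⁻¹ ∉ I₀ := by
        intro h
        obtain ⟨v, hv, hveq⟩ := Finset.mem_image.mp h
        obtain ⟨-, hvT⟩ := Finset.mem_erase.mp hv
        exact hz₁T (by rwa [inv_injective hveq.symm])
      have hz₂I : z₂⁻¹ ∉ I₀ := by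
        intro h
        obtain ⟨v, hv, hveq⟩ := Finset.mem_image.mp h
        obtain ⟨-, hvT⟩ := Finset.mem_erase.mp hv
        exact hz₂T (by rwa [inv_injective hveq.symm])
      have hz12 : z₁⁻¹ ≠ z₂⁻¹ := fun h => hne (inv_injective h)
      have hJsub : insert z₁⁻¹ (insert z₂⁻¹ I₀) ⊆ Zf := by
        intro w hw
        rcases Finset.mem_insert.mp hw with rfl | hw
        · exact mem_filter.mpr ⟨mem_univ _, inv_ne_zero hz₁0, hz₁ψ⟩
        rcases Finset.mem_insert.mp hw with rfl | hw
        · exact mem_filter.mpr ⟨mem_univ _, inv_ne_zero hz₂0, hz₂ψ⟩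
        · exact hI₀sub hw
      have hJcard : (insert z₁⁻¹ (insert z₂⁻¹ I₀)).card = I₀.card + 2 := by
        rw [Finset.card_insert_of_notMem (by
          intro h
          rcases Finset.mem_insert.mp h with h | h
          · exact hz12 h
          · exact hz₁I h), Finset.card_insert_of_notMem hz₂I]
      have hZfle : Zf.card ≤ Tf.card := by
        apply le_trans (Finset.card_le_card (show Zf ⊆ univ.filter (fun w : F => ψ w = ε) by
          intro w hw
          obtain ⟨hw1, _, hw3⟩ := mem_filter.mp hw
          exact mem_filter.mpr ⟨hw1, hw3⟩))
        exact hψεcard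
      have hT0 : 1 ≤ Tf.card := Finset.card_pos.mpr ⟨0, h0T⟩
      have := Finset.card_le_card hJsub
      omega
    obtain ⟨zs, hzs⟩ : ∃ zs : F, ∀ z : F, z ≠ 0 → z ≠ zs → ψ z⁻¹ = ε + χT z := by
      rcases Bad.eq_empty_or_nonempty with hemp | ⟨z₀, hz₀⟩
      · refine ⟨0, fun z hz0 _ => ?_⟩
        by_contra hne
        have : z ∈ Bad := mem_filter.mpr ⟨mem_univ _, hz0, hne⟩
        rw [hemp] at this
        exact absurd this (Finset.notMem_empty z)
      · refine ⟨z₀, fun z hz0 hzz => ?_⟩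
        by_contra hne
        have hzB : z ∈ Bad := mem_filter.mpr ⟨mem_univ _, hz0, hne⟩
        exact hzz (Finset.card_le_one.mp hBadcard z hzB z₀ hz₀)
    -- choose s
    obtain ⟨s, hs0, hs1, hsq⟩ : ∃ s : F, s ≠ 0 ∧ s ≠ 1 ∧ s*s + 1*s + 1 ≠ 0 := by
      by_contra hcon2
      push_neg at hcon2
      have hsub2 : (univ : Finset F) ⊆ ({0, 1} : Finset F) ∪
          (univ.filter (fun x : F => x*x + 1*x + 1 = 0)) := by
        intro x _
        by_cases hx0 : x = 0
        · subst hx0; simp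
        by_cases hx1 : x = 1
        · subst hx1; simp
        · exact Finset.mem_union.mpr (Or.inr (mem_filter.mpr ⟨mem_univ _, hcon2 x hx0 hx1⟩))
      have hcard4 : Fintype.card F ≤ 4 := by
        calc Fintype.card F = (univ : Finset F).card := (Finset.card_univ).symm
          _ ≤ _ := Finset.card_le_card hsub2
          _ ≤ ({0, 1} : Finset F).card + _ := Finset.card_union_le _ _
          _ ≤ 2 + 2 := by
              gcongr
              · exact Finset.card_insert_le _ _ |>.trans (by simp)
              · exact card_quad_le_two 1 1
          _ = 4 := rfl
      have h32 : 32 ≤ Fintype.card F := by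
        rw [hF]
        calc (32:ℕ) = 2^5 := rfl
          _ ≤ 2^r := Nat.pow_le_pow_right (by norm_num) (by omega)
      omega
    have hs1' : s + 1 ≠ 0 := fun h => hs1 (by linear_combination h - h2F)
    have hss : s*s + s ≠ 0 := by
      have he : s*s + s = s*(s+1) := by ring
      rw [he]; exact mul_ne_zero hs0 hs1'
    set cc : F := (s*s + s + 1) * (s*s + s)⁻¹ with hcc
    have hc0 : cc ≠ 0 := mul_ne_zero (by intro h; apply hsq; linear_combination h) (inv_ne_zero hss)
    -- key2
    have key2 : ∀ x : F, x ≠ 0 → x ≠ zs → s*x ≠ zs → (1+s)*x ≠ zs → ψ (cc * x⁻¹) = ε := by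
      intro x hx0 hxz hsxz h1sxz
      have h1s : (1+s) ≠ 0 := by rwa [add_comm] at hs1'
      have h1 := hzs x hx0 hxz
      have h2 := hzs (s*x) (mul_ne_zero hs0 hx0) hsxz
      have h3 := hzs ((1+s)*x) (mul_ne_zero h1s hx0) h1sxz
      have hsum3 : χT x + χT (s*x) + χT ((1+s)*x) = 0 := by
        rw [← map_add, ← map_add]
        have he : x + s*x + (1+s)*x = 0 := by linear_combination (x + s*x) * h2F
        rw [he, map_zero]
      have hinv : x⁻¹ + (s*x)⁻¹ + ((1+s)*x)⁻¹ = cc * x⁻¹ := by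
        rw [hcc]
        field_simp
        ring_nf
        linear_combination (s + s^2) * h2F
      calc ψ (cc * x⁻¹) = ψ (x⁻¹ + (s*x)⁻¹ + ((1+s)*x)⁻¹) := by rw [hinv]
        _ = ψ x⁻¹ + ψ (s*x)⁻¹ + ψ ((1+s)*x)⁻¹ := by rw [map_add, map_add]
        _ = (ε + χT x) + (ε + χT (s*x)) + (ε + χT ((1+s)*x)) := by rw [h1, h2, h3]
        _ = ε := by
            have hz3 : ∀ e a b c : ZMod 2, a + b + c = 0 → (e+a)+(e+b)+(e+c) = e := by decide
            exact hz3 ε _ _ _ hsum3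
    -- final contradiction
    set Good : Finset F := univ.filter
      (fun x : F => x ≠ 0 ∧ x ≠ zs ∧ s*x ≠ zs ∧ (1+s)*x ≠ zs) with hGood
    have h1s : (1+s) ≠ 0 := by rwa [add_comm] at hs1'
    have hGoodcard : Fintype.card F ≤ Good.card + 4 := by
      have hsub3 : (univ : Finset F) ⊆ Good ∪ ({0, zs, s⁻¹ * zs, (1+s)⁻¹ * zs} : Finset F) := by
        intro x _
        by_cases c1 : x = 0
        · subst c1; apply Finset.mem_union.mpr; right; simp
        by_cases c2 : x = zs
        · subst c2; apply Finset.mem_union.mpr; right; simp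
        by_cases c3 : s*x = zs
        · apply Finset.mem_union.mpr; right
          have : x = s⁻¹ * zs := by rw [← c3, inv_mul_cancel_left₀ hs0]
          simp [this]
        by_cases c4 : (1+s)*x = zs
        · apply Finset.mem_union.mpr; right
          have : x = (1+s)⁻¹ * zs := by rw [← c4, inv_mul_cancel_left₀ h1s]
          simp [this]
        · exact Finset.mem_union.mpr (Or.inl (mem_filter.mpr ⟨mem_univ _, c1, c2, c3, c4⟩))
      have h4card : ({0, zs, s⁻¹ * zs, (1+s)⁻¹ * zs} : Finset F).card ≤ 4 := by
        refine (Finset.card_insert_le _ _).trans (Nat.succ_le_succ ?_)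
        refine (Finset.card_insert_le _ _).trans (Nat.succ_le_succ ?_)
        refine (Finset.card_insert_le _ _).trans (Nat.succ_le_succ ?_)
        simp
      calc Fintype.card F = (univ : Finset F).card := (Finset.card_univ).symm
        _ ≤ (Good ∪ _).card := Finset.card_le_card hsub3
        _ ≤ Good.card + _ := Finset.card_union_le _ _
        _ ≤ Good.card + 4 := by omega
    have himg : Good.image (fun x => cc * x⁻¹) ⊆ univ.filter (fun w : F => ψ w = ε) := by
      intro w hw
      obtain ⟨x, hx, rfl⟩ := Finset.mem_image.mp hw
      obtain ⟨-, hx0, hxz, hsxz, h1sxz⟩ := mem_filter.mp hx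
      exact mem_filter.mpr ⟨mem_univ _, key2 x hx0 hxz hsxz h1sxz⟩
    have hinj : Function.Injective (fun x : F => cc * x⁻¹) := by
      intro a b hab
      simp only at hab
      exact inv_injective (mul_left_cancel₀ hc0 hab)
    have himgcard : (Good.image (fun x => cc * x⁻¹)).card = Good.card :=
      Finset.card_image_of_injective _ hinj
    have hfinal := Finset.card_le_card himg
    rw [himgcard] at hfinal
    have h32 : 32 ≤ Fintype.card F := by
      rw [hF]
      calc (32:ℕ) = 2^5 := rfl
        _ ≤ 2^r := Nat.pow_le_pow_right (by norm_num) (by omega)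
    omega

  · -- odd case
    have hp3 : 3 ≤ p := by
      have := hp.two_le; omega
    have h1 : Bf.card ≤ p ^ (r-1) := by
      rw [hBk]; exact Nat.pow_le_pow_right (by omega) (by omega)
    have h2 : p ^ r = p * p ^ (r-1) := by
      rw [← pow_succ']; congr 1; omega
    have h3 : (81:ℕ) ≤ p ^ (r-1) := by
      calc (81:ℕ) = 3^4 := rfl
        _ ≤ 3 ^ (r-1) := Nat.pow_le_pow_right (by norm_num) (by omega)
        _ ≤ p ^ (r-1) := Nat.pow_le_pow_left hp3 _
    rw [hF] at hcount2
    have h4 : 3 * p ^ (r-1) ≤ p * p ^ (r-1) := Nat.mul_le_mul_right _ hp3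
    omega

/-- If `U ≠ {0}` is a `GF(p)`-subspace of `V = M_{m,n}(GF(p^r))` (`r > 4`) such that
`(α ∘ γ)(v + u) - (α ∘ γ)(v) ∈ U` for all `u ∈ U`, `v ∈ V`, where `α = ρ ∘ π`, then
`α(U) = U` and `U` is the sum of some of the entry subspaces, i.e. the set of matrices
supported on some fixed set `S` of positions. -/
theorem stmt_16 (p r m n : ℕ) (hp : p.Prime) (hr : 4 < r) (hm : 1 ≤ m) (hn : 1 ≤ n)
    (F : Type*) [Field F] [Fintype F] [DecidableEq F] (hF : Fintype.card F = p ^ r)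
    [Algebra (ZMod p) F]
    (c : Fin m → Fin n) (C : Matrix (Fin m) (Fin m) F) (hC : IsUnit C)
    (U : Submodule (ZMod p) (Matrix (Fin m) (Fin n) F)) (hU : U ≠ ⊥)
    (hdiff : ∀ u ∈ U, ∀ v : Matrix (Fin m) (Fin n) F,
      C * shiftRowsMap c (piecewiseInv (v + u)) - C * shiftRowsMap c (piecewiseInv v) ∈ U) :
    (fun a : Matrix (Fin m) (Fin n) F => C * shiftRowsMap c a) '' (U : Set (Matrix (Fin m) (Fin n) F))
        = (U : Set (Matrix (Fin m) (Fin n) F)) ∧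
      ∃ S : Set (Fin m × Fin n), (U : Set (Matrix (Fin m) (Fin n) F)) =
        {a : Matrix (Fin m) (Fin n) F | ∀ q : Fin m × Fin n, q ∉ S → a q.1 q.2 = 0} := by
  classical
  haveI : NeZero n := ⟨by omega⟩
  -- α as an additive hom
  have hshift_add : ∀ a b : Matrix (Fin m) (Fin n) F, shiftRowsMap c (a + b) = shiftRowsMap c a + shiftRowsMap c b := by
    intro a b; ext i j; rfl
  set α : Matrix (Fin m) (Fin n) F →+ Matrix (Fin m) (Fin n) F := AddMonoidHom.mk' (fun a => C * shiftRowsMap c a)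
    (by intro a b
        show C * shiftRowsMap c (a + b) = C * shiftRowsMap c a + C * shiftRowsMap c b
        rw [hshift_add, Matrix.mul_add]) with hα
  have hαapp : ∀ a : Matrix (Fin m) (Fin n) F, α a = C * shiftRowsMap c a := fun a => rfl
  -- α is injective
  have hαinj : Function.Injective α := by
    intro a b hab
    obtain ⟨u, hu⟩ := hC
    have h1 : shiftRowsMap c a = shiftRowsMap c b := by
      have h2 : (↑u⁻¹ : Matrix (Fin m) (Fin m) F) * (C * shiftRowsMap c a)
          = (↑u⁻¹ : Matrix (Fin m) (Fin m) F) * (C * shiftRowsMap c b) := by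
        rw [show C * shiftRowsMap c a = α a from rfl, show C * shiftRowsMap c b = α b from rfl, hab]
      rwa [← hu, ← Matrix.mul_assoc, ← Matrix.mul_assoc, Units.inv_mul, Matrix.one_mul,
        Matrix.one_mul] at h2
    ext i j
    have := congrFun (congrFun h1 i) (j + c i)
    simpa [shiftRowsMap] using this
  -- the cell lemma
  have hpinv0 : piecewiseInv (0 : Matrix (Fin m) (Fin n) F) = 0 := by
    ext i j
    show ((0 : Matrix (Fin m) (Fin n) F) i j)⁻¹ = (0 : Matrix (Fin m) (Fin n) F) i j
    rw [Matrix.zero_apply, inv_zero]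
  have cell : ∀ i : Fin m, ∀ j : Fin n, (∃ u ∈ U, u i j ≠ 0) →
      ∀ y : F, α (Matrix.single i j y) ∈ U := by
    intro i j ⟨u, hu, ht⟩ y
    set t := u i j with htdef
    -- the subgroup B
    set B : AddSubgroup F :=
      { carrier := {y : F | α (Matrix.single i j y) ∈ U}
        zero_mem' := by simp [Set.mem_setOf_eq, map_zero]
        add_mem' := by
          intro a b ha hb
          simp only [Set.mem_setOf_eq] at ha hb ⊢
          rw [Matrix.single_add, map_add]
          exact add_mem ha hb
        neg_mem' := by
          intro a ha
          simp only [Set.mem_setOf_eq] at ha ⊢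
          have : Matrix.single i j (-a) = -Matrix.single i j a := by
            ext i' j'
            simp only [Matrix.single, Matrix.of_apply, Matrix.neg_apply]
            split_ifs <;> simp
          rw [this, map_neg]
          exact neg_mem ha } with hB
    have hBmem : ∀ z : F, z ∈ B ↔ α (Matrix.single i j z) ∈ U := fun z => Iff.rfl
    have hkey : ∀ x : F, (x + t)⁻¹ - x⁻¹ - t⁻¹ ∈ B := by
      intro x
      set v : Matrix (Fin m) (Fin n) F := Matrix.single i j x with hv
      have hd1 : C * shiftRowsMap c (piecewiseInv (v + u)) -
          C * shiftRowsMap c (piecewiseInv v) ∈ U := hdiff u hu v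
      have hd2 : C * shiftRowsMap c (piecewiseInv (0 + u)) -
          C * shiftRowsMap c (piecewiseInv (0 : Matrix (Fin m) (Fin n) F)) ∈ U := hdiff u hu 0
      have hmat : Matrix.single i j ((x + t)⁻¹ - x⁻¹ - t⁻¹)
          = (piecewiseInv (v + u) - piecewiseInv v) - piecewiseInv u := by
        ext i' j'
        by_cases hij : i = i' ∧ j = j'
        · obtain ⟨rfl, rfl⟩ := hij
          rw [Matrix.single_apply_same]
          show _ = (piecewiseInv (v + u)) i j - (piecewiseInv v) i j - (piecewiseInv u) i j
          show _ = ((v + u) i j)⁻¹ - (v i j)⁻¹ - (u i j)⁻¹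
          rw [Matrix.add_apply, hv, Matrix.single_apply_same, ← htdef]
        · rw [Matrix.single_apply_of_ne (h := hij)]
          show (0:F) = (piecewiseInv (v + u)) i' j' - (piecewiseInv v) i' j' - (piecewiseInv u) i' j'
          show (0:F) = ((v + u) i' j')⁻¹ - (v i' j')⁻¹ - (u i' j')⁻¹
          rw [Matrix.add_apply, hv, Matrix.single_apply_of_ne (h := hij)]
          simp
      rw [hBmem, hmat, map_sub]
      have he1 : α (piecewiseInv (v + u) - piecewiseInv v) ∈ U := by
        rw [map_sub]
        exact hd1
      have he2 : α (piecewiseInv u) ∈ U := by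
        have h01 : piecewiseInv (0 + u) = piecewiseInv u := by rw [zero_add]
        have hs0 : shiftRowsMap c (0 : Matrix (Fin m) (Fin n) F) = 0 := by
          ext i' j'; rfl
        rw [h01, hpinv0, hs0, Matrix.mul_zero, sub_zero] at hd2
        exact hd2
      exact sub_mem he1 he2
    exact inv_span p r hp hr hF t ht B hkey y
  -- support set
  set S : Set (Fin m × Fin n) := {q | ∃ u ∈ U, u q.1 q.2 ≠ 0} with hS
  set VS : Set (Matrix (Fin m) (Fin n) F) := {a : Matrix (Fin m) (Fin n) F | ∀ q : Fin m × Fin n, q ∉ S → a q.1 q.2 = 0} with hVS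
  have hUVS : (U : Set (Matrix (Fin m) (Fin n) F)) ⊆ VS := by
    intro a ha q hq
    by_contra hne
    exact hq ⟨a, ha, hne⟩
  have hαVS : ∀ a ∈ VS, α a ∈ U := by
    intro a ha
    rw [Matrix.matrix_eq_sum_single a, map_sum]
    apply Submodule.sum_mem
    intro i _
    rw [map_sum]
    apply Submodule.sum_mem
    intro j _
    by_cases hij : (⟨i, j⟩ : Fin m × Fin n) ∈ S
    · exact cell i j hij (a i j)
    · rw [ha ⟨i, j⟩ hij]
      simp [map_zero]
  -- cardinality argument
  have himgsub : (fun a : Matrix (Fin m) (Fin n) F => α a) '' VS ⊆ (U : Set (Matrix (Fin m) (Fin n) F)) := by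
    rintro _ ⟨a, ha, rfl⟩
    exact hαVS a ha
  have hncard1 : (VS : Set (Matrix (Fin m) (Fin n) F)).ncard = ((fun a : Matrix (Fin m) (Fin n) F => α a) '' VS).ncard :=
    (Set.ncard_image_of_injective VS hαinj).symm
  have hUfin : (U : Set (Matrix (Fin m) (Fin n) F)).Finite := Set.toFinite _
  have hVSfin : VS.Finite := Set.toFinite _
  have heq1 : (fun a : Matrix (Fin m) (Fin n) F => α a) '' VS = (U : Set (Matrix (Fin m) (Fin n) F)) := by
    apply Set.eq_of_subset_of_ncard_le himgsub
    · calc (U : Set (Matrix (Fin m) (Fin n) F)).ncard ≤ VS.ncard := Set.ncard_le_ncard hUVS hVSfin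
        _ = ((fun a : Matrix (Fin m) (Fin n) F => α a) '' VS).ncard := hncard1
  have heq2 : (U : Set (Matrix (Fin m) (Fin n) F)) = VS := by
    apply Set.eq_of_subset_of_ncard_le hUVS
    · rw [← heq1, ← hncard1]
  constructor
  · have : (fun a : Matrix (Fin m) (Fin n) F => C * shiftRowsMap c a) '' (U : Set (Matrix (Fin m) (Fin n) F)) = (fun a : Matrix (Fin m) (Fin n) F => α a) '' (U : Set (Matrix (Fin m) (Fin n) F)) := rfl
    rw [this]
    conv_lhs => rw [heq2]
    exact heq1
  · exact ⟨S, heq2⟩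
end

section
/- Let p be a prime, r > 4, m, n ≥ 1, F = GF(p^r), and V = M_{m,n}(F). Let α = ρ ∘ π and assume that the only F-linear subspaces W of V with α(W) = W are {0} and V. Then the group G_τ of permutations of V generated by the set τ = { T[k] : k ∈ V } of all generalized Rijndael-like round functions T[k] = σ[k] ∘ ρ ∘ π ∘ λ acts primitively on V (its natural action on V is transitive and admits no non-trivial blocks). -/
open Finset in
lemma axis_full {F : Type*} [Field F] [Fintype F] [DecidableEq F] {p r : ℕ}
    (hp : p.Prime) (hr : 4 < r) (hF : Fintype.card F = p ^ r)
    (K H : AddSubgroup F) (t : F) (ht : t ≠ 0)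
    (hδ : ∀ y y' : F, ((y + t)⁻¹ - y⁻¹) - ((y' + t)⁻¹ - y'⁻¹) ∈ H)
    (hKH : ∀ c ∈ K, c⁻¹ ∈ H) (hHK : ∀ c ∈ H, c⁻¹ ∈ K) : H = ⊤ := by
  classical
  set f : F → F := fun y => (y + t)⁻¹ - y⁻¹ with hf
  set s : Finset F := (Finset.univ.erase 0).erase (-t) with hs
  -- basic formula : for y ≠ 0, y ≠ -t, f y = -t / (y * (y+t)), and it is nonzero
  have key : ∀ y : F, y ≠ 0 → y ≠ -t → f y = -t / (y * (y + t)) := by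
    intro y hy0 hyt
    have h1 : y + t ≠ 0 := fun h => hyt (by linear_combination h)
    show (y + t)⁻¹ - y⁻¹ = -t / (y * (y + t))
    rw [inv_sub_inv h1 hy0, show y - (y + t) = -t by ring, mul_comm]
  have fne : ∀ y : F, y ≠ 0 → y ≠ -t → f y ≠ 0 := by
    intro y hy0 hyt
    have h1 : y + t ≠ 0 := fun h => hyt (by linear_combination h)
    rw [key y hy0 hyt]
    exact div_ne_zero (neg_ne_zero.2 ht) (mul_ne_zero hy0 h1)
  have hscard : s.card = p ^ r - 2 := by
    have h0 : (-t) ∈ Finset.univ.erase (0 : F) :=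
      Finset.mem_erase.2 ⟨neg_ne_zero.2 ht, Finset.mem_univ _⟩
    rw [hs, Finset.card_erase_of_mem h0, Finset.card_erase_of_mem (Finset.mem_univ _),
      Finset.card_univ, hF]
    omega
  -- fibers of f on s have at most 2 elements
  have hfiber : ∀ b ∈ s.image f, (s.filter (fun x => f x = b)).card ≤ 2 := by
    intro b hb
    obtain ⟨y0, hy0s, hy0⟩ := Finset.mem_image.1 hb
    obtain ⟨hy0t, hy0z, -⟩ : y0 ≠ -t ∧ y0 ≠ 0 ∧ True := by
      simp only [hs, Finset.mem_erase] at hy0s; tauto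
    have hsub : s.filter (fun x => f x = b) ⊆ {y0, -t - y0} := by
      intro y hy
      obtain ⟨hys, hyb⟩ := Finset.mem_filter.1 hy
      obtain ⟨hyt, hyz, -⟩ : y ≠ -t ∧ y ≠ 0 ∧ True := by
        simp only [hs, Finset.mem_erase] at hys; tauto
      have h1 : y + t ≠ 0 := fun h => hyt (by linear_combination h)
      have h2 : y0 + t ≠ 0 := fun h => hy0t (by linear_combination h)
      have e1 : -t / (y * (y + t)) = -t / (y0 * (y0 + t)) := by
        rw [← key y hyz hyt, ← key y0 hy0z hy0t, hyb, hy0]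
      have e2 : y * (y + t) = y0 * (y0 + t) := by
        have h3 := (div_eq_div_iff (mul_ne_zero hyz h1) (mul_ne_zero hy0z h2)).1 e1
        have ht' : (-t) ≠ 0 := neg_ne_zero.2 ht
        have := mul_left_cancel₀ ht' (by linear_combination h3 : -t * (y0 * (y0 + t)) = -t * (y * (y + t)))
        linear_combination -this
      have e3 : (y - y0) * (y + y0 + t) = 0 := by linear_combination e2
      rcases mul_eq_zero.1 e3 with h | h
      · simp [sub_eq_zero.1 h]
      · have : y = -t - y0 := by linear_combination h
        simp [this]
    calc (s.filter (fun x => f x = b)).card ≤ ({y0, -t - y0} : Finset F).card :=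
          Finset.card_le_card hsub
      _ ≤ 2 := Finset.card_insert_le _ _ |>.trans (by simp)
  -- image is inside a coset of H
  have himgH : ∀ b ∈ s.image f, b - f 0 ∈ H := by
    intro b hb
    obtain ⟨y, -, rfl⟩ := Finset.mem_image.1 hb
    exact hδ y 0
  have himgcard : (s.image f).card ≤ Nat.card H := by
    have : Fintype ↥H := Fintype.ofFinite _
    rw [Nat.card_eq_fintype_card, ← Fintype.card_coe]
    exact Fintype.card_le_of_injective (fun b => ⟨b.1 - f 0, himgH b.1 b.2⟩)
      (fun a b hab => Subtype.ext (by simpa [sub_left_inj] using Subtype.ext_iff.1 hab))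
  have hcount : p ^ r - 2 ≤ 2 * Nat.card H := by
    have h1 := Finset.card_le_mul_card_image s 2 hfiber
    omega
  have hHdvd : Nat.card H ∣ p ^ r := by
    have h2 := AddSubgroup.card_addSubgroup_dvd_card H
    rwa [Nat.card_eq_fintype_card (α := F), hF] at h2
  obtain ⟨i, hir, hicard⟩ := (Nat.dvd_prime_pow hp).1 hHdvd
  rcases eq_or_lt_of_le hir with rfl | hilt
  · apply AddSubgroup.eq_top_of_card_eq
    rw [hicard, Nat.card_eq_fintype_card, hF]
  exfalso
  -- now i < r ; first show p = 2 and i = r - 1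
  have hp2 : p = 2 := by
    by_contra hpne
    have hp3 : 3 ≤ p := by
      rcases hp.two_le.lt_or_eq with h | h
      · omega
      · omega
    have h1 : Nat.card H ≤ p ^ (r - 1) := by
      rw [hicard]; exact Nat.pow_le_pow_right (by omega) (by omega)
    have h2 : 3 * p ^ (r - 1) ≤ p ^ r := by
      calc 3 * p ^ (r-1) ≤ p * p ^ (r-1) := Nat.mul_le_mul_right _ hp3
        _ = p ^ r := by rw [← pow_succ']; congr 1; omega
    have h3 : 3 ≤ p ^ (r - 1) := le_trans hp3 (Nat.le_self_pow (by omega) p)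
    omega
  subst hp2
  have hi1 : i = r - 1 := by
    by_contra hine
    have h1 : Nat.card H ≤ 2 ^ (r - 2) := by
      rw [hicard]; exact Nat.pow_le_pow_right (by omega) (by omega)
    have h2 : 2 ^ r = 4 * 2 ^ (r - 2) := by
      calc 2 ^ r = 2 ^ (r - 2 + 2) := by congr 1; omega
        _ = 4 * 2 ^ (r - 2) := by rw [pow_add]; ring
    have h3 : 4 ≤ 2 ^ (r - 2) := by
      calc (4:ℕ) = 2 ^ 2 := by norm_num
        _ ≤ 2 ^ (r-2) := Nat.pow_le_pow_right (by omega) (by omega)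
    omega
  subst hi1
  -- characteristic 2
  have hcharP : CharP F (ringChar F) := ringChar.charP F
  obtain ⟨nn, hqprime, hcard2⟩ := FiniteField.card F (ringChar F)
  have hq2 : ringChar F = 2 := by
    have hdvd : ringChar F ∣ 2 ^ r := by
      rw [← hF, hcard2]; exact dvd_pow_self _ (by positivity)
    exact (Nat.prime_dvd_prime_iff_eq hqprime Nat.prime_two).1
      (hqprime.dvd_of_dvd_pow hdvd)
  have htwo : (2 : F) = 0 := by
    have h2' := CharP.cast_eq_zero F (ringChar F)
    rw [hq2] at h2'
    exact_mod_cast h2'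
  have hneg : ∀ x : F, -x = x := by
    intro x
    have h2x : (2 : F) * x = 0 := by rw [htwo, zero_mul]
    linear_combination -h2x
  have hsqinj : ∀ a b : F, a ^ 2 = b ^ 2 → a = b := by
    intro a b hab
    have : (a - b) * (a + b) = 0 := by linear_combination hab
    rcases mul_eq_zero.1 this with h | h
    · linear_combination h
    · have : a = -b := by linear_combination h
      rwa [hneg b] at this
  -- |K| = |H|
  have hcardKH : Nat.card K = Nat.card H := by
    apply le_antisymm
    · exact Nat.card_le_card_of_injective
        (fun c : ↥K => (⟨c.1⁻¹, hKH c.1 c.2⟩ : ↥H))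
        (fun a b hab => Subtype.ext (inv_injective (Subtype.ext_iff.1 hab)))
    · exact Nat.card_le_card_of_injective
        (fun c : ↥H => (⟨c.1⁻¹, hHK c.1 c.2⟩ : ↥K))
        (fun a b hab => Subtype.ext (inv_injective (Subtype.ext_iff.1 hab)))
  have hKcard : Nat.card K = 2 ^ (r - 1) := by rw [hcardKH, hicard]
  have hpow1 : (2:ℕ) ≤ 2 ^ (r - 1) := by
    calc (2:ℕ) = 2 ^ 1 := by norm_num
      _ ≤ 2 ^ (r - 1) := Nat.pow_le_pow_right (by omega) (by omega)
  -- key multiplicative relation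
  have hK2H : ∀ k ∈ K, k ≠ 0 → ∀ h ∈ H, k ^ 2 * h ∈ K := by
    intro k hk hk0 h hh
    rcases eq_or_ne h 0 with rfl | hh0
    · rw [mul_zero]; exact K.zero_mem
    have hs : h⁻¹ ∈ K := hHK h hh
    have hs0 : h⁻¹ ≠ 0 := inv_ne_zero hh0
    rcases eq_or_ne k h⁻¹ with hk' | hks
    · have hkh : k ^ 2 * h = k := by rw [hk', sq]; field_simp
      rw [hkh]; exact hk
    have hks0 : k + h⁻¹ ≠ 0 := by
      intro hzero
      apply hks
      have : k = -h⁻¹ := by linear_combination hzero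
      rwa [hneg] at this
    have hc1 : k⁻¹ ∈ H := hKH k hk
    have hc2 : (k + h⁻¹)⁻¹ ∈ H := hKH _ (K.add_mem hk hs)
    have hcH : k⁻¹ - (k + h⁻¹)⁻¹ ∈ H := H.sub_mem hc1 hc2
    have hcval : k⁻¹ - (k + h⁻¹)⁻¹ = h⁻¹ / (k * (k + h⁻¹)) := by
      rw [inv_sub_inv hk0 hks0]
      congr 1
      ring
    have hcne : k⁻¹ - (k + h⁻¹)⁻¹ ≠ 0 := by
      rw [hcval]; exact div_ne_zero hs0 (mul_ne_zero hk0 hks0)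
    have hinvK : (k⁻¹ - (k + h⁻¹)⁻¹)⁻¹ ∈ K := hHK _ hcH
    have hval2 : (k⁻¹ - (k + h⁻¹)⁻¹)⁻¹ = k ^ 2 * h + k := by
      rw [hcval, inv_div]
      field_simp
    have hfin : k ^ 2 * h = (k⁻¹ - (k + h⁻¹)⁻¹)⁻¹ - k := by rw [hval2]; ring
    rw [hfin]; exact K.sub_mem hinvK hk
  -- a nonzero element of K
  obtain ⟨g, hgK, hg0⟩ : ∃ g, g ∈ K ∧ g ≠ 0 := by
    by_contra hc
    push_neg at hc
    have hKbot : K = ⊥ := by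
      ext x
      simp only [AddSubgroup.mem_bot]
      exact ⟨fun hx => hc x hx, fun hx => hx ▸ K.zero_mem⟩
    rw [hKbot, AddSubgroup.card_bot] at hKcard
    omega
  -- surjectivity of h ↦ g^2 h from H onto K
  have hsurj : ∀ x ∈ K, ∃ h ∈ H, g ^ 2 * h = x := by
    have hFinH : Fintype ↥H := Fintype.ofFinite _
    have hFinK : Fintype ↥K := Fintype.ofFinite _
    have hinj : Function.Injective
        (fun h : ↥H => (⟨g ^ 2 * h.1, hK2H g hgK hg0 h.1 h.2⟩ : ↥K)) := by
      intro a b hab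
      exact Subtype.ext (mul_left_cancel₀ (pow_ne_zero 2 hg0) (Subtype.ext_iff.1 hab))
    have hbij := (Fintype.bijective_iff_injective_and_card _).2
      ⟨hinj, by rw [← Nat.card_eq_fintype_card, ← Nat.card_eq_fintype_card, hcardKH]⟩
    intro x hx
    obtain ⟨h, hh⟩ := hbij.2 ⟨x, hx⟩
    exact ⟨h.1, h.2, Subtype.ext_iff.1 hh⟩
  -- the multiplier set
  set F₀ : Set F := {x | ∀ h ∈ H, x * h ∈ H} with hF₀
  have hF₀one : (1:F) ∈ F₀ := fun h hh => by rwa [one_mul]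
  have hF₀mul : ∀ a ∈ F₀, ∀ b ∈ F₀, a * b ∈ F₀ := fun a ha b hb h hh => by
    rw [mul_assoc]; exact ha _ (hb _ hh)
  have hF₀inv : ∀ a ∈ F₀, a ≠ 0 → a⁻¹ ∈ F₀ := by
    intro a ha ha0 h hh
    have hFinH : Fintype ↥H := Fintype.ofFinite _
    have hinj : Function.Injective (fun x : ↥H => (⟨a * x.1, ha _ x.2⟩ : ↥H)) :=
      fun x y hxy => Subtype.ext (mul_left_cancel₀ ha0 (Subtype.ext_iff.1 hxy))
    obtain ⟨x, hx⟩ := (Finite.injective_iff_surjective.1 hinj) ⟨h, hh⟩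
    have hax : a * x.1 = h := Subtype.ext_iff.1 hx
    rw [← hax, inv_mul_cancel_left₀ ha0]
    exact x.2
  have hF₀sq : ∀ k ∈ K, k ≠ 0 → (k / g) ^ 2 ∈ F₀ := by
    intro k hk hk0 h hh
    obtain ⟨h', hh', hgh'⟩ := hsurj (k ^ 2 * h) (hK2H k hk hk0 h hh)
    have heq : (k / g) ^ 2 * h = h' := by
      rw [div_pow]
      rw [div_mul_eq_mul_div, div_eq_iff (pow_ne_zero 2 hg0)]
      linear_combination -hgh'
    rw [heq]; exact hh'
  -- the subgroup of units
  set G : Subgroup Fˣ :=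
    { carrier := {x : Fˣ | (x : F) ∈ F₀},
      one_mem' := by simpa using hF₀one,
      mul_mem' := by
        intro a b ha hb
        simpa using hF₀mul _ ha _ hb,
      inv_mem' := by
        intro a ha
        have := hF₀inv _ ha a.ne_zero
        simpa [Units.val_inv_eq_inv_val] using this } with hG
  have hGcard : 2 ^ (r - 1) - 1 ≤ Nat.card G := by
    have hinj : Function.Injective (fun x : ↥((K : Set F) \ {0}) =>
        (⟨Units.mk0 ((x.1 / g) ^ 2)
            (pow_ne_zero 2 (div_ne_zero x.2.2 hg0)),
          hF₀sq x.1 x.2.1 x.2.2⟩ : ↥G)) := by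
      intro a b hab
      have h1 : ((a.1 / g) ^ 2 : F) = (b.1 / g) ^ 2 := by
        have h2 := congrArg Units.val (Subtype.ext_iff.1 hab)
        simpa using h2
      have h3 := hsqinj _ _ h1
      have h4 : a.1 = b.1 := by
        field_simp at h3
        exact h3
      exact Subtype.ext h4
    have hle := Nat.card_le_card_of_injective _ hinj
    have hdom : Nat.card ↥((K : Set F) \ {0}) = 2 ^ (r - 1) - 1 := by
      rw [Nat.card_coe_set_eq, Set.ncard_diff_singleton_of_mem K.zero_mem]
      have : (K : Set F).ncard = Nat.card ↥K := (Nat.card_coe_set_eq _).symm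
      rw [this, hKcard]
    omega
  have hGdvd : Nat.card G ∣ 2 ^ r - 1 := by
    have h1 := Subgroup.card_subgroup_dvd_card G
    rwa [Nat.card_units, Nat.card_eq_fintype_card (α := F), hF] at h1
  have hHne : Nat.card H ≠ 2 ^ r := by
    rw [hicard]
    intro hcontra
    have := Nat.pow_right_injective (le_refl 2) hcontra
    omega
  have hGne : Nat.card G ≠ 2 ^ r - 1 := by
    intro hGeq
    have hGtop : G = ⊤ := Subgroup.eq_top_of_card_eq _
      (by rw [hGeq, Nat.card_units, Nat.card_eq_fintype_card (α := F), hF])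
    obtain ⟨h0, hh0, hh00⟩ : ∃ h0, h0 ∈ H ∧ h0 ≠ 0 := by
      by_contra hc
      push_neg at hc
      have hHbot : H = ⊥ := by
        ext x
        simp only [AddSubgroup.mem_bot]
        exact ⟨fun hx => hc x hx, fun hx => hx ▸ H.zero_mem⟩
      rw [hHbot, AddSubgroup.card_bot] at hicard
      omega
    have hHtop : H = ⊤ := by
      ext y
      simp only [AddSubgroup.mem_top, iff_true]
      rcases eq_or_ne y 0 with rfl | hy
      · exact H.zero_mem
      · have hu : (Units.mk0 (y / h0) (div_ne_zero hy hh00)) ∈ G := by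
          rw [hGtop]; exact Subgroup.mem_top _
        have hyF₀ : (y / h0) ∈ F₀ := hu
        have := hyF₀ h0 hh0
        rwa [div_mul_cancel₀ _ hh00] at this
    rw [hHtop] at hicard
    rw [AddSubgroup.card_top, Nat.card_eq_fintype_card (α := F), hF] at hicard
    have h2' := Nat.pow_right_injective (le_refl 2) hicard
    omega
  -- final arithmetic
  obtain ⟨e, he⟩ := hGdvd
  have hGpos : 0 < Nat.card G := Nat.card_pos
  have hodd : ¬ (2 ∣ (2 ^ r - 1)) := by
    have h2d : (2:ℕ) ∣ 2 ^ r := dvd_pow_self 2 (by omega)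
    have : (2:ℕ) ≤ 2 ^ r := by
      calc (2:ℕ) = 2^1 := by norm_num
        _ ≤ 2 ^ r := Nat.pow_le_pow_right (by omega) (by omega)
    omega
  have he1 : e ≠ 1 := by
    intro h1
    rw [h1, mul_one] at he
    exact hGne he.symm
  have he0 : e ≠ 0 := by
    intro h0
    rw [h0, mul_zero] at he
    have : (1:ℕ) ≤ 2 ^ r := Nat.one_le_two_pow
    omega
  have he2 : e ≠ 2 := by
    intro h2
    rw [h2] at he
    exact hodd ⟨Nat.card G, by omega⟩
  have hbig : 2 ^ r = 2 * 2 ^ (r - 1) := by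
    calc 2 ^ r = 2 ^ (1 + (r - 1)) := by congr 1; omega
      _ = 2 * 2 ^ (r - 1) := by rw [pow_add]; ring
  have h16 : 16 ≤ 2 ^ (r - 1) := by
    calc (16:ℕ) = 2 ^ 4 := by norm_num
      _ ≤ 2 ^ (r - 1) := Nat.pow_le_pow_right (by omega) (by omega)
  have he3 : 3 ≤ e := by omega
  have h5 : Nat.card G * 3 ≤ Nat.card G * e := Nat.mul_le_mul_left _ he3
  have h6 : Nat.card G * 3 ≤ 2 ^ r - 1 := by rw [he]; exact h5
  set d := Nat.card G with hd
  set a := 2 ^ (r - 1) with ha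
  set b := 2 ^ r with hb
  omega

/-- If the only `F`-linear subspaces of `V = M_{m,n}(GF(p^r))` (`r > 4`) invariant under
`α = ρ ∘ π` are `{0}` and `V`, then the group generated by the generalized Rijndael-like
round functions `T[k] = σ[k] ∘ ρ ∘ π ∘ λ` acts primitively on `V`: it is transitive and
its only blocks are `∅`, `V` and singletons. -/
theorem stmt_17 (p r m n : ℕ) (hp : p.Prime) (hr : 4 < r) (hm : 1 ≤ m) (hn : 1 ≤ n)
    (F : Type*) [Field F] [Fintype F] [DecidableEq F] (hF : Fintype.card F = p ^ r)
    (A B : F) (hA : A ≠ 0) (c : Fin m → Fin n)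
    (C : Matrix (Fin m) (Fin m) F) (hC : IsUnit C)
    (lam piP rho : Equiv.Perm (Matrix (Fin m) (Fin n) F))
    (hlam : ∀ (a : Matrix (Fin m) (Fin n) F) (i : Fin m) (j : Fin n),
      lam a i j = A * (a i j)⁻¹ + B)
    (hpi : ∀ (a : Matrix (Fin m) (Fin n) F) (i : Fin m) (j : Fin n),
      piP a i j = a i (j - c i))
    (hrho : ∀ a : Matrix (Fin m) (Fin n) F, rho a = C * a)
    (hinv : ∀ W : Submodule F (Matrix (Fin m) (Fin n) F),
      (fun a => rho (piP a)) '' (W : Set (Matrix (Fin m) (Fin n) F)) = (W : Set (Matrix (Fin m) (Fin n) F)) →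
        W = ⊥ ∨ W = ⊤) :
    (∀ x y : Matrix (Fin m) (Fin n) F,
      ∃ g ∈ Subgroup.closure {f : Equiv.Perm (Matrix (Fin m) (Fin n) F) |
          ∃ k : Matrix (Fin m) (Fin n) F, f = Equiv.addRight k * rho * piP * lam},
        g x = y) ∧
    (∀ Bl : Set (Matrix (Fin m) (Fin n) F),
      (∀ g ∈ Subgroup.closure {f : Equiv.Perm (Matrix (Fin m) (Fin n) F) |
          ∃ k : Matrix (Fin m) (Fin n) F, f = Equiv.addRight k * rho * piP * lam},
        ⇑g '' Bl = Bl ∨ Disjoint (⇑g '' Bl) Bl) →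
      Bl = ∅ ∨ Bl = Set.univ ∨ ∃ x, Bl = {x}) := by
  classical
  set gen : Matrix (Fin m) (Fin n) F → Equiv.Perm (Matrix (Fin m) (Fin n) F) := fun k => Equiv.addRight k * rho * piP * lam with hgendef
  set G := Subgroup.closure {f : Equiv.Perm (Matrix (Fin m) (Fin n) F) | ∃ k : Matrix (Fin m) (Fin n) F, f = Equiv.addRight k * rho * piP * lam}
    with hGdef
  set gamma : Matrix (Fin m) (Fin n) F → Matrix (Fin m) (Fin n) F := fun z => rho (piP (lam z)) with hgamma
  have hgen : ∀ k x, gen k x = gamma x + k := by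
    intro k x
    simp [hgendef, hgamma, Equiv.Perm.mul_apply]
  have hmemS : ∀ k, gen k ∈ G := fun k => Subgroup.subset_closure ⟨k, rfl⟩
  constructor
  · intro x y
    refine ⟨gen (y - gamma x), hmemS _, ?_⟩
    rw [hgen]
    abel
  intro Bl hBl
  rcases Set.eq_empty_or_nonempty Bl with rfl | ⟨b0, hb0⟩
  · exact Or.inl rfl
  right
  -- translations
  set tk : Matrix (Fin m) (Fin n) F → Equiv.Perm (Matrix (Fin m) (Fin n) F) := fun k => gen k * (gen 0)⁻¹ with htkdef
  have htkmem : ∀ k, tk k ∈ G := fun k => mul_mem (hmemS k) (inv_mem (hmemS 0))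
  have htk : ∀ k x, tk k x = x + k := by
    intro k x
    have h0 : gamma ((gen 0)⁻¹ x) = x := by
      have h1 : (gen 0) ((gen 0)⁻¹ x) = x := (gen 0).apply_symm_apply x
      rw [hgen] at h1
      simpa using h1
    rw [htkdef]
    simp only [Equiv.Perm.mul_apply]
    rw [hgen, h0]
  -- the block through b0 is fixed by any element of G that sends some point of Bl into Bl
  have hfix : ∀ g ∈ G, ∀ x ∈ Bl, g x ∈ Bl → ⇑g '' Bl = Bl := by
    intro g hg x hx hgx
    rcases hBl g hg with h | h
    · exact h
    · exact absurd hgx (Set.disjoint_left.1 h (Set.mem_image_of_mem _ hx))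
  -- the subgroup U
  set U : AddSubgroup (Matrix (Fin m) (Fin n) F) :=
    { carrier := {d | b0 + d ∈ Bl},
      zero_mem' := by simpa using hb0,
      add_mem' := by
        intro d1 d2 h1 h2
        have himg : ⇑(tk d2) '' Bl = Bl :=
          hfix _ (htkmem d2) b0 hb0 (by rw [htk]; exact h2)
        have h3 : tk d2 (b0 + d1) ∈ Bl := himg ▸ Set.mem_image_of_mem _ h1
        rw [htk] at h3
        simpa [add_assoc] using h3,
      neg_mem' := by
        intro d h1
        have himg : ⇑(tk (-d)) '' Bl = Bl :=
          hfix _ (htkmem (-d)) (b0 + d) h1 (by rw [htk]; simpa using hb0)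
        have h3 : tk (-d) b0 ∈ Bl := himg ▸ Set.mem_image_of_mem _ hb0
        rwa [htk] at h3 } with hUdef
  have hUmem : ∀ d : Matrix (Fin m) (Fin n) F, d ∈ U ↔ b0 + d ∈ Bl := fun d => Iff.rfl
  -- the key coset-permuting property of gamma
  have KEY : ∀ x : Matrix (Fin m) (Fin n) F,
      (∀ u ∈ U, gamma (x + u) - gamma x ∈ U) ∧
      (∀ d ∈ U, ∃ u ∈ U, gamma (x + u) = gamma x + d) := by
    intro x
    set h : Equiv.Perm (Matrix (Fin m) (Fin n) F) :=
      tk (b0 - gamma x) * gen 0 * tk (x - b0) with hhdef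
    have hhmem : h ∈ G := mul_mem (mul_mem (htkmem _) (hmemS 0)) (htkmem _)
    have happly : ∀ z, h z = gamma (z + (x - b0)) + (b0 - gamma x) := by
      intro z
      rw [hhdef]
      simp only [Equiv.Perm.mul_apply]
      rw [htk, hgen, htk]
      abel
    have hb0fix : h b0 ∈ Bl := by
      rw [happly]
      have : b0 + (x - b0) = x := by abel
      rw [this]
      have : gamma x + (b0 - gamma x) = b0 := by abel
      rw [this]
      exact hb0
    have himg : ⇑h '' Bl = Bl := hfix _ hhmem b0 hb0 hb0fix
    constructor
    · intro u hu
      have h1 : h (b0 + u) ∈ Bl := himg ▸ Set.mem_image_of_mem _ ((hUmem u).1 hu)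
      rw [happly] at h1
      have h2 : gamma (b0 + u + (x - b0)) + (b0 - gamma x)
          = b0 + (gamma (x + u) - gamma x) := by
        have : b0 + u + (x - b0) = x + u := by abel
        rw [this]
        abel
      rw [h2] at h1
      exact (hUmem _).2 h1
    · intro d hd
      have h1 : b0 + d ∈ ⇑h '' Bl := himg.symm ▸ (hUmem d).1 hd
      obtain ⟨z, hz, hzeq⟩ := h1
      refine ⟨z - b0, (hUmem _).2 (by simpa using hz), ?_⟩
      rw [happly] at hzeq
      have h2 : z + (x - b0) = x + (z - b0) := by abel
      rw [h2] at hzeq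
      have h3 : gamma x + d + (b0 - gamma x) = b0 + d := by abel
      exact add_right_cancel (hzeq.trans h3.symm)
  -- the linear map alpha and entrywise inversion iota
  set alpha : Matrix (Fin m) (Fin n) F → Matrix (Fin m) (Fin n) F :=
    fun a => rho (piP a) with halphadef
  have hpiadd : ∀ a b : Matrix (Fin m) (Fin n) F, piP (a + b) = piP a + piP b := by
    intro a b
    ext i j
    rw [Matrix.add_apply, hpi, hpi, hpi, Matrix.add_apply]
  have hpismul : ∀ (s : F) (a : Matrix (Fin m) (Fin n) F), piP (s • a) = s • piP a := by
    intro s a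
    ext i j
    rw [Matrix.smul_apply, hpi, hpi, Matrix.smul_apply]
  have halphaadd : ∀ a b, alpha (a + b) = alpha a + alpha b := by
    intro a b
    rw [halphadef]
    simp only
    rw [hpiadd, hrho, hrho, hrho, Matrix.mul_add]
  have halphasmul : ∀ (s : F) a, alpha (s • a) = s • alpha a := by
    intro s a
    rw [halphadef]
    simp only
    rw [hpismul, hrho, hrho, Matrix.mul_smul]
  have halphazero : alpha 0 = 0 := by
    have := halphaadd 0 0
    rw [add_zero] at this
    exact left_eq_add.1 this
  have halphasub : ∀ a b, alpha (a - b) = alpha a - alpha b := by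
    intro a b
    have h1 := halphaadd (a - b) b
    rw [sub_add_cancel] at h1
    have : alpha (a - b) = alpha a - alpha b := by
      rw [h1]; abel
    exact this
  have halphainj : Function.Injective alpha :=
    fun a b hab => piP.injective (rho.injective hab)
  set iota : Matrix (Fin m) (Fin n) F → Matrix (Fin m) (Fin n) F :=
    fun a => Matrix.of fun i j => (a i j)⁻¹ with hiotadef
  have hiota_apply : ∀ a i j, iota a i j = (a i j)⁻¹ := fun a i j => rfl
  have hiota_iota : ∀ a, iota (iota a) = a := by
    intro a
    ext i j
    rw [hiota_apply, hiota_apply, inv_inv]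
  have hiota_zero : iota 0 = 0 := by
    ext i j
    rw [hiota_apply]
    simp
  have hlam_sub : ∀ x y : Matrix (Fin m) (Fin n) F,
      lam x - lam y = A • (iota x - iota y) := by
    intro x y
    ext i j
    rw [Matrix.sub_apply, hlam, hlam, Matrix.smul_apply, Matrix.sub_apply,
      hiota_apply, hiota_apply, smul_eq_mul]
    ring
  have hgamma_lam : ∀ z, gamma z = alpha (lam z) := fun z => rfl
  -- the companion subgroup
  set Usnd : AddSubgroup (Matrix (Fin m) (Fin n) F) :=
    { carrier := {d | alpha (A • d) ∈ U},
      zero_mem' := by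
        show alpha (A • (0:Matrix (Fin m) (Fin n) F)) ∈ U
        rw [smul_zero, halphazero]
        exact U.zero_mem,
      add_mem' := by
        intro d1 d2 h1 h2
        show alpha (A • (d1 + d2)) ∈ U
        rw [smul_add, halphaadd]
        exact U.add_mem h1 h2,
      neg_mem' := by
        intro d h1
        show alpha (A • (-d)) ∈ U
        have : A • (-d) = 0 - A • d := by rw [smul_neg]; abel
        rw [this, halphasub, halphazero]
        simpa using U.neg_mem h1 } with hUsnddef
  have hUsndmem : ∀ d, d ∈ Usnd ↔ alpha (A • d) ∈ U := fun d => Iff.rfl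
  -- transfer of the coset property to iota
  have P1 : ∀ x u, u ∈ U → iota (x + u) - iota x ∈ Usnd := by
    intro x u hu
    rw [hUsndmem]
    have h1 : A • (iota (x + u) - iota x) = lam (x + u) - lam x := (hlam_sub _ _).symm
    rw [h1, halphasub, ← hgamma_lam, ← hgamma_lam]
    exact (KEY x).1 u hu
  have P2 : ∀ x d, d ∈ Usnd → ∃ u ∈ U, iota (x + u) = iota x + d := by
    intro x d hd
    obtain ⟨u, hu, heq⟩ := (KEY x).2 (alpha (A • d)) ((hUsndmem d).1 hd)
    refine ⟨u, hu, ?_⟩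
    rw [hgamma_lam, hgamma_lam] at heq
    have h1 : alpha (lam (x + u) - lam x) = alpha (A • d) := by
      rw [halphasub, heq]; abel
    have h2 : lam (x + u) - lam x = A • d := halphainj h1
    rw [hlam_sub] at h2
    have h3 : iota (x + u) - iota x = d := by
      ext i j
      have := congrArg (fun M => M i j) h2
      simp only [Matrix.smul_apply, smul_eq_mul] at this
      exact mul_left_cancel₀ hA this
    have h4 : iota (x + u) = iota x + (iota (x + u) - iota x) := by abel
    rw [h4, h3]
  have P3a : ∀ u ∈ U, iota u ∈ Usnd := by
    intro u hu
    have := P1 0 u hu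
    rwa [zero_add, hiota_zero, sub_zero] at this
  have P3b : ∀ d ∈ Usnd, ∃ u ∈ U, iota u = d := by
    intro d hd
    obtain ⟨u, hu, heq⟩ := P2 0 d hd
    rw [zero_add, hiota_zero, zero_add] at heq
    exact ⟨u, hu, heq⟩
  have P4a : ∀ x d, d ∈ Usnd → iota (x + d) - iota x ∈ U := by
    intro x d hd
    obtain ⟨u, hu, hiu⟩ := P2 (iota x) d hd
    rw [hiota_iota] at hiu
    have h2 : iota (x + d) = iota x + u := by
      rw [← hiu, hiota_iota]
    rw [h2]
    simpa using hu
  have P3a' : ∀ d ∈ Usnd, iota d ∈ U := by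
    intro d hd
    obtain ⟨u, hu, heq⟩ := P3b d hd
    rw [← heq, hiota_iota]
    exact hu
  have P3b' : ∀ u ∈ U, ∃ d ∈ Usnd, iota d = u :=
    fun u hu => ⟨iota u, P3a u hu, hiota_iota u⟩
  -- entry lemmas for standard basis matrices
  have hstd_apply : ∀ (i0 : Fin m) (j0 : Fin n) (a : F) (i : Fin m) (j : Fin n),
      Matrix.single i0 j0 a i j = if i0 = i ∧ j0 = j then a else 0 :=
    fun i0 j0 a i j => rfl
  have hstd_neg : ∀ (i0 : Fin m) (j0 : Fin n) (a : F),
      Matrix.single i0 j0 (-a) = -Matrix.single i0 j0 a := by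
    intro i0 j0 a
    ext i j
    rw [hstd_apply, Matrix.neg_apply, hstd_apply]
    split_ifs <;> simp
  have hiota_std : ∀ (i0 : Fin m) (j0 : Fin n) (a : F),
      iota (Matrix.single i0 j0 a) = Matrix.single i0 j0 a⁻¹ := by
    intro i0 j0 a
    ext i j
    rw [hiota_apply, hstd_apply, hstd_apply]
    split_ifs <;> simp
  -- the symmetric axis lemma
  have SYM : ∀ (U1 U2 : AddSubgroup (Matrix (Fin m) (Fin n) F)),
      (∀ x u, u ∈ U1 → iota (x + u) - iota x ∈ U2) →
      (∀ u ∈ U1, iota u ∈ U2) →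
      (∀ d ∈ U2, ∃ u ∈ U1, iota u = d) →
      ∀ (i0 : Fin m) (j0 : Fin n), (∃ u ∈ U1, u i0 j0 ≠ 0) →
      ∀ e : F, Matrix.single i0 j0 e ∈ U2 := by
    intro U1 U2 hmap hio hsur i0 j0 hex e
    obtain ⟨u, hu, hu0⟩ := hex
    set K1 : AddSubgroup F :=
      { carrier := {a | Matrix.single i0 j0 a ∈ U1},
        zero_mem' := by
          show Matrix.single i0 j0 (0:F) ∈ U1
          rw [Matrix.single_zero]
          exact U1.zero_mem,
        add_mem' := by
          intro a b ha hb
          show Matrix.single i0 j0 (a + b) ∈ U1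
          rw [Matrix.single_add]
          exact U1.add_mem ha hb,
        neg_mem' := by
          intro a ha
          show Matrix.single i0 j0 (-a) ∈ U1
          rw [hstd_neg]
          exact U1.neg_mem ha } with hK1def
    set H1 : AddSubgroup F :=
      { carrier := {a | Matrix.single i0 j0 a ∈ U2},
        zero_mem' := by
          show Matrix.single i0 j0 (0:F) ∈ U2
          rw [Matrix.single_zero]
          exact U2.zero_mem,
        add_mem' := by
          intro a b ha hb
          show Matrix.single i0 j0 (a + b) ∈ U2
          rw [Matrix.single_add]
          exact U2.add_mem ha hb,
        neg_mem' := by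
          intro a ha
          show Matrix.single i0 j0 (-a) ∈ U2
          rw [hstd_neg]
          exact U2.neg_mem ha } with hH1def
    have hKH : ∀ a ∈ K1, a⁻¹ ∈ H1 := by
      intro a ha
      show Matrix.single i0 j0 a⁻¹ ∈ U2
      rw [← hiota_std]
      exact hio _ ha
    have hHK : ∀ a ∈ H1, a⁻¹ ∈ K1 := by
      intro a ha
      obtain ⟨u1, hu1, hequ⟩ := hsur _ ha
      show Matrix.single i0 j0 a⁻¹ ∈ U1
      rw [← hiota_std, ← hequ, hiota_iota]
      exact hu1
    have hδ : ∀ y y' : F, ((y + u i0 j0)⁻¹ - y⁻¹) - ((y' + u i0 j0)⁻¹ - y'⁻¹) ∈ H1 := by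
      intro y y'
      have d1 := hmap (Matrix.single i0 j0 y) u hu
      have d2 := hmap (Matrix.single i0 j0 y') u hu
      have hsum := U2.sub_mem d1 d2
      have heqm : (iota (Matrix.single i0 j0 y + u) - iota (Matrix.single i0 j0 y))
          - (iota (Matrix.single i0 j0 y' + u) - iota (Matrix.single i0 j0 y'))
          = Matrix.single i0 j0
              (((y + u i0 j0)⁻¹ - y⁻¹) - ((y' + u i0 j0)⁻¹ - y'⁻¹)) := by
        ext i j
        simp only [Matrix.sub_apply, Matrix.add_apply, hiota_apply, hstd_apply]
        by_cases hij : i0 = i ∧ j0 = j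
        · obtain ⟨rfl, rfl⟩ := hij
          simp only [and_self, if_true]
        · rw [if_neg hij, if_neg hij, if_neg hij]
          ring
      rw [heqm] at hsum
      exact hsum
    have htop := axis_full hp hr hF K1 H1 (u i0 j0) hu0 hδ hKH hHK
    have : e ∈ H1 := by rw [htop]; exact AddSubgroup.mem_top e
    exact this
  -- full axes inside U
  have MAIN2 : ∀ (i0 : Fin m) (j0 : Fin n), (∃ u ∈ U, u i0 j0 ≠ 0) →
      ∀ e : F, Matrix.single i0 j0 e ∈ U := by
    intro i0 j0 hex e
    obtain ⟨u, hu, hu0⟩ := hex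
    have hd : iota u ∈ Usnd := P3a u hu
    have hd0 : iota u i0 j0 ≠ 0 := by rw [hiota_apply]; exact inv_ne_zero hu0
    exact SYM Usnd U P4a P3a' P3b' i0 j0 ⟨iota u, hd, hd0⟩ e
  -- U is closed under scalar multiplication
  have hUsmul : ∀ (s : F), ∀ u ∈ U, s • u ∈ U := by
    intro s u hu
    rw [Matrix.matrix_eq_sum_single (s • u)]
    apply AddSubgroup.sum_mem
    intro i _
    apply AddSubgroup.sum_mem
    intro j _
    rcases eq_or_ne (u i j) 0 with h0 | h0
    · have : (s • u) i j = 0 := by rw [Matrix.smul_apply, h0, smul_zero]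
      rw [this, Matrix.single_zero]
      exact U.zero_mem
    · exact MAIN2 i j ⟨u, hu, h0⟩ _
  have hUiota : ∀ u ∈ U, iota u ∈ U := by
    intro u hu
    rw [Matrix.matrix_eq_sum_single (iota u)]
    apply AddSubgroup.sum_mem
    intro i _
    apply AddSubgroup.sum_mem
    intro j _
    rcases eq_or_ne (u i j) 0 with h0 | h0
    · have : iota u i j = 0 := by rw [hiota_apply, h0, inv_zero]
      rw [this, Matrix.single_zero]
      exact U.zero_mem
    · exact MAIN2 i j ⟨u, hu, h0⟩ _
  have hUsndU : ∀ d : Matrix (Fin m) (Fin n) F, d ∈ Usnd ↔ d ∈ U := by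
    intro d
    constructor
    · intro hd
      obtain ⟨u, hu, heq⟩ := P3b d hd
      rw [← heq]
      exact hUiota u hu
    · intro hd
      have h1 : iota d ∈ U := hUiota d hd
      have h2 := P3a (iota d) h1
      rwa [hiota_iota] at h2
  -- U as a submodule
  set W : Submodule F (Matrix (Fin m) (Fin n) F) :=
    { carrier := (U : Set (Matrix (Fin m) (Fin n) F)),
      zero_mem' := U.zero_mem,
      add_mem' := fun ha hb => U.add_mem ha hb,
      smul_mem' := fun s x hx => hUsmul s x hx } with hWdef
  have hWmem : ∀ x, x ∈ W ↔ x ∈ U := fun x => Iff.rfl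
  have hWimg : (fun a => rho (piP a)) '' (W : Set (Matrix (Fin m) (Fin n) F))
      = (W : Set (Matrix (Fin m) (Fin n) F)) := by
    apply Set.eq_of_subset_of_subset
    · rintro w ⟨a, ha, rfl⟩
      have ha' : a ∈ U := ha
      have h1 : A⁻¹ • a ∈ U := hUsmul A⁻¹ a ha'
      have h2 : A⁻¹ • a ∈ Usnd := (hUsndU _).2 h1
      have h3 := (hUsndmem _).1 h2
      rw [smul_smul, mul_inv_cancel₀ hA, one_smul] at h3
      exact h3
    · intro a ha
      have ha' : a ∈ U := ha
      refine ⟨piP.symm (rho.symm a), ?_, ?_⟩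
      · have hz : alpha (piP.symm (rho.symm a)) = a := by
          rw [halphadef]
          simp
        have h2 : A⁻¹ • (piP.symm (rho.symm a)) ∈ Usnd := by
          rw [hUsndmem, smul_smul, mul_inv_cancel₀ hA, one_smul, hz]
          exact ha'
        have h3 : A⁻¹ • (piP.symm (rho.symm a)) ∈ U := (hUsndU _).1 h2
        have h4 := hUsmul A _ h3
        rw [smul_smul, mul_inv_cancel₀ hA, one_smul] at h4
        exact h4
      · simp
  rcases hinv W hWimg with hbot | htop
  · right
    refine ⟨b0, ?_⟩
    ext x
    simp only [Set.mem_singleton_iff]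
    constructor
    · intro hx
      have h1 : x - b0 ∈ U := (hUmem _).2 (by simpa using hx)
      have h2 : x - b0 ∈ W := h1
      rw [hbot] at h2
      have h3 : x - b0 = 0 := (Submodule.mem_bot F).1 h2
      have := sub_eq_zero.1 h3
      exact this
    · rintro rfl
      exact hb0
  · left
    ext x
    simp only [Set.mem_univ, iff_true]
    have h1 : x - b0 ∈ W := by rw [htop]; exact Submodule.mem_top
    have h2 : b0 + (x - b0) ∈ Bl := (hUmem _).1 h1
    simpa using h2
end
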